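/- arXiv:2410.23777 — 11 statements merged into one kernel-verified Lean document; each statement's English description precedes it below -/
import Mathlib

section
/- Let f : ℝ → ℝ be continuous with f(x) > 0 for all x > 0, let R ∈ (-1,1) and M > 0, and let U be a C² solution of the model ODE (1-r²)·U''(r) - 2r·U'(r) + f(U(r)) = 0 on an interval I ⊆ (-1,1) containing R, with U(R) = M, U'(R) = 0 and U > 0 on I. Then U'(r) > 0 for every r ∈ I with r < R, and U'(r) < 0 for every r ∈ I with r > R. -/
open Set

/-- Let `f : ℝ → ℝ` be continuous with `f(x) > 0` for all `x > 0`, let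
`R ∈ (-1,1)` and `M > 0`, and let `U` be a C² solution of the model ODE
`(1-r²)·U''(r) - 2r·U'(r) + f(U(r)) = 0` on an interval `I ⊆ (-1,1)` containing `R`, with
`U(R) = M`, `U'(R) = 0` and `U > 0` on `I`. Then `U'(r) > 0` for every `r ∈ I` with `r < R`,
and `U'(r) < 0` for every `r ∈ I` with `r > R`. -/
theorem stmt_2 (f : ℝ → ℝ) (hf : Continuous f) (hfpos : ∀ x : ℝ, 0 < x → 0 < f x)
    (R M : ℝ) (hR : R ∈ Ioo (-1 : ℝ) 1) (hM : 0 < M)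
    (I : Set ℝ) (hI : I ⊆ Ioo (-1 : ℝ) 1) (hIord : I.OrdConnected) (hRI : R ∈ I)
    (U U' U'' : ℝ → ℝ)
    (hU : ∀ r ∈ I, HasDerivWithinAt U (U' r) I r)
    (hU' : ∀ r ∈ I, HasDerivWithinAt U' (U'' r) I r)
    (hU''cont : ContinuousOn U'' I)
    (hODE : ∀ r ∈ I, (1 - r ^ 2) * U'' r - 2 * r * U' r + f (U r) = 0)
    (hUR : U R = M) (hU'R : U' R = 0)
    (hUpos : ∀ r ∈ I, 0 < U r) :
    (∀ r ∈ I, r < R → 0 < U' r) ∧ (∀ r ∈ I, R < r → U' r < 0) := by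
  set V : ℝ → ℝ := fun r => (1 - r ^ 2) * U' r with hV
  have hconv : Convex ℝ I := convex_iff_ordConnected.mpr hIord
  have hVderiv : ∀ r ∈ I, HasDerivWithinAt V (-(f (U r))) I r := by
    intro r hr
    have h1 : HasDerivWithinAt (fun r : ℝ => 1 - r ^ 2) (-(2 * r)) I r := by
      simpa using (((hasDerivWithinAt_pow 2 r : HasDerivWithinAt (fun x : ℝ => x ^ 2) _ I r)).const_sub 1)
    have := h1.mul (hU' r hr)
    have heq : (-(2 * r)) * U' r + (1 - r ^ 2) * U'' r = -(f (U r)) := by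
      have := hODE r hr; linarith
    exact heq ▸ this
  have hVcont : ContinuousOn V I := fun r hr => (hVderiv r hr).continuousWithinAt
  have hanti : StrictAntiOn V I := by
    apply strictAntiOn_of_hasDerivWithinAt_neg hconv hVcont
      (f' := fun r => -(f (U r)))
    · intro x hx
      exact ((hVderiv x (interior_subset hx)).mono interior_subset)
    · intro x hx
      have := hfpos _ (hUpos x (interior_subset hx))
      linarith
  have hVR : V R = 0 := by simp [hV, hU'R]
  have hpossq : ∀ r ∈ I, 0 < 1 - r ^ 2 := by
    intro r hr
    have h := hI hr
    nlinarith [h.1, h.2]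
  constructor
  · intro r hr hrR
    have := hanti hr hRI hrR
    rw [hVR] at this; simp only [hV] at this
    have h2 := hpossq r hr
    nlinarith [this]
  · intro r hr hRr
    have := hanti hRI hr hRr
    rw [hVR] at this; simp only [hV] at this
    have h2 := hpossq r hr
    nlinarith [this]
end

section
/- Let f : ℝ → ℝ be C¹ with f(x) > 0 for all x > 0 and f(0) ≥ 0. Then for every R ∈ (-1,1) and every M > 0 there exist real numbers r₁, r₂ with -1 < r₁ < R < r₂ < 1 and a C² function U : [r₁,r₂] → ℝ satisfying the model ODE (1-r²)·U''(r) - 2r·U'(r) + f(U(r)) = 0 on [r₁,r₂], with U(R) = M, U'(R) = 0, U(r₁) = U(r₂) = 0 and U > 0 on (r₁,r₂); moreover U'(r₁) > 0 and U'(r₂) < 0. -/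
open Set Filter Topology
open scoped NNReal



section Glue

variable {E : Type*} [NormedAddCommGroup E] [NormedSpace ℝ E]

lemma glue_deriv {p c q : ℝ} (hpc : p ≤ c) (hcq : c ≤ q)
    {g h dg dh : ℝ → E}
    (hg : ∀ t ∈ Icc p c, HasDerivWithinAt g (dg t) (Icc p c) t)
    (hh : ∀ t ∈ Icc c q, HasDerivWithinAt h (dh t) (Icc c q) t)
    (hj : g c = h c) (hj' : dg c = dh c) :
    ∃ k dk : ℝ → E,
      (∀ t ∈ Icc p q, HasDerivWithinAt k (dk t) (Icc p q) t) ∧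
      (∀ t ∈ Icc p c, k t = g t) ∧ (∀ t ∈ Icc c q, k t = h t) ∧
      (∀ t ∈ Icc p c, dk t = dg t) ∧ (∀ t ∈ Icc c q, dk t = dh t) := by
  set k : ℝ → E := fun t => if t ≤ c then g t else h t with hk
  set dk : ℝ → E := fun t => if t ≤ c then dg t else dh t with hdk
  have hkg : ∀ t, t ≤ c → k t = g t := by
    intro t ht; simp only [hk]; rw [if_pos ht]
  have hkh : ∀ t, c ≤ t → k t = h t := by
    intro t ht; simp only [hk]
    rcases lt_or_eq_of_le ht with h' | h'
    · rw [if_neg (not_le.mpr h')]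
    · rw [← h', if_pos le_rfl, hj, h']
  refine ⟨k, dk, ?_, fun t ht => hkg t ht.2, fun t ht => hkh t ht.1,
    fun t ht => by simp only [hdk]; rw [if_pos ht.2],
    fun t ht => ?_⟩
  swap
  · simp only [hdk]
    rcases lt_or_eq_of_le ht.1 with h' | h'
    · rw [if_neg (not_le.mpr h')]
    · rw [← h', if_pos le_rfl, hj']
  intro t ht
  rcases lt_trichotomy t c with h' | h' | h'
  · have hdkt : dk t = dg t := by simp only [hdk]; rw [if_pos h'.le]
    rw [hdkt]
    have h1 : HasDerivWithinAt g (dg t) (Icc p q ∩ Iic c) t :=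
      (hg t ⟨ht.1, h'.le⟩).mono fun s hs => ⟨hs.1.1, hs.2⟩
    have h2 : HasDerivWithinAt k (dg t) (Icc p q ∩ Iic c) t :=
      h1.congr (fun s hs => hkg s hs.2) (hkg t h'.le)
    exact h2.mono_of_mem_nhdsWithin
      (inter_mem_nhdsWithin _ (Iic_mem_nhds h'))
  · subst h'
    have hdkt : dk t = dg t := by simp only [hdk]; rw [if_pos le_rfl]
    rw [hdkt]
    have h1 : HasDerivWithinAt k (dg t) (Icc p t) t :=
      (hg t ⟨ht.1, le_rfl⟩).congr (fun s hs => hkg s hs.2) (hkg t le_rfl)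
    have h2 : HasDerivWithinAt k (dg t) (Icc t q) t := by
      rw [hj']
      exact (hh t ⟨le_rfl, ht.2⟩).congr (fun s hs => hkh s hs.1) (hkh t le_rfl)
    have := h1.union h2
    rwa [Icc_union_Icc_eq_Icc ht.1 ht.2] at this
  · have hdkt : dk t = dh t := by simp only [hdk]; rw [if_neg (not_le.mpr h')]
    rw [hdkt]
    have h1 : HasDerivWithinAt h (dh t) (Icc p q ∩ Ici c) t :=
      (hh t ⟨h'.le, ht.2⟩).mono fun s hs => ⟨hs.2, hs.1.2⟩
    have h2 : HasDerivWithinAt k (dh t) (Icc p q ∩ Ici c) t :=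
      h1.congr (fun s hs => hkh s hs.2) (hkh t h'.le)
    exact h2.mono_of_mem_nhdsWithin
      (inter_mem_nhdsWithin _ (Ici_mem_nhds h'))

end Glue

variable {E : Type*} [NormedAddCommGroup E] [NormedSpace ℝ E] [CompleteSpace E]

lemma hasDerivWithinAt_singleton' (f : ℝ → E) (d : E) (x : ℝ) :
    HasDerivWithinAt f d {x} x := by
  simp only [HasDerivWithinAt, HasFDerivWithinAt, nhdsWithin_singleton]
  exact HasFDerivAtFilter.of_isLittleO (by rw [Filter.prod_pure_pure, Asymptotics.isLittleO_pure]; simp)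

lemma exists_step (F : ℝ → E → E) (L : ℝ≥0)
    (hL : ∀ t, LipschitzWith L (F t))
    (hC : ∀ x, Continuous fun t => F t x)
    {t₀ c : ℝ} (ht : t₀ ≤ c) (hc : c - t₀ ≤ 1 / (2 * ((L : ℝ) + 1))) (x₀ : E) :
    ∃ f : ℝ → E, f t₀ = x₀ ∧ ∀ t ∈ Icc t₀ c, HasDerivWithinAt f (F t (f t)) (Icc t₀ c) t := by
  set τ : ℝ := 1 / (2 * ((L : ℝ) + 1)) with hτdef
  have hLpos : (0:ℝ) < (L : ℝ) + 1 := by positivity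
  have hτpos : 0 < τ := by positivity
  obtain ⟨tm, htm, hmax⟩ := isCompact_Icc.exists_isMaxOn (nonempty_Icc.mpr ht)
    ((hC x₀).norm.continuousOn (s := Icc t₀ c))
  set C₀ : ℝ := ‖F tm x₀‖ with hC₀
  have hC₀nn : 0 ≤ C₀ := norm_nonneg _
  have hbound : ∀ t ∈ Icc t₀ c, ‖F t x₀‖ ≤ C₀ := fun t htt => hmax htt
  set R : ℝ := 2 * C₀ * τ + 1 with hR
  have hRpos : 0 < R := by positivity
  set C : ℝ := C₀ + L * R with hCdef
  have hLτ : (L : ℝ) * τ ≤ 1 / 2 := by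
    rw [hτdef, mul_one_div, div_le_div_iff₀ (by positivity) (by norm_num : (0:ℝ) < 2)]
    nlinarith [L.coe_nonneg]
  have hpl : IsPicardLindelof F (tmin := t₀) (tmax := c) ⟨t₀, le_rfl, ht⟩ x₀ R.toNNReal 0
      C.toNNReal L := by
    have hCnn0 : 0 ≤ C := by positivity
    refine ⟨fun t _ => (hL t).lipschitzOnWith,
      fun x _ => (hC x).continuousOn, ?_, ?_⟩
    · intro t htt x hx
      rw [Real.coe_toNNReal _ hCnn0]
      rw [Real.coe_toNNReal _ hRpos.le] at hx
      calc ‖F t x‖ ≤ ‖F t x₀‖ + dist (F t x) (F t x₀) := by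
            rw [dist_eq_norm]
            have := norm_sub_norm_le (F t x) (F t x₀)
            linarith [norm_sub_rev (F t x) (F t x₀) ▸ this]
        _ ≤ C₀ + L * dist x x₀ := by
            have := (hL t).dist_le_mul x x₀
            have h2 := hbound t htt
            linarith
        _ ≤ C₀ + L * R := by
            have h1 : dist x x₀ ≤ R := Metric.mem_closedBall.mp hx
            have h2 := L.coe_nonneg
            nlinarith
    · rw [NNReal.coe_zero, sub_zero, Real.coe_toNNReal _ hCnn0, Real.coe_toNNReal _ hRpos.le]
      show C * max (c - t₀) (t₀ - t₀) ≤ R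
      have hmax' : max (c - t₀) (t₀ - t₀) = c - t₀ := by
        rw [max_eq_left]; linarith
      rw [hmax']
      have hCnn : 0 ≤ C := by positivity
      calc C * (c - t₀) ≤ C * τ := by nlinarith
        _ = C₀ * τ + ((L:ℝ) * τ) * R := by ring
        _ ≤ C₀ * τ + (1/2) * R := by nlinarith
        _ ≤ R := by rw [hR]; nlinarith
  exact hpl.exists_eq_forall_mem_Icc_hasDerivWithinAt₀

lemma exists_global (F : ℝ → E → E) (L : ℝ≥0)
    (hL : ∀ t, LipschitzWith L (F t))
    (hC : ∀ x, Continuous fun t => F t x)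
    {t₀ b : ℝ} (ht : t₀ ≤ b) (x₀ : E) :
    ∃ f : ℝ → E, f t₀ = x₀ ∧ ∀ t ∈ Icc t₀ b, HasDerivWithinAt f (F t (f t)) (Icc t₀ b) t := by
  set τ : ℝ := 1 / (2 * ((L : ℝ) + 1)) with hτdef
  have hτpos : 0 < τ := by positivity
  obtain ⟨n, hn⟩ := exists_nat_ge ((b - t₀) / τ)
  have key : ∀ n : ℕ, ∀ t₀ : ℝ, t₀ ≤ b → b - t₀ ≤ n * τ → ∀ x₀ : E,
      ∃ f : ℝ → E, f t₀ = x₀ ∧ ∀ t ∈ Icc t₀ b, HasDerivWithinAt f (F t (f t)) (Icc t₀ b) t := by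
    intro n
    induction n with
    | zero =>
      intro t₀ ht hb x₀
      have : b = t₀ := by push_cast at hb; linarith
      subst this
      refine ⟨fun _ => x₀, rfl, ?_⟩
      intro t htt
      have : t = b := le_antisymm htt.2 htt.1
      subst this
      rw [Icc_self]
      exact hasDerivWithinAt_singleton' _ _ _
    | succ n ih =>
      intro t₀ ht hb x₀
      set c : ℝ := min b (t₀ + τ) with hcdef
      have htc : t₀ ≤ c := le_min ht (by linarith)
      have hcb : c ≤ b := min_le_left _ _
      have htcτ : c ≤ t₀ + τ := min_le_right _ _
      obtain ⟨g, hg0, hg⟩ := exists_step F L hL hC htc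
        (by show c - t₀ ≤ τ; linarith) x₀
      obtain ⟨h, hh0, hh⟩ := ih c hcb
        (by
          rcases le_or_gt b (t₀ + τ) with h' | h'
          · have : c = b := min_eq_left h'
            rw [this]; simp; positivity
          · have : c = t₀ + τ := min_eq_right h'.le
            rw [this]; push_cast at hb ⊢; linarith) (g c)
      obtain ⟨k, dk, hk, hk1, hk2, hd1, hd2⟩ := glue_deriv htc hcb hg hh hh0.symm (by rw [hh0])
      refine ⟨k, by rw [hk1 t₀ ⟨le_rfl, htc⟩, hg0], ?_⟩
      intro t htt
      have := hk t htt
      rcases le_or_gt t c with h' | h'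
      · rw [hd1 t ⟨htt.1, h'⟩] at this
        convert this using 2
        exact hk1 t ⟨htt.1, h'⟩
      · rw [hd2 t ⟨h'.le, htt.2⟩] at this
        convert this using 2
        exact hk2 t ⟨h'.le, htt.2⟩
  refine key n t₀ ht ?_ x₀
  rw [div_le_iff₀ hτpos] at hn
  linarith
noncomputable section Trunc

/-- clamp to `[-K₀, K₀]` -/
def cl (K₀ x : ℝ) : ℝ := max (min x K₀) (-K₀)

lemma cl_mem {K₀ : ℝ} (hK₀ : 0 ≤ K₀) (x : ℝ) : cl K₀ x ∈ Icc (-K₀) K₀ :=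
  ⟨le_max_right _ _, max_le (min_le_right _ _) (by linarith)⟩

lemma cl_eq {K₀ x : ℝ} (hx : x ∈ Icc (-K₀) K₀) : cl K₀ x = x := by
  unfold cl
  rw [min_eq_left hx.2, max_eq_left hx.1]

lemma cl_pos {K₀ x : ℝ} (hK₀ : 0 < K₀) (hx : 0 < x) : 0 < cl K₀ x :=
  lt_of_lt_of_le (lt_min hx hK₀) (le_max_left _ _)

lemma cl_lipschitz (K₀ : ℝ) : LipschitzWith 1 (cl K₀) := by
  have := (LipschitzWith.id (α := ℝ)).min_const K₀
  have h2 := this.max_const (-K₀)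
  simp at h2; exact h2

/-- truncation of `f` -/
def ftr (f : ℝ → ℝ) (K₀ x : ℝ) : ℝ := f (cl K₀ x)

lemma ftr_eq {f : ℝ → ℝ} {K₀ x : ℝ} (hx : x ∈ Icc (-K₀) K₀) : ftr f K₀ x = f x := by
  rw [ftr, cl_eq hx]

lemma ftr_pos {f : ℝ → ℝ} (hfpos : ∀ x : ℝ, 0 < x → 0 < f x) {K₀ : ℝ} (hK₀ : 0 < K₀)
    {x : ℝ} (hx : 0 < x) : 0 < ftr f K₀ x := hfpos _ (cl_pos hK₀ hx)

lemma ftr_nonneg {f : ℝ → ℝ} (hfpos : ∀ x : ℝ, 0 < x → 0 < f x) (hf0 : 0 ≤ f 0)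
    {K₀ : ℝ} (hK₀ : 0 < K₀) {x : ℝ} (hx : 0 ≤ x) : 0 ≤ ftr f K₀ x := by
  rcases lt_or_eq_of_le hx with h | h
  · exact (ftr_pos hfpos hK₀ h).le
  · rw [ftr, ← h]
    have : cl K₀ 0 = 0 := cl_eq ⟨by linarith, hK₀.le⟩
    rw [this]; exact hf0

lemma ftr_continuous {f : ℝ → ℝ} (hf : Continuous f) (K₀ : ℝ) : Continuous (ftr f K₀) :=
  hf.comp (cl_lipschitz K₀).continuous

lemma ftr_lipschitz {f : ℝ → ℝ} (hf : ContDiff ℝ 1 f) {K₀ : ℝ} (hK₀ : 0 ≤ K₀) :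
    ∃ Kg : ℝ≥0, LipschitzWith Kg (ftr f K₀) := by
  have hd : Continuous (deriv f) := hf.continuous_deriv le_rfl
  obtain ⟨tm, _, hmax⟩ := isCompact_Icc.exists_isMaxOn
    (nonempty_Icc.mpr (by linarith : -K₀ ≤ K₀)) (hd.norm.continuousOn (s := Icc (-K₀) K₀))
  set C : ℝ := ‖deriv f tm‖ with hC
  have hC0 : 0 ≤ C := norm_nonneg _
  have hlip : LipschitzOnWith C.toNNReal f (Icc (-K₀) K₀) := by
    apply (convex_Icc _ _).lipschitzOnWith_of_nnnorm_hasDerivWithin_le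
      (f' := deriv f)
      (fun x hx => ((hf.differentiable one_ne_zero x).hasDerivAt).hasDerivWithinAt)
    intro x hx
    rw [← NNReal.coe_le_coe, coe_nnnorm, Real.coe_toNNReal _ hC0]
    exact hmax hx
  refine ⟨C.toNNReal * 1, ?_⟩
  have := hlip.comp ((cl_lipschitz K₀).lipschitzOnWith (s := univ))
    (fun x _ => cl_mem hK₀ x)
  rw [lipschitzOnWith_univ] at this
  exact this

end Trunc

noncomputable section SysSol

/-- Existence of solutions of the system `v' = w`, `w' = (2tw - g(v))/(1-t²)` on a
compact subinterval of `(-1,1)`, forward in time, for globally Lipschitz `g`. -/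
lemma exists_pair_sol {g : ℝ → ℝ} {Kg : ℝ≥0} (hg : LipschitzWith Kg g)
    {a b : ℝ} (ha : -1 < a) (hb : b < 1) {t₀ : ℝ} (ht₀ : t₀ ∈ Icc a b) (u₀ w₀ : ℝ) :
    ∃ v w : ℝ → ℝ, v t₀ = u₀ ∧ w t₀ = w₀ ∧
      (∀ t ∈ Icc t₀ b, HasDerivWithinAt v (w t) (Icc t₀ b) t) ∧
      (∀ t ∈ Icc t₀ b, HasDerivWithinAt w ((2 * t * w t - g (v t)) / (1 - t ^ 2)) (Icc t₀ b) t) := by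
  obtain ⟨ht₀a, ht₀b⟩ := ht₀
  have hab : a ≤ b := le_trans ht₀a ht₀b
  set π : ℝ → ℝ := fun t => max (min t b) a with hπ
  have hπab : ∀ t, π t ∈ Icc a b := fun t =>
    ⟨le_max_right _ _, max_le (min_le_right _ _) hab⟩
  have hπeq : ∀ t ∈ Icc a b, π t = t := by
    intro t ht
    simp only [hπ]
    rw [min_eq_left ht.2, max_eq_left ht.1]
  set m : ℝ := max |a| |b| with hm
  have hm1 : m < 1 := by
    rw [hm, max_lt_iff, abs_lt, abs_lt]
    constructor <;> constructor <;> linarith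
  have hm0 : 0 ≤ m := le_trans (abs_nonneg a) (le_max_left _ _)
  have hπm : ∀ t, |π t| ≤ m := by
    intro t
    rw [abs_le]
    have h1 := (hπab t).1
    have h2 := (hπab t).2
    have ha' : -m ≤ a := by
      have : |a| ≤ m := le_max_left _ _
      rw [abs_le] at this; linarith [this.1]
    have hb' : b ≤ m := by
      have : |b| ≤ m := le_max_right _ _
      rw [abs_le] at this; linarith [this.1, this.2]
    exact ⟨le_trans ha' h1, le_trans h2 hb'⟩
  set ε : ℝ := 1 - m ^ 2 with hε
  have hεpos : 0 < ε := by nlinarith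
  have hd : ∀ t, ε ≤ 1 - π t ^ 2 := by
    intro t
    have := hπm t
    have h2 : π t ^ 2 ≤ m ^ 2 := by
      rw [← sq_abs (π t)]
      exact pow_le_pow_left₀ (abs_nonneg _) this 2
    simp only [hε]; linarith
  set G : ℝ → ℝ × ℝ → ℝ × ℝ :=
    fun t x => (x.2, (2 * π t * x.2 - g x.1) / (1 - π t ^ 2)) with hG
  set L : ℝ≥0 := Real.toNNReal (1 + (2 + Kg) / ε) with hLdef
  have hLcoe : (L : ℝ) = 1 + (2 + Kg) / ε := by
    rw [hLdef, Real.coe_toNNReal]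
    positivity
  have hπcont : Continuous π := ((continuous_id.min continuous_const).max continuous_const)
  have hLip : ∀ t, LipschitzWith L (G t) := by
    intro t
    apply LipschitzWith.of_dist_le_mul
    intro x y
    have hdpos : 0 < 1 - π t ^ 2 := lt_of_lt_of_le hεpos (hd t)
    rw [Prod.dist_eq]
    set D : ℝ := dist x y with hD
    have hD1 : dist x.1 y.1 ≤ D := by rw [hD, Prod.dist_eq]; exact le_max_left _ _
    have hD2 : dist x.2 y.2 ≤ D := by rw [hD, Prod.dist_eq]; exact le_max_right _ _
    have hDnn : 0 ≤ D := dist_nonneg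
    have hL1 : (1 : ℝ) ≤ L := by
      rw [hLcoe]
      have : 0 ≤ (2 + (Kg:ℝ)) / ε := by positivity
      linarith
    rw [max_le_iff]
    constructor
    · simp only [hG]
      calc dist x.2 y.2 ≤ D := hD2
        _ ≤ L * D := by nlinarith
    · simp only [hG]
      rw [Real.dist_eq]
      rw [div_sub_div_same]
      rw [abs_div, abs_of_pos hdpos]
      have hgl : |g x.1 - g y.1| ≤ (Kg : ℝ) * dist x.1 y.1 := by
        have := hg.dist_le_mul x.1 y.1
        rwa [Real.dist_eq] at this
      have hnum : |2 * π t * x.2 - g x.1 - (2 * π t * y.2 - g y.1)| ≤ (2 + Kg) * D := by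
        have h1 : 2 * π t * x.2 - g x.1 - (2 * π t * y.2 - g y.1)
            = 2 * π t * (x.2 - y.2) - (g x.1 - g y.1) := by ring
        rw [h1]
        calc |2 * π t * (x.2 - y.2) - (g x.1 - g y.1)|
            ≤ |2 * π t * (x.2 - y.2)| + |g x.1 - g y.1| := abs_sub _ _
          _ = 2 * |π t| * |x.2 - y.2| + |g x.1 - g y.1| := by
              rw [abs_mul, abs_mul]; simp [abs_of_nonneg]
          _ ≤ 2 * 1 * D + Kg * D := by
              have hπ1 : |π t| ≤ 1 := le_trans (hπm t) hm1.le
              have h2 : |x.2 - y.2| ≤ D := by rwa [← Real.dist_eq]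
              have h1' : |x.1 - y.1| ≤ D := by
                rw [← Real.dist_eq]; exact hD1
              have := hgl
              rw [Real.dist_eq] at this
              have hKg0 : (0:ℝ) ≤ Kg := Kg.coe_nonneg
              nlinarith [abs_nonneg (π t), abs_nonneg (x.2 - y.2), abs_nonneg (x.1 - y.1)]
          _ = (2 + Kg) * D := by ring
      calc |2 * π t * x.2 - g x.1 - (2 * π t * y.2 - g y.1)| / (1 - π t ^ 2)
          ≤ ((2 + Kg) * D) / ε := by
            apply div_le_div₀ (by positivity) hnum hεpos (hd t)
        _ = ((2 + Kg) / ε) * D := by ring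
        _ ≤ L * D := by
            rw [hLcoe]; nlinarith [div_nonneg (by positivity : (0:ℝ) ≤ 2 + Kg) hεpos.le]
  have hcont : ∀ x : ℝ × ℝ, Continuous fun t => G t x := by
    intro x
    simp only [hG]
    refine Continuous.prodMk continuous_const ?_
    apply Continuous.div
    · exact ((continuous_const.mul hπcont).mul continuous_const).sub continuous_const
    · exact continuous_const.sub (hπcont.pow 2)
    · intro t
      have := hd t
      intro h
      rw [h] at this
      linarith
  obtain ⟨γ, hγ0, hγ⟩ := exists_global G L hLip hcont ht₀b ((u₀, w₀) : ℝ × ℝ)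
  refine ⟨fun t => (γ t).1, fun t => (γ t).2, by simp [hγ0], by simp [hγ0], ?_, ?_⟩
  · intro t ht
    have h := hγ t ht
    have := (ContinuousLinearMap.fst ℝ ℝ ℝ).hasFDerivAt.comp_hasDerivWithinAt t h
    exact this
  · intro t ht
    have h := hγ t ht
    have h2 := (ContinuousLinearMap.snd ℝ ℝ ℝ).hasFDerivAt.comp_hasDerivWithinAt t h
    have hπt : π t = t := hπeq t ⟨le_trans ht₀a ht.1, ht.2⟩
    simp only [hG, ContinuousLinearMap.coe_snd', Function.comp] at h2 ⊢
    rw [hπt] at h2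
    exact h2
end SysSol
section Analysis

variable {R b : ℝ} {v w g : ℝ → ℝ}

lemma denom_pos (hR1 : -1 < R) (hb1 : b < 1) {r : ℝ} (hr : r ∈ Icc R b) : 0 < 1 - r ^ 2 := by
  have h1 := hr.1; have h2 := hr.2; nlinarith

lemma E_deriv (hR1 : -1 < R) (hb1 : b < 1)
    (hw : ∀ r ∈ Icc R b, HasDerivWithinAt w ((2*r*w r - g (v r))/(1 - r^2)) (Icc R b) r) :
    ∀ r ∈ Icc R b, HasDerivWithinAt (fun s => (1 - s^2) * w s) (-(g (v r))) (Icc R b) r := by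
  intro r hr
  have h1 : HasDerivWithinAt (fun s : ℝ => 1 - s ^ 2) (-(2*r)) (Icc R b) r := by
    have h := ((hasDerivAt_pow 2 r).const_sub 1).hasDerivWithinAt (s := Icc R b)
    simpa using h
  have h2 := h1.mul (hw r hr)
  refine h2.congr_deriv ?_
  have hd := (denom_pos hR1 hb1 hr).ne'
  field_simp
  ring

/-- interior point upgrade -/
lemma interior_hasDeriv {c d : ℝ} {F D : ℝ → ℝ}
    (hF : ∀ r ∈ Icc c d, HasDerivWithinAt F (D r) (Icc c d) r) :
    ∀ r ∈ interior (Icc c d), HasDerivWithinAt F (D r) (interior (Icc c d)) r := by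
  intro r hr
  rw [interior_Icc] at hr
  exact (((hF r (Ioo_subset_Icc_self hr)).hasDerivAt
    (Icc_mem_nhds hr.1 hr.2)).hasDerivWithinAt).mono interior_subset

lemma sys_mono (hR1 : -1 < R) (hb1 : b < 1)
    (hgnn : ∀ x : ℝ, 0 ≤ x → 0 ≤ g x)
    (hv : ∀ r ∈ Icc R b, HasDerivWithinAt v (w r) (Icc R b) r)
    (hw : ∀ r ∈ Icc R b, HasDerivWithinAt w ((2*r*w r - g (v r))/(1 - r^2)) (Icc R b) r)
    (hwR : w R = 0) (hRb : R ≤ b)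
    (hvnn : ∀ r ∈ Icc R b, 0 ≤ v r) :
    AntitoneOn (fun s => (1 - s^2) * w s) (Icc R b) ∧
    (∀ r ∈ Icc R b, w r ≤ 0) ∧ AntitoneOn v (Icc R b) := by
  have hE := E_deriv hR1 hb1 hw
  have hEcont : ContinuousOn (fun s => (1 - s^2) * w s) (Icc R b) :=
    fun r hr => (hE r hr).continuousWithinAt
  have hEanti : AntitoneOn (fun s => (1 - s^2) * w s) (Icc R b) := by
    apply antitoneOn_of_hasDerivWithinAt_nonpos (convex_Icc R b) hEcont
      (interior_hasDeriv hE)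
    intro r hr
    rw [interior_Icc] at hr
    have := hgnn (v r) (hvnn r (Ioo_subset_Icc_self hr))
    linarith
  have hERzero : (1 - R^2) * w R = 0 := by rw [hwR]; ring
  have hwnp : ∀ r ∈ Icc R b, w r ≤ 0 := by
    intro r hr
    have h1 : (1 - r^2) * w r ≤ (1 - R^2) * w R :=
      hEanti (left_mem_Icc.mpr hRb) hr hr.1
    rw [hERzero] at h1
    have h2 := denom_pos hR1 hb1 hr
    nlinarith
  refine ⟨hEanti, hwnp, ?_⟩
  apply antitoneOn_of_hasDerivWithinAt_nonpos (convex_Icc R b)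
    (fun r hr => (hv r hr).continuousWithinAt) (interior_hasDeriv hv)
  intro r hr
  rw [interior_Icc] at hr
  exact hwnp r (Ioo_subset_Icc_self hr)

lemma aux_psi {c r W : ℝ} (hc : 0 < c) (h1r : 0 < 1 - r) (h1pr : 0 < 1 + r)
    (hW : (1 - r^2) * W ≤ -c) : W + c/2 * (1/(1-r)) ≤ 0 := by
  have hden : 0 < 1 - r^2 := by nlinarith
  have key : (W + c/2 * (1/(1-r))) * ((1-r)*(1+r)) ≤ 0 := by
    have expand : (W + c/2 * (1/(1-r))) * ((1-r)*(1+r)) = W * (1-r^2) + (c/2)*(1+r) := by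
      field_simp
      ring
    rw [expand]
    nlinarith
  by_contra hpos
  push_neg at hpos
  nlinarith [mul_pos hpos (mul_pos h1r h1pr)]

lemma aux_final {A B LA LB c M : ℝ} (hc : 0 < c)
    (hψ : A - c/2*LA ≤ B - c/2*LB) (hlog : LA = LB + (-(2*M/c))) (hBM : B ≤ M) : A ≤ 0 := by
  subst hlog
  have hcancel : c/2 * (2*M/c) = M := by field_simp
  nlinarith [hψ, hBM, hcancel]

end Analysis
section Land

lemma land (f : ℝ → ℝ)
    (hfpos : ∀ x : ℝ, 0 < x → 0 < f x) (hf0 : 0 ≤ f 0)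
    {K₀ M R b : ℝ} (hK₀ : 0 < K₀) (hMK : M ≤ K₀) (hM : 0 < M)
    (hR1 : -1 < R) (hRb : R < b) (hb1 : b < 1)
    {v w : ℝ → ℝ} (hvR : v R = M) (hwR : w R = 0)
    (hv : ∀ r ∈ Icc R b, HasDerivWithinAt v (w r) (Icc R b) r)
    (hw : ∀ r ∈ Icc R b, HasDerivWithinAt w ((2*r*w r - ftr f K₀ (v r))/(1 - r^2)) (Icc R b) r)
    (hex : ∃ r ∈ Ioc R b, v r ≤ 0) :
    ∃ r₂ ∈ Ioo R (1:ℝ),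
      v r₂ = 0 ∧
      (∀ r ∈ Icc R r₂, HasDerivWithinAt v (w r) (Icc R r₂) r) ∧
      (∀ r ∈ Icc R r₂, HasDerivWithinAt w ((2*r*w r - f (v r))/(1 - r^2)) (Icc R r₂) r) ∧
      (∀ r ∈ Ico R r₂, 0 < v r) ∧ w r₂ < 0 := by
  have hvc : ContinuousOn v (Icc R b) := fun r hr => (hv r hr).continuousWithinAt
  set S : Set ℝ := Icc R b ∩ v ⁻¹' (Iic 0) with hS
  have hSc : IsClosed S := hvc.preimage_isClosed_of_isClosed isClosed_Icc isClosed_Iic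
  have hSne : S.Nonempty := by
    obtain ⟨r, hr, hr0⟩ := hex
    exact ⟨r, ⟨hr.1.le, hr.2⟩, hr0⟩
  have hSbdd : BddBelow S := bddBelow_Icc.mono inter_subset_left
  set r₂ : ℝ := sInf S with hr₂def
  have hr₂S : r₂ ∈ S := hSc.csInf_mem hSne hSbdd
  have hr₂Icc : r₂ ∈ Icc R b := hr₂S.1
  have hvr₂ : v r₂ ≤ 0 := hr₂S.2
  have hRr₂ : R < r₂ := by
    rcases lt_or_eq_of_le hr₂Icc.1 with h | h
    · exact h
    · exfalso; rw [← h, hvR] at hvr₂; linarith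
  have hr₂1 : r₂ < 1 := lt_of_le_of_lt hr₂Icc.2 hb1
  have hpos : ∀ r ∈ Ico R r₂, 0 < v r := by
    intro r hr
    by_contra h
    push_neg at h
    have hrS : r ∈ S := ⟨⟨hr.1, le_trans hr.2.le hr₂Icc.2⟩, h⟩
    have := csInf_le hSbdd hrS
    rw [← hr₂def] at this
    linarith [hr.2]
  have hv0 : v r₂ = 0 := by
    refine le_antisymm hvr₂ ?_
    by_contra hlt
    push_neg at hlt
    have hIcosub : Ico R r₂ ⊆ Icc R b := fun x hx => ⟨hx.1, le_trans hx.2.le hr₂Icc.2⟩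
    have hcw : ContinuousWithinAt v (Ico R r₂) r₂ := (hvc r₂ hr₂Icc).mono hIcosub
    have hne : (𝓝[Ico R r₂] r₂).NeBot := by
      rw [← mem_closure_iff_nhdsWithin_neBot, closure_Ico hRr₂.ne]
      exact right_mem_Icc.mpr hRr₂.le
    have hev : ∀ᶠ r in 𝓝[Ico R r₂] r₂, v r < 0 := hcw.eventually_lt_const hlt
    obtain ⟨r, hr1, hr2⟩ := (hev.and eventually_mem_nhdsWithin).exists
    exact absurd (hpos r hr2) (not_lt.mpr hr1.le)
  have hsub : Icc R r₂ ⊆ Icc R b := Icc_subset_Icc_right hr₂Icc.2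
  have hv' : ∀ r ∈ Icc R r₂, HasDerivWithinAt v (w r) (Icc R r₂) r :=
    fun r hr => (hv r (hsub hr)).mono hsub
  have hw' : ∀ r ∈ Icc R r₂, HasDerivWithinAt w ((2*r*w r - ftr f K₀ (v r))/(1 - r^2))
      (Icc R r₂) r := fun r hr => (hw r (hsub hr)).mono hsub
  have hvnn : ∀ r ∈ Icc R r₂, 0 ≤ v r := by
    intro r hr
    rcases lt_or_eq_of_le hr.2 with h | h
    · exact (hpos r ⟨hr.1, h⟩).le
    · rw [h, hv0]
  have hgnn : ∀ x : ℝ, 0 ≤ x → 0 ≤ ftr f K₀ x := fun x hx => ftr_nonneg hfpos hf0 hK₀ hx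
  obtain ⟨hEanti, hwnp, hvanti⟩ := sys_mono hR1 hr₂1 hgnn hv' hw' hwR hRr₂.le hvnn
  have hvle : ∀ r ∈ Icc R r₂, v r ≤ M := by
    intro r hr
    have := hvanti (left_mem_Icc.mpr hRr₂.le) hr hr.1
    rwa [hvR] at this
  have hmem : ∀ r ∈ Icc R r₂, v r ∈ Icc (-K₀) K₀ := fun r hr =>
    ⟨by linarith [hvnn r hr], le_trans (hvle r hr) hMK⟩
  have hw'' : ∀ r ∈ Icc R r₂, HasDerivWithinAt w ((2*r*w r - f (v r))/(1 - r^2)) (Icc R r₂) r := by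
    intro r hr
    have := hw' r hr
    rwa [ftr_eq (hmem r hr)] at this
  -- w r₂ < 0
  set m : ℝ := (R + r₂)/2 with hm
  have hmIoo : m ∈ Ioo R r₂ := ⟨by rw [hm]; linarith, by rw [hm]; linarith⟩
  have hm1 : m < 1 := lt_of_lt_of_le hmIoo.2 hr₂Icc.2 |>.trans_le hb1.le
  have hsubm : Icc R m ⊆ Icc R r₂ := Icc_subset_Icc_right hmIoo.2.le
  have hwm : ∀ r ∈ Icc R m, HasDerivWithinAt w ((2*r*w r - ftr f K₀ (v r))/(1 - r^2))
      (Icc R m) r := fun r hr => (hw' r (hsubm hr)).mono hsubm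
  have hEdm := E_deriv hR1 hm1 hwm
  have hEs : StrictAntiOn (fun s => (1 - s^2) * w s) (Icc R m) := by
    apply strictAntiOn_of_hasDerivWithinAt_neg (convex_Icc R m)
      (fun r hr => (hEdm r hr).continuousWithinAt) (interior_hasDeriv hEdm)
    intro r hr
    rw [interior_Icc] at hr
    have hvpos : 0 < v r := hpos r ⟨hr.1.le, lt_trans hr.2 hmIoo.2⟩
    have := ftr_pos hfpos hK₀ hvpos
    linarith
  have h0 : (1 - R^2) * w R = 0 := by rw [hwR]; ring
  have hEm : (1 - m^2) * w m < 0 := by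
    have h := hEs (left_mem_Icc.mpr hmIoo.1.le) (right_mem_Icc.mpr hmIoo.1.le) hmIoo.1
    simp only at h
    rw [h0] at h
    exact h
  have hmmem : m ∈ Icc R r₂ := ⟨hmIoo.1.le, hmIoo.2.le⟩
  have hEr₂ : (1 - r₂^2) * w r₂ ≤ (1 - m^2) * w m :=
    hEanti hmmem (right_mem_Icc.mpr hRr₂.le) hmIoo.2.le
  have hwr₂ : w r₂ < 0 := by
    have hd := denom_pos hR1 hr₂1 (right_mem_Icc.mpr hRr₂.le)
    nlinarith
  exact ⟨r₂, ⟨hRr₂, hr₂1⟩, hv0, hv', hw'', hpos, hwr₂⟩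

end Land
section Forward

lemma forward_half (f : ℝ → ℝ) (hf : ContDiff ℝ 1 f)
    (hfpos : ∀ x : ℝ, 0 < x → 0 < f x) (hf0 : 0 ≤ f 0)
    {R : ℝ} (hR : R ∈ Ioo (-1:ℝ) 1) {M : ℝ} (hM : 0 < M) :
    ∃ r₂ ∈ Ioo R (1:ℝ), ∃ v w : ℝ → ℝ,
      v R = M ∧ w R = 0 ∧ v r₂ = 0 ∧
      (∀ r ∈ Icc R r₂, HasDerivWithinAt v (w r) (Icc R r₂) r) ∧
      (∀ r ∈ Icc R r₂, HasDerivWithinAt w ((2*r*w r - f (v r))/(1 - r^2)) (Icc R r₂) r) ∧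
      (∀ r ∈ Ico R r₂, 0 < v r) ∧ w r₂ < 0 := by
  obtain ⟨hR1, hR2⟩ := hR
  set K₀ : ℝ := M + 1 with hK₀def
  have hK₀ : 0 < K₀ := by rw [hK₀def]; linarith
  have hMK : M ≤ K₀ := by rw [hK₀def]; linarith
  obtain ⟨Kg, hg⟩ := ftr_lipschitz hf hK₀.le
  set b₁ : ℝ := (R + 1)/2 with hb₁def
  have hRb₁ : R < b₁ := by rw [hb₁def]; linarith
  have hb₁1 : b₁ < 1 := by rw [hb₁def]; linarith
  have hgnn : ∀ x : ℝ, 0 ≤ x → 0 ≤ ftr f K₀ x := fun x hx => ftr_nonneg hfpos hf0 hK₀ hx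
  obtain ⟨v₁, w₁, hv₁R, hw₁R, hv₁, hw₁⟩ :=
    exists_pair_sol hg hR1 hb₁1 (left_mem_Icc.mpr hRb₁.le) M 0
  by_cases hcase : ∃ r ∈ Ioc R b₁, v₁ r ≤ 0
  · obtain ⟨r₂, h1, h2, h3, h4, h5, h6⟩ :=
      land f hfpos hf0 hK₀ hMK hM hR1 hRb₁ hb₁1 hv₁R hw₁R hv₁ hw₁ hcase
    exact ⟨r₂, h1, v₁, w₁, hv₁R, hw₁R, h2, h3, h4, h5, h6⟩
  push_neg at hcase
  have hpos₁ : ∀ r ∈ Icc R b₁, 0 < v₁ r := by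
    intro r hr
    rcases eq_or_lt_of_le hr.1 with h | h
    · rw [← h, hv₁R]; exact hM
    · exact hcase r ⟨h, hr.2⟩
  have hvnn₁ : ∀ r ∈ Icc R b₁, 0 ≤ v₁ r := fun r hr => (hpos₁ r hr).le
  obtain ⟨hEanti₁, hwnp₁, hvanti₁⟩ := sys_mono hR1 hb₁1 hgnn hv₁ hw₁ hw₁R hRb₁.le hvnn₁
  set ε : ℝ := v₁ b₁ with hεdef
  have hε : 0 < ε := hpos₁ b₁ (right_mem_Icc.mpr hRb₁.le)
  have hεM : ε ≤ M := by
    have := hvanti₁ (left_mem_Icc.mpr hRb₁.le) (right_mem_Icc.mpr hRb₁.le) hRb₁.le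
    rw [hv₁R] at this
    exact this
  obtain ⟨xm, hxm, hmin⟩ := isCompact_Icc.exists_isMinOn (nonempty_Icc.mpr hεM)
    (hf.continuous.continuousOn (s := Icc ε M))
  set δ : ℝ := f xm with hδdef
  have hδ : 0 < δ := hfpos xm (lt_of_lt_of_le hε hxm.1)
  have hrange : ∀ r ∈ Icc R b₁, v₁ r ∈ Icc ε M := by
    intro r hr
    constructor
    · exact hvanti₁ hr (right_mem_Icc.mpr hRb₁.le) hr.2
    · have := hvanti₁ (left_mem_Icc.mpr hRb₁.le) hr hr.1
      rwa [hv₁R] at this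
  have hglb : ∀ r ∈ Icc R b₁, δ ≤ ftr f K₀ (v₁ r) := by
    intro r hr
    have h1 := hrange r hr
    rw [ftr_eq ⟨by linarith [h1.1, hε, hK₀], by linarith [h1.2]⟩]
    exact hmin h1
  have hEd₁ := E_deriv hR1 hb₁1 hw₁
  have hφd : ∀ r ∈ Icc R b₁, HasDerivWithinAt (fun s => (1-s^2) * w₁ s + δ * (s - R))
      (-(ftr f K₀ (v₁ r)) + δ) (Icc R b₁) r := by
    intro r hr
    have h2 : HasDerivWithinAt (fun s : ℝ => δ * (s - R)) δ (Icc R b₁) r := by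
      simpa using ((hasDerivWithinAt_id r (Icc R b₁)).sub_const R).const_mul δ
    exact (hEd₁ r hr).add h2
  have hφanti : AntitoneOn (fun s => (1-s^2) * w₁ s + δ * (s - R)) (Icc R b₁) := by
    apply antitoneOn_of_hasDerivWithinAt_nonpos (convex_Icc _ _)
      (fun r hr => (hφd r hr).continuousWithinAt) (interior_hasDeriv hφd)
    intro r hr
    rw [interior_Icc] at hr
    have := hglb r (Ioo_subset_Icc_self hr)
    linarith
  set c : ℝ := δ * (b₁ - R) with hcdef
  have hc : 0 < c := mul_pos hδ (by linarith)
  have hE₁b₁ : (1 - b₁^2) * w₁ b₁ ≤ -c := by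
    have h := hφanti (left_mem_Icc.mpr hRb₁.le) (right_mem_Icc.mpr hRb₁.le) hRb₁.le
    simp only at h
    rw [hw₁R] at h
    rw [hcdef]
    nlinarith [h]
  set b₂ : ℝ := 1 - (1 - b₁) * Real.exp (-(2*M/c)) with hb₂def
  have hexppos : 0 < Real.exp (-(2*M/c)) := Real.exp_pos _
  have hexp1 : Real.exp (-(2*M/c)) < 1 := by
    rw [Real.exp_lt_one_iff]
    have : 0 < 2*M/c := by positivity
    linarith
  have hb₁b₂ : b₁ < b₂ := by
    rw [hb₂def]
    nlinarith
  have hb₂1 : b₂ < 1 := by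
    rw [hb₂def]
    nlinarith
  obtain ⟨v₂, w₂, hv₂0, hw₂0, hv₂, hw₂⟩ :=
    exists_pair_sol hg (a := b₁) (b := b₂) (by linarith) hb₂1
      (left_mem_Icc.mpr hb₁b₂.le) (v₁ b₁) (w₁ b₁)
  obtain ⟨v, dv, hvd, hvL, hvRr, hdvL, hdvR⟩ :=
    glue_deriv hRb₁.le hb₁b₂.le hv₁ hv₂ hv₂0.symm hw₂0.symm
  obtain ⟨w, dw, hwd, hwL, hwRr, hdwL, hdwR⟩ :=
    glue_deriv hRb₁.le hb₁b₂.le hw₁ hw₂ hw₂0.symm (by rw [hv₂0, hw₂0])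
  have hv' : ∀ r ∈ Icc R b₂, HasDerivWithinAt v (w r) (Icc R b₂) r := by
    intro r hr
    have h := hvd r hr
    rcases le_or_gt r b₁ with h' | h'
    · rw [hdvL r ⟨hr.1, h'⟩] at h
      rw [hwL r ⟨hr.1, h'⟩]
      exact h
    · rw [hdvR r ⟨h'.le, hr.2⟩] at h
      rw [hwRr r ⟨h'.le, hr.2⟩]
      exact h
  have hw' : ∀ r ∈ Icc R b₂,
      HasDerivWithinAt w ((2*r*w r - ftr f K₀ (v r))/(1 - r^2)) (Icc R b₂) r := by
    intro r hr
    have h := hwd r hr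
    rcases le_or_gt r b₁ with h' | h'
    · rw [hdwL r ⟨hr.1, h'⟩] at h
      rw [hwL r ⟨hr.1, h'⟩, hvL r ⟨hr.1, h'⟩]
      exact h
    · rw [hdwR r ⟨h'.le, hr.2⟩] at h
      rw [hwRr r ⟨h'.le, hr.2⟩, hvRr r ⟨h'.le, hr.2⟩]
      exact h
  have hRb₁mem : R ∈ Icc R b₁ := left_mem_Icc.mpr hRb₁.le
  have hvRval : v R = M := by rw [hvL R hRb₁mem, hv₁R]
  have hwRval : w R = 0 := by rw [hwL R hRb₁mem, hw₁R]
  have hRb₂ : R < b₂ := hRb₁.trans hb₁b₂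
  have claim : ∃ r ∈ Ioc R b₂, v r ≤ 0 := by
    by_contra hno
    push_neg at hno
    have hposall : ∀ r ∈ Icc R b₂, 0 < v r := by
      intro r hr
      rcases eq_or_lt_of_le hr.1 with h | h
      · rw [← h, hvRval]; exact hM
      · exact hno r ⟨h, hr.2⟩
    have hvnn : ∀ r ∈ Icc R b₂, 0 ≤ v r := fun r hr => (hposall r hr).le
    obtain ⟨hEanti, hwnp, hvanti⟩ := sys_mono hR1 hb₂1 hgnn hv' hw' hwRval hRb₂.le hvnn
    have hb₁memL : b₁ ∈ Icc R b₁ := right_mem_Icc.mpr hRb₁.le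
    have hb₁mem : b₁ ∈ Icc R b₂ := ⟨hRb₁.le, hb₁b₂.le⟩
    have hEb₁ : (1 - b₁^2) * w b₁ ≤ -c := by
      rw [hwL b₁ hb₁memL]
      exact hE₁b₁
    have hψd : ∀ r ∈ Icc b₁ b₂, HasDerivWithinAt (fun s => v s - c/2 * Real.log (1 - s))
        (w r + c/2 * (1/(1 - r))) (Icc b₁ b₂) r := by
      intro r hr
      have hrmem : r ∈ Icc R b₂ := ⟨le_trans hRb₁.le hr.1, hr.2⟩
      have hr1 : r < 1 := lt_of_le_of_lt hr.2 hb₂1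
      have h1r : (1:ℝ) - r ≠ 0 := by linarith
      have hlog : HasDerivWithinAt (fun s : ℝ => Real.log (1 - s)) (-(1/(1-r)))
          (Icc b₁ b₂) r := by
        have h2 : HasDerivWithinAt (fun s : ℝ => 1 - s) (-1) (Icc b₁ b₂) r := by
          simpa using (hasDerivWithinAt_id r (Icc b₁ b₂)).const_sub 1
        have h3 := (Real.hasDerivAt_log h1r).comp_hasDerivWithinAt r h2
        refine h3.congr_deriv ?_
        field_simp
      have h4 := ((hv' r hrmem).mono (Icc_subset_Icc_left hRb₁.le)).sub
        (hlog.const_mul (c/2))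
      refine h4.congr_deriv ?_
      ring
    have hψanti : AntitoneOn (fun s => v s - c/2 * Real.log (1 - s)) (Icc b₁ b₂) := by
      apply antitoneOn_of_hasDerivWithinAt_nonpos (convex_Icc _ _)
        (fun r hr => (hψd r hr).continuousWithinAt) (interior_hasDeriv hψd)
      intro r hr
      rw [interior_Icc] at hr
      have hrmem : r ∈ Icc R b₂ := ⟨le_trans hRb₁.le hr.1.le, hr.2.le⟩
      have hE : (1 - r^2) * w r ≤ -c := by
        have h := hEanti hb₁mem hrmem hr.1.le
        simp only at h
        linarith [hEb₁]
      have h1r : (0:ℝ) < 1 - r := by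
        have : r < 1 := lt_of_lt_of_le hr.2 hb₂1.le
        linarith
      have h1pr : (0:ℝ) < 1 + r := by
        have : -1 < r := lt_of_lt_of_le hR1 (le_trans hRb₁.le hr.1.le)
        linarith
      exact aux_psi hc h1r h1pr hE
    have hψ := hψanti (left_mem_Icc.mpr hb₁b₂.le) (right_mem_Icc.mpr hb₁b₂.le) hb₁b₂.le
    simp only at hψ
    have h1b₁ : (0:ℝ) < 1 - b₁ := by linarith
    have hlogb₂ : Real.log (1-b₂) = Real.log (1-b₁) + (-(2*M/c)) := by
      have hrw : 1 - b₂ = (1 - b₁) * Real.exp (-(2*M/c)) := by rw [hb₂def]; ring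
      rw [hrw, Real.log_mul h1b₁.ne' (Real.exp_ne_zero _), Real.log_exp]
    have hvb₁M : v b₁ ≤ M := by
      have := hvanti (left_mem_Icc.mpr hRb₂.le) hb₁mem hRb₁.le
      rwa [hvRval] at this
    have hfinal : v b₂ ≤ 0 := aux_final hc hψ hlogb₂ hvb₁M
    exact absurd (hno b₂ ⟨hRb₂, le_rfl⟩) (not_lt.mpr hfinal)
  obtain ⟨r₂, h1, h2, h3, h4, h5, h6⟩ :=
    land f hfpos hf0 hK₀ hMK hM hR1 hRb₂ hb₂1 hvRval hwRval hv' hw' claim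
  exact ⟨r₂, h1, v, w, hvRval, hwRval, h2, h3, h4, h5, h6⟩

end Forward

lemma reflect_deriv {F : ℝ → ℝ} {d a b x : ℝ}
    (h : HasDerivWithinAt F d (Icc a b) (-x)) :
    HasDerivWithinAt (fun r => F (-r)) (-d) (Icc (-b) (-a)) x := by
  have hneg : HasDerivWithinAt (fun r : ℝ => -r) (-1) (Icc (-b) (-a)) x :=
    (hasDerivWithinAt_id x _).neg
  have hmaps : MapsTo (fun r : ℝ => -r) (Icc (-b) (-a)) (Icc a b) := by
    intro y hy
    simp only [mem_Icc] at hy ⊢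
    constructor <;> linarith [hy.1, hy.2]
  have := h.comp x hneg hmaps
  refine this.congr_deriv ?_
  ring


/-- Let `f : ℝ → ℝ` be C¹ with `f(x) > 0` for all `x > 0` and `f(0) ≥ 0`.
Then for every `R ∈ (-1,1)` and every `M > 0` there exist real numbers `r₁, r₂` with
`-1 < r₁ < R < r₂ < 1` and a C² function `U : [r₁,r₂] → ℝ` satisfying the model ODE
`(1-r²)·U''(r) - 2r·U'(r) + f(U(r)) = 0` on `[r₁,r₂]`, with `U(R) = M`, `U'(R) = 0`,
`U(r₁) = U(r₂) = 0` and `U > 0` on `(r₁,r₂)`; moreover `U'(r₁) > 0` and `U'(r₂) < 0`. -/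
theorem stmt_3 (f : ℝ → ℝ) (hf : ContDiff ℝ 1 f)
    (hfpos : ∀ x : ℝ, 0 < x → 0 < f x) (hf0 : 0 ≤ f 0) :
    ∀ R ∈ Ioo (-1 : ℝ) 1, ∀ M : ℝ, 0 < M →
      ∃ (r₁ r₂ : ℝ) (U U' U'' : ℝ → ℝ),
        -1 < r₁ ∧ r₁ < R ∧ R < r₂ ∧ r₂ < 1 ∧
        (∀ r ∈ Icc r₁ r₂, HasDerivWithinAt U (U' r) (Icc r₁ r₂) r) ∧
        (∀ r ∈ Icc r₁ r₂, HasDerivWithinAt U' (U'' r) (Icc r₁ r₂) r) ∧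
        ContinuousOn U'' (Icc r₁ r₂) ∧
        (∀ r ∈ Icc r₁ r₂, (1 - r ^ 2) * U'' r - 2 * r * U' r + f (U r) = 0) ∧
        U R = M ∧ U' R = 0 ∧ U r₁ = 0 ∧ U r₂ = 0 ∧
        (∀ r ∈ Ioo r₁ r₂, 0 < U r) ∧
        0 < U' r₁ ∧ U' r₂ < 0 := by
  intro R hR M hM
  obtain ⟨r₂, ⟨hRr₂, hr₂1⟩, vp, wp, hvpR, hwpR, hvp0, hvp, hwp, hvppos, hwpneg⟩ :=
    forward_half f hf hfpos hf0 hR hM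
  have hR' : -R ∈ Ioo (-1:ℝ) 1 := ⟨by linarith [hR.2], by linarith [hR.1]⟩
  obtain ⟨s₂, ⟨hRs₂, hs₂1⟩, vt, wt, hvtR, hwtR, hvt0, hvt, hwt, hvtpos, hwtneg⟩ :=
    forward_half f hf hfpos hf0 hR' hM
  set r₁ : ℝ := -s₂ with hr₁def
  have hr₁R : r₁ < R := by rw [hr₁def]; linarith
  have hr₁1 : -1 < r₁ := by rw [hr₁def]; linarith
  set vm : ℝ → ℝ := fun r => vt (-r) with hvmdef
  set wm : ℝ → ℝ := fun r => -wt (-r) with hwmdef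
  have hIccneg : ∀ r ∈ Icc r₁ R, -r ∈ Icc (-R) s₂ := by
    intro r hr
    exact ⟨by linarith [hr.2], by rw [hr₁def] at hr; linarith [hr.1]⟩
  have hvm : ∀ r ∈ Icc r₁ R, HasDerivWithinAt vm (wm r) (Icc r₁ R) r := by
    intro r hr
    have h := reflect_deriv (a := -R) (b := s₂) (hvt (-r) (hIccneg r hr))
    simp only [neg_neg] at h
    exact h
  have hwm : ∀ r ∈ Icc r₁ R,
      HasDerivWithinAt wm ((2*r*wm r - f (vm r))/(1 - r^2)) (Icc r₁ R) r := by
    intro r hr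
    have h := (reflect_deriv (a := -R) (b := s₂) (hwt (-r) (hIccneg r hr))).neg
    simp only [neg_neg] at h
    refine h.congr_deriv ?_
    ring
  -- glue at R
  have hjv : vm R = vp R := by
    simp only [hvmdef]
    rw [hvtR, hvpR]
  have hjw : wm R = wp R := by
    simp only [hwmdef]
    rw [hwtR, hwpR]
    ring
  obtain ⟨U, dU, hUd, hUL, hUR, hdUL, hdUR⟩ :=
    glue_deriv hr₁R.le hRr₂.le hvm hvp hjv hjw
  obtain ⟨W, dW, hWd, hWL, hWR, hdWL, hdWR⟩ :=
    glue_deriv hr₁R.le hRr₂.le hwm hwp hjw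
      (by rw [hjv, hjw])
  set U'' : ℝ → ℝ := fun r => (2*r*W r - f (U r))/(1 - r^2) with hU''def
  have hU' : ∀ r ∈ Icc r₁ r₂, HasDerivWithinAt U (W r) (Icc r₁ r₂) r := by
    intro r hr
    have h := hUd r hr
    rcases le_or_gt r R with h' | h'
    · rw [hdUL r ⟨hr.1, h'⟩] at h
      rw [hWL r ⟨hr.1, h'⟩]
      exact h
    · rw [hdUR r ⟨h'.le, hr.2⟩] at h
      rw [hWR r ⟨h'.le, hr.2⟩]
      exact h
  have hU'' : ∀ r ∈ Icc r₁ r₂, HasDerivWithinAt W (U'' r) (Icc r₁ r₂) r := by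
    intro r hr
    have h := hWd r hr
    rcases le_or_gt r R with h' | h'
    · rw [hdWL r ⟨hr.1, h'⟩] at h
      simp only [hU''def]
      rw [hWL r ⟨hr.1, h'⟩, hUL r ⟨hr.1, h'⟩]
      exact h
    · rw [hdWR r ⟨h'.le, hr.2⟩] at h
      simp only [hU''def]
      rw [hWR r ⟨h'.le, hr.2⟩, hUR r ⟨h'.le, hr.2⟩]
      exact h
  have hUcont : ContinuousOn U (Icc r₁ r₂) := fun r hr => (hU' r hr).continuousWithinAt
  have hWcont : ContinuousOn W (Icc r₁ r₂) := fun r hr => (hU'' r hr).continuousWithinAt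
  have hU''cont : ContinuousOn U'' (Icc r₁ r₂) := by
    simp only [hU''def]
    apply ContinuousOn.div
    · exact ((continuous_const.mul continuous_id).continuousOn.mul hWcont).sub
        (hf.continuous.comp_continuousOn hUcont)
    · exact (continuous_const.sub (continuous_pow 2)).continuousOn
    · intro r hr
      exact (denom_pos hr₁1 hr₂1 hr).ne'
  have hODE : ∀ r ∈ Icc r₁ r₂, (1 - r ^ 2) * U'' r - 2 * r * W r + f (U r) = 0 := by
    intro r hr
    have hd := (denom_pos hr₁1 hr₂1 hr).ne'
    simp only [hU''def]
    field_simp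
    ring
  have hRmemL : R ∈ Icc r₁ R := right_mem_Icc.mpr hr₁R.le
  have hURM : U R = M := by rw [hUL R hRmemL, hjv, hvpR]
  have hWR0 : W R = 0 := by rw [hWL R hRmemL, hjw, hwpR]
  have hUr₁ : U r₁ = 0 := by
    rw [hUL r₁ (left_mem_Icc.mpr hr₁R.le)]
    simp only [hvmdef]
    rw [hr₁def, neg_neg, hvt0]
  have hUr₂ : U r₂ = 0 := by
    rw [hUR r₂ (right_mem_Icc.mpr hRr₂.le), hvp0]
  have hUpos : ∀ r ∈ Ioo r₁ r₂, 0 < U r := by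
    intro r hr
    rcases le_or_gt r R with h' | h'
    · rw [hUL r ⟨hr.1.le, h'⟩]
      simp only [hvmdef]
      apply hvtpos
      constructor
      · linarith
      · rw [hr₁def] at hr; linarith [hr.1]
    · rw [hUR r ⟨h'.le, hr.2.le⟩]
      exact hvppos r ⟨h'.le, hr.2⟩
  have hWr₁ : 0 < W r₁ := by
    rw [hWL r₁ (left_mem_Icc.mpr hr₁R.le)]
    simp only [hwmdef]
    rw [hr₁def, neg_neg]
    linarith [hwtneg]
  have hWr₂ : W r₂ < 0 := by
    rw [hWR r₂ (right_mem_Icc.mpr hRr₂.le)]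
    exact hwpneg
  exact ⟨r₁, r₂, U, W, U'', hr₁1, hr₁R, hRr₂, hr₂1, hU', hU'', hU''cont, hODE,
    hURM, hWR0, hUr₁, hUr₂, hUpos, hWr₁, hWr₂⟩
end

section
/- Let f : ℝ → ℝ be C¹ with f(x) > 0 for all x > 0 and f(0) ≥ 0, and fix M > 0. Suppose that for every R ∈ [0,1) we are given an arch solution with parameters (R,M), i.e. numbers r₁(R), r₂(R) and a function U_R as in the definition of arch solution. Then lim_{R → 1⁻} √(1 - r₂(R)²)·|U_R'(r₂(R))| = +∞. -/
open Set

/-- Arch solution with parameters `(R, M)`: numbers `r₁ < R < r₂` in `(-1,1)` and a C²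
function `U : [r₁,r₂] → ℝ` (with derivative data `U'`, `U''`) satisfying the model ODE
`(1-r²)·U''(r) - 2r·U'(r) + f(U(r)) = 0` on `[r₁,r₂]`, with `U(R) = M`, `U'(R) = 0`,
`U(r₁) = U(r₂) = 0` and `U > 0` on `(r₁,r₂)`. -/
def IsArchSolution (f : ℝ → ℝ) (R M r₁ r₂ : ℝ) (U U' U'' : ℝ → ℝ) : Prop :=
  -1 < r₁ ∧ r₁ < R ∧ R < r₂ ∧ r₂ < 1 ∧
  (∀ r ∈ Set.Icc r₁ r₂, HasDerivWithinAt U (U' r) (Set.Icc r₁ r₂) r) ∧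
  (∀ r ∈ Set.Icc r₁ r₂, HasDerivWithinAt U' (U'' r) (Set.Icc r₁ r₂) r) ∧
  ContinuousOn U'' (Set.Icc r₁ r₂) ∧
  (∀ r ∈ Set.Icc r₁ r₂, (1 - r ^ 2) * U'' r - 2 * r * U' r + f (U r) = 0) ∧
  U R = M ∧ U' R = 0 ∧ U r₁ = 0 ∧ U r₂ = 0 ∧
  (∀ r ∈ Set.Ioo r₁ r₂, 0 < U r)

noncomputable def myAtanh (x : ℝ) : ℝ := (Real.log (1 + x) - Real.log (1 - x)) / 2

lemma myAtanh_hasDerivAt {x : ℝ} (h1 : -1 < x) (h2 : x < 1) :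
    HasDerivAt myAtanh (1 / (1 - x ^ 2)) x := by
  have h1' : (0:ℝ) < 1 + x := by linarith
  have h2' : (0:ℝ) < 1 - x := by linarith
  have d1 : HasDerivAt (fun y : ℝ => Real.log (1 + y)) ((1 + x)⁻¹ * 1) x := by
    have hx : HasDerivAt (fun y : ℝ => 1 + y) 1 x := (hasDerivAt_id x).const_add 1
    exact (Real.hasDerivAt_log h1'.ne').comp x hx
  have d2 : HasDerivAt (fun y : ℝ => Real.log (1 - y)) ((1 - x)⁻¹ * (-1)) x := by
    have hx : HasDerivAt (fun y : ℝ => 1 - y) (-1) x := (hasDerivAt_id x).const_sub 1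
    exact (Real.hasDerivAt_log h2'.ne').comp x hx
  have d3 := (d1.sub d2).div_const 2
  have : HasDerivAt myAtanh (((1 + x)⁻¹ * 1 - (1 - x)⁻¹ * (-1)) / 2) x := d3
  have hne : (1 - x ^ 2) ≠ 0 := by nlinarith
  convert this using 1
  field_simp
  ring

lemma myAtanh_nonneg {x : ℝ} (h0 : 0 ≤ x) (h1 : x < 1) : 0 ≤ myAtanh x := by
  have l1 : 0 ≤ Real.log (1 + x) := Real.log_nonneg (by linarith)
  have l2 : Real.log (1 - x) ≤ 0 := Real.log_nonpos (by linarith) (by linarith)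
  unfold myAtanh; linarith

lemma myAtanh_le {x : ℝ} (h0 : 0 ≤ x) (h1 : x < 1) :
    myAtanh x ≤ (Real.log 2 - Real.log (1 - x)) / 2 := by
  have hl : Real.log (1 + x) ≤ Real.log 2 := by
    apply Real.log_le_log (by linarith) (by linarith)
  unfold myAtanh; linarith

lemma sqrt_mul_neg_log_le {t : ℝ} (ht : 0 < t) :
    Real.sqrt t * (-Real.log t) ≤ 4 * Real.sqrt (Real.sqrt t) := by
  have h1 : (0:ℝ) < Real.sqrt (Real.sqrt t⁻¹) :=
    Real.sqrt_pos.2 (Real.sqrt_pos.2 (inv_pos.2 ht))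
  have h2 : -Real.log t = 4 * Real.log (Real.sqrt (Real.sqrt t⁻¹)) := by
    rw [Real.log_sqrt (Real.sqrt_nonneg _), Real.log_sqrt (inv_nonneg.2 ht.le), Real.log_inv]
    ring
  have h3 : Real.log (Real.sqrt (Real.sqrt t⁻¹)) ≤ Real.sqrt (Real.sqrt t⁻¹) :=
    (Real.log_le_sub_one_of_pos h1).trans (by linarith)
  have h4 : Real.sqrt (Real.sqrt t⁻¹) = (Real.sqrt (Real.sqrt t))⁻¹ := by
    rw [Real.sqrt_inv, Real.sqrt_inv]
  have h5 : (0:ℝ) < Real.sqrt (Real.sqrt t) := Real.sqrt_pos.2 (Real.sqrt_pos.2 ht)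
  have h6 : Real.sqrt t = Real.sqrt (Real.sqrt t) * Real.sqrt (Real.sqrt t) :=
    (Real.mul_self_sqrt (Real.sqrt_nonneg t)).symm
  calc Real.sqrt t * (-Real.log t)
      = 4 * (Real.sqrt t * Real.log (Real.sqrt (Real.sqrt t⁻¹))) := by rw [h2]; ring
    _ ≤ 4 * (Real.sqrt t * Real.sqrt (Real.sqrt t⁻¹)) := by
        have := mul_le_mul_of_nonneg_left h3 (Real.sqrt_nonneg t)
        linarith
    _ = 4 * Real.sqrt (Real.sqrt t) := by
        rw [h4, h6]
        field_simp
        rw [Real.sqrt_sq (Real.sqrt_nonneg _)]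

noncomputable def psi (t : ℝ) : ℝ :=
  Real.sqrt 2 / 2 * (Real.sqrt t * Real.log 2 + 4 * Real.sqrt (Real.sqrt t))

lemma psi_mono {a b : ℝ} (hab : a ≤ b) : psi a ≤ psi b := by
  have s1 := Real.sqrt_le_sqrt hab
  have s2 := Real.sqrt_le_sqrt s1
  have hl : 0 ≤ Real.log 2 := Real.log_nonneg one_le_two
  have h2 : (0:ℝ) ≤ Real.sqrt 2 / 2 := by positivity
  unfold psi
  nlinarith [mul_le_mul_of_nonneg_right s1 hl]

lemma psi_tendsto :
    Filter.Tendsto (fun R : ℝ => psi (1 - R)) (nhdsWithin 1 (Iio (1:ℝ))) (nhds 0) := by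
  have hc : Continuous fun R : ℝ => psi (1 - R) := by
    unfold psi
    continuity
  have h0 : psi (1 - 1) = 0 := by
    unfold psi
    norm_num
  have := (hc.tendsto 1).mono_left
    (nhdsWithin_le_nhds : nhdsWithin (1:ℝ) (Iio 1) ≤ nhds 1)
  rwa [h0] at this

lemma sqrt_mul_myAtanh_le {r : ℝ} (h0 : 0 ≤ r) (h1 : r < 1) :
    Real.sqrt (1 - r ^ 2) * myAtanh r ≤ psi (1 - r) := by
  have htpos : 0 < 1 - r := by linarith
  have hA : Real.sqrt (1 - r ^ 2) ≤ Real.sqrt 2 * Real.sqrt (1 - r) := by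
    rw [← Real.sqrt_mul (by norm_num : (0:ℝ) ≤ 2) (1 - r)]
    apply Real.sqrt_le_sqrt
    nlinarith
  have hB : myAtanh r ≤ (Real.log 2 + -Real.log (1 - r)) / 2 := by
    have := myAtanh_le h0 h1
    linarith
  have hBnn : 0 ≤ myAtanh r := myAtanh_nonneg h0 h1
  have hAnn : (0:ℝ) ≤ Real.sqrt 2 * Real.sqrt (1 - r) := by positivity
  have step1 : Real.sqrt (1 - r ^ 2) * myAtanh r
      ≤ (Real.sqrt 2 * Real.sqrt (1 - r)) * ((Real.log 2 + -Real.log (1 - r)) / 2) :=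
    mul_le_mul hA hB hBnn hAnn
  have hD := sqrt_mul_neg_log_le htpos
  have heq : (Real.sqrt 2 * Real.sqrt (1 - r)) * ((Real.log 2 + -Real.log (1 - r)) / 2)
      = Real.sqrt 2 / 2 * (Real.sqrt (1 - r) * Real.log 2
        + Real.sqrt (1 - r) * (-Real.log (1 - r))) := by ring
  unfold psi
  nlinarith [step1, hD, Real.sqrt_nonneg 2, heq]

lemma arch_key (f : ℝ → ℝ)
    (hfpos : ∀ x : ℝ, 0 < x → 0 < f x) (hf0 : 0 ≤ f 0)
    {M R r₁ r₂ : ℝ} {U U' U'' : ℝ → ℝ} (hR0 : 0 ≤ R)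
    (h : IsArchSolution f R M r₁ r₂ U U' U'') :
    M ≤ (Real.sqrt (1 - r₂ ^ 2) * |U' r₂|) * (Real.sqrt (1 - r₂ ^ 2) * myAtanh r₂) := by
  obtain ⟨h1, h2, h3, h4, hU, hU', hU''c, hode, hUR, hU'R, hUr1, hUr2, hpos⟩ := h
  have hJI : Icc R r₂ ⊆ Icc r₁ r₂ := Icc_subset_Icc h2.le le_rfl
  have hposq : ∀ x ∈ Icc R r₂, 0 < 1 - x ^ 2 := by
    intro x hx
    have hxa := hx.1
    have hxb := hx.2
    nlinarith
  have hUnn : ∀ x ∈ Icc R r₂, 0 ≤ U x := by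
    intro x hx
    rcases eq_or_lt_of_le hx.2 with he | hl
    · rw [he, hUr2]
    · exact (hpos x ⟨lt_of_lt_of_le h2 hx.1, hl⟩).le
  have hfU : ∀ x ∈ Icc R r₂, 0 ≤ f (U x) := by
    intro x hx
    rcases (hUnn x hx).eq_or_lt with he | hl
    · rw [← he]; exact hf0
    · exact (hfpos _ hl).le
  have hUd : ∀ x ∈ Ioo R r₂, HasDerivAt U (U' x) x := fun x hx =>
    (hU x (hJI ⟨hx.1.le, hx.2.le⟩)).hasDerivAt (Icc_mem_nhds (h2.trans hx.1) hx.2)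
  have hU'd : ∀ x ∈ Ioo R r₂, HasDerivAt U' (U'' x) x := fun x hx =>
    (hU' x (hJI ⟨hx.1.le, hx.2.le⟩)).hasDerivAt (Icc_mem_nhds (h2.trans hx.1) hx.2)
  have hPd : ∀ x ∈ Ioo R r₂,
      HasDerivAt (fun r => (1 - r ^ 2) * U' r) (-f (U x)) x := by
    intro x hx
    have hq : HasDerivAt (fun r : ℝ => 1 - r ^ 2) (-(2 * x)) x := by
      simpa using ((hasDerivAt_pow 2 x).const_sub 1)
    have hm := hq.mul (hU'd x hx)
    have hodex := hode x (hJI ⟨hx.1.le, hx.2.le⟩)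
    exact hm.congr_deriv (by linear_combination hodex)
  have hUcont : ContinuousOn U (Icc R r₂) := fun x hx =>
    ((hU x (hJI hx)).continuousWithinAt).mono hJI
  have hU'cont : ContinuousOn U' (Icc R r₂) := fun x hx =>
    ((hU' x (hJI hx)).continuousWithinAt).mono hJI
  have hPcont : ContinuousOn (fun r => (1 - r ^ 2) * U' r) (Icc R r₂) :=
    ((continuous_const.sub (continuous_pow 2)).continuousOn).mul hU'cont
  have hanti : AntitoneOn (fun r => (1 - r ^ 2) * U' r) (Icc R r₂) := by
    apply antitoneOn_of_deriv_nonpos (convex_Icc R r₂) hPcont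
    · rw [interior_Icc]
      exact fun x hx => ((hPd x hx).differentiableAt).differentiableWithinAt
    · rw [interior_Icc]
      intro x hx
      rw [(hPd x hx).deriv]
      exact neg_nonpos.2 (hfU x ⟨hx.1.le, hx.2.le⟩)
  have hRJ : R ∈ Icc R r₂ := left_mem_Icc.2 h3.le
  have hr2J : r₂ ∈ Icc R r₂ := right_mem_Icc.2 h3.le
  have hPr2 : (1 - r₂ ^ 2) * U' r₂ ≤ 0 := by
    have := hanti hRJ hr2J h3.le
    simpa [hU'R] using this
  have hc0 : 0 ≤ -((1 - r₂ ^ 2) * U' r₂) := by linarith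
  set c : ℝ := -((1 - r₂ ^ 2) * U' r₂) with hc
  have hmono : MonotoneOn (fun r => U r + c * myAtanh r) (Icc R r₂) := by
    apply monotoneOn_of_deriv_nonneg (convex_Icc R r₂)
    · apply hUcont.add (continuousOn_const.mul ?_)
      intro x hx
      have hx1 : -1 < x := lt_of_lt_of_le (by linarith : (-1:ℝ) < R) hx.1
      have hx2' : x < 1 := lt_of_le_of_lt hx.2 h4
      exact ((myAtanh_hasDerivAt hx1 hx2').continuousAt).continuousWithinAt
    · rw [interior_Icc]
      intro x hx
      have hx1 : -1 < x := by linarith [hx.1]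
      have hx2' : x < 1 := hx.2.trans h4
      exact (((hUd x hx).add
        ((myAtanh_hasDerivAt hx1 hx2').const_mul c)).differentiableAt).differentiableWithinAt
    · rw [interior_Icc]
      intro x hx
      have hx1 : -1 < x := by linarith [hx.1]
      have hx2' : x < 1 := hx.2.trans h4
      have hd := (hUd x hx).add ((myAtanh_hasDerivAt hx1 hx2').const_mul c)
      rw [(show HasDerivAt (fun r => U r + c * myAtanh r) (U' x + c * (1 / (1 - x ^ 2))) x
        from hd).deriv]
      have hpx : (1 - r₂ ^ 2) * U' r₂ ≤ (1 - x ^ 2) * U' x :=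
        hanti ⟨hx.1.le, hx.2.le⟩ hr2J hx.2.le
      have h1x : 0 < 1 - x ^ 2 := hposq x ⟨hx.1.le, hx.2.le⟩
      have heq : U' x + c * (1 / (1 - x ^ 2)) = ((1 - x ^ 2) * U' x + c) / (1 - x ^ 2) := by
        field_simp
      rw [heq]
      apply div_nonneg _ h1x.le
      rw [hc]
      linarith
  have hmRr2 := hmono hRJ hr2J h3.le
  simp only [hUR, hUr2] at hmRr2
  have hatR : 0 ≤ myAtanh R := myAtanh_nonneg hR0 (h3.trans h4)
  have hcR : 0 ≤ c * myAtanh R := mul_nonneg hc0 hatR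
  have hMle : M ≤ c * myAtanh r₂ := by linarith
  have hs2 : 0 < 1 - r₂ ^ 2 := hposq r₂ hr2J
  have hU'neg : U' r₂ ≤ 0 := by nlinarith
  have habs : |U' r₂| = -U' r₂ := abs_of_nonpos hU'neg
  have hss : Real.sqrt (1 - r₂ ^ 2) * Real.sqrt (1 - r₂ ^ 2) = 1 - r₂ ^ 2 :=
    Real.mul_self_sqrt hs2.le
  have hrhs : (Real.sqrt (1 - r₂ ^ 2) * |U' r₂|) * (Real.sqrt (1 - r₂ ^ 2) * myAtanh r₂)
      = c * myAtanh r₂ := by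
    rw [habs, hc]
    calc (Real.sqrt (1 - r₂ ^ 2) * -U' r₂) * (Real.sqrt (1 - r₂ ^ 2) * myAtanh r₂)
        = (Real.sqrt (1 - r₂ ^ 2) * Real.sqrt (1 - r₂ ^ 2)) * (-U' r₂) * myAtanh r₂ := by
          ring
      _ = -((1 - r₂ ^ 2) * U' r₂) * myAtanh r₂ := by rw [hss]; ring
  rw [hrhs]
  exact hMle

/-- Let `f : ℝ → ℝ` be C¹ with `f(x) > 0` for all `x > 0` and `f(0) ≥ 0`,
and fix `M > 0`. Suppose that for every `R ∈ [0,1)` we are given an arch solution with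
parameters `(R,M)`, i.e. numbers `r₁(R), r₂(R)` and a function `U_R` as in the definition
of arch solution. Then `lim_{R → 1⁻} √(1 - r₂(R)²)·|U_R'(r₂(R))| = +∞`. -/
theorem stmt_4 (f : ℝ → ℝ) (hf : ContDiff ℝ 1 f)
    (hfpos : ∀ x : ℝ, 0 < x → 0 < f x) (hf0 : 0 ≤ f 0)
    (M : ℝ) (hM : 0 < M)
    (r₁ r₂ : ℝ → ℝ) (U U' U'' : ℝ → ℝ → ℝ)
    (harch : ∀ R ∈ Ico (0 : ℝ) 1, IsArchSolution f R M (r₁ R) (r₂ R) (U R) (U' R) (U'' R)) :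
    Filter.Tendsto (fun R => Real.sqrt (1 - (r₂ R) ^ 2) * |U' R (r₂ R)|)
      (nhdsWithin 1 (Iio (1 : ℝ))) Filter.atTop := by
  rw [Filter.tendsto_atTop]
  intro b
  have hC : (0:ℝ) < max b 1 := lt_of_lt_of_le one_pos (le_max_right _ _)
  have hε : 0 < M / max b 1 := div_pos hM hC
  have hev1 : Ioo (0:ℝ) 1 ∈ nhdsWithin 1 (Iio (1:ℝ)) :=
    Ioo_mem_nhdsLT_of_mem ⟨one_pos, le_refl 1⟩
  have hev2 : ∀ᶠ R in nhdsWithin 1 (Iio (1:ℝ)), psi (1 - R) < M / max b 1 :=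
    psi_tendsto.eventually_lt_const hε
  filter_upwards [hev1, hev2] with R hR1 hR2
  have hR0 : 0 ≤ R := hR1.1.le
  have harchR := harch R ⟨hR0, hR1.2⟩
  have h3 : R < r₂ R := harchR.2.2.1
  have h4 : r₂ R < 1 := harchR.2.2.2.1
  have hkey := arch_key f hfpos hf0 hR0 harchR
  have hr20 : 0 ≤ r₂ R := hR0.trans h3.le
  have hGle : Real.sqrt (1 - (r₂ R) ^ 2) * myAtanh (r₂ R) ≤ psi (1 - R) :=
    (sqrt_mul_myAtanh_le hr20 h4).trans (psi_mono (by linarith))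
  have hTnn : 0 ≤ Real.sqrt (1 - (r₂ R) ^ 2) * |U' R (r₂ R)| :=
    mul_nonneg (Real.sqrt_nonneg _) (abs_nonneg _)
  set T := Real.sqrt (1 - (r₂ R) ^ 2) * |U' R (r₂ R)| with hT
  have hstep : M ≤ T * (M / max b 1) := by
    calc M ≤ T * (Real.sqrt (1 - (r₂ R) ^ 2) * myAtanh (r₂ R)) := hkey
      _ ≤ T * (M / max b 1) :=
          mul_le_mul_of_nonneg_left (hGle.trans hR2.le) hTnn
  have h7 : M ≤ T * M / max b 1 := by rw [mul_div_assoc]; exact hstep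
  have h8 : M * max b 1 ≤ T * M := (le_div_iff₀ hC).1 h7
  have h9 : max b 1 ≤ T := by nlinarith
  exact le_trans (le_max_left b 1) h9
end

section
/- Let f : ℝ → ℝ satisfy condition (★), let R ∈ [0,1), M > 0, and let (r₁, r₂, U) be an arch solution with parameters (R,M). Let Z : [r₁,r₂] → ℝ be a C² solution of the linearized equation (1-r²)·Z''(r) - 2r·Z'(r) + f'(U(r))·Z(r) = 0 on [r₁,r₂] with Z(R) = 0 and Z'(R) > 0. Then Z(r) < 0 for all r ∈ (r₁, R) and Z(r) > 0 for all r ∈ (R, r₂). -/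
open Set

/-- Condition (★): `f` is C¹ on `[0,∞)`, `f ≥ 0` on `[0,∞)`, and `f(x) ≥ f'(x)·x` for all
`x > 0`. -/
def CondStar (f : ℝ → ℝ) : Prop :=
  ContDiffOn ℝ 1 f (Set.Ici (0 : ℝ)) ∧
  (∀ x ∈ Set.Ici (0 : ℝ), 0 ≤ f x) ∧
  (∀ x : ℝ, 0 < x → derivWithin f (Set.Ici (0 : ℝ)) x * x ≤ f x)

open Filter

lemma slope_eq_div {Z : ℝ → ℝ} {t : ℝ} (h0 : Z t = 0) (x : ℝ) :
    slope Z t x = Z x / (x - t) := by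
  simp [slope_def_field, h0]

lemma slope_pos_right' {Z : ℝ → ℝ} {t d : ℝ} (h : HasDerivAt Z d t) (hd : 0 < d)
    (h0 : Z t = 0) : ∀ᶠ x in nhdsWithin t (Ioi t), 0 < Z x := by
  have hs : Tendsto (slope Z t) (nhdsWithin t {t}ᶜ) (nhds d) :=
    hasDerivAt_iff_tendsto_slope.1 h
  have h1 : ∀ᶠ x in nhdsWithin t {t}ᶜ, 0 < slope Z t x := hs.eventually (eventually_gt_nhds hd)
  have h2 : ∀ᶠ x in nhdsWithin t (Ioi t), 0 < slope Z t x :=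
    (nhdsWithin_mono t (fun x hx => ne_of_gt hx : Ioi t ⊆ {t}ᶜ)) h1
  filter_upwards [h2, self_mem_nhdsWithin] with x hx hxt
  rw [slope_eq_div h0] at hx
  rcases div_pos_iff.1 hx with ⟨h, _⟩ | ⟨_, h⟩
  · exact h
  · have : (0:ℝ) < x - t := sub_pos.2 hxt
    linarith

lemma slope_neg_left' {Z : ℝ → ℝ} {t d : ℝ} (h : HasDerivAt Z d t) (hd : 0 < d)
    (h0 : Z t = 0) : ∀ᶠ x in nhdsWithin t (Iio t), Z x < 0 := by
  have hs : Tendsto (slope Z t) (nhdsWithin t {t}ᶜ) (nhds d) :=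
    hasDerivAt_iff_tendsto_slope.1 h
  have h1 : ∀ᶠ x in nhdsWithin t {t}ᶜ, 0 < slope Z t x := hs.eventually (eventually_gt_nhds hd)
  have h2 : ∀ᶠ x in nhdsWithin t (Iio t), 0 < slope Z t x :=
    (nhdsWithin_mono t (fun x hx => ne_of_lt hx : Iio t ⊆ {t}ᶜ)) h1
  filter_upwards [h2, self_mem_nhdsWithin] with x hx hxt
  rw [slope_eq_div h0] at hx
  rcases div_pos_iff.1 hx with ⟨_, h⟩ | ⟨h, _⟩
  · have : x - t < 0 := sub_neg.2 hxt
    linarith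
  · exact h

lemma arch_right (f : ℝ → ℝ)
    (hf : ∀ x : ℝ, 0 < x → derivWithin f (Set.Ici (0 : ℝ)) x * x ≤ f x)
    (R r₁ r₂ : ℝ) (h1 : -1 < r₁) (h2 : r₁ < R) (h3 : R < r₂) (h4 : r₂ < 1)
    (U U' U'' Z Z' Z'' : ℝ → ℝ)
    (hU : ∀ r ∈ Icc r₁ r₂, HasDerivWithinAt U (U' r) (Icc r₁ r₂) r)
    (hU' : ∀ r ∈ Icc r₁ r₂, HasDerivWithinAt U' (U'' r) (Icc r₁ r₂) r)
    (hODE : ∀ r ∈ Icc r₁ r₂, (1 - r ^ 2) * U'' r - 2 * r * U' r + f (U r) = 0)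
    (hUpos : ∀ r ∈ Ioo r₁ r₂, 0 < U r)
    (hZ : ∀ r ∈ Icc r₁ r₂, HasDerivWithinAt Z (Z' r) (Icc r₁ r₂) r)
    (hZ' : ∀ r ∈ Icc r₁ r₂, HasDerivWithinAt Z' (Z'' r) (Icc r₁ r₂) r)
    (hlin : ∀ r ∈ Icc r₁ r₂,
      (1 - r ^ 2) * Z'' r - 2 * r * Z' r + derivWithin f (Ici (0 : ℝ)) (U r) * Z r = 0)
    (hZR : Z R = 0) (hZ'R : 0 < Z' R) :
    ∀ r ∈ Ioo R r₂, 0 < Z r := by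
  set I := Icc r₁ r₂ with hI
  set W : ℝ → ℝ := fun r => (1 - r ^ 2) * (Z' r * U r - Z r * U' r) with hW
  -- derivative of W
  have hWd : ∀ r ∈ I, HasDerivWithinAt W
      (Z r * (f (U r) - derivWithin f (Ici (0 : ℝ)) (U r) * U r)) I r := by
    intro r hr
    have ha : HasDerivWithinAt (fun r : ℝ => 1 - r ^ 2) (-(2 * r)) I r := by
      simpa using ((hasDerivAt_pow 2 r).const_sub 1).hasDerivWithinAt (s := I)
    have hb : HasDerivWithinAt (fun r => Z' r * U r - Z r * U' r)
        ((Z'' r * U r + Z' r * U' r) - (Z' r * U' r + Z r * U'' r)) I r :=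
      ((hZ' r hr).mul (hU r hr)).sub ((hZ r hr).mul (hU' r hr))
    have := ha.mul hb
    refine this.congr_deriv (Eq.symm ?_)
    have e1 := hODE r hr
    have e2 := hlin r hr
    linear_combination Z r * e1 - U r * e2
  -- at interior points the derivatives are genuine
  have hderiv : ∀ r ∈ Ioo r₁ r₂, HasDerivAt W
      (Z r * (f (U r) - derivWithin f (Ici (0 : ℝ)) (U r) * U r)) r := fun r hr =>
    (hWd r (Ioo_subset_Icc_self hr)).hasDerivAt (Icc_mem_nhds hr.1 hr.2)
  have hZderiv : ∀ r ∈ Ioo r₁ r₂, HasDerivAt Z (Z' r) r := fun r hr =>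
    (hZ r (Ioo_subset_Icc_self hr)).hasDerivAt (Icc_mem_nhds hr.1 hr.2)
  have hRI : R ∈ Ioo r₁ r₂ := ⟨h2, h3⟩
  have hUc : ContinuousOn U I := fun r hr => (hU r hr).continuousWithinAt
  have hU'c : ContinuousOn U' I := fun r hr => (hU' r hr).continuousWithinAt
  have hZc' : ContinuousOn Z I := fun r hr => (hZ r hr).continuousWithinAt
  have hZ'c : ContinuousOn Z' I := fun r hr => (hZ' r hr).continuousWithinAt
  have hWcont : ContinuousOn W I :=
    ((continuous_const.sub (continuous_pow 2)).continuousOn).mul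
      ((hZ'c.mul hUc).sub (hZc'.mul hU'c))
  -- suppose not
  by_contra hcon
  push_neg at hcon
  obtain ⟨s, hs, hZs⟩ := hcon
  -- Z > 0 just right of R
  have hZposR : ∀ᶠ x in nhdsWithin R (Ioi R), 0 < Z x :=
    slope_pos_right' (hZderiv R hRI) hZ'R hZR
  have hlt : Iio s ∈ nhdsWithin R (Ioi R) :=
    nhdsWithin_le_nhds (Iio_mem_nhds hs.1)
  obtain ⟨u, hu, huset⟩ := mem_nhdsGT_iff_exists_Ioo_subset.1 (hZposR.and hlt)
  set c : ℝ := (R + u) / 2 with hc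
  have hcmem : c ∈ Ioo R u := ⟨by simp only [hc]; linarith [mem_Ioi.1 hu],
    by simp only [hc]; linarith [mem_Ioi.1 hu]⟩
  have hZc : 0 < Z c := (huset hcmem).1
  have hcs : c < s := (huset hcmem).2
  have hRc : R < c := hcmem.1
  -- first zero t of Z in [c, s]
  set K : Set ℝ := Icc c s ∩ Z ⁻¹' Iic 0 with hK
  have hZcontIoo : ContinuousOn Z (Icc c s) := fun x hx =>
    ((hZderiv x ⟨lt_of_lt_of_le (lt_trans h2 hRc) hx.1,
      lt_of_le_of_lt hx.2 hs.2⟩).continuousAt).continuousWithinAt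
  have hKclosed : IsClosed K :=
    hZcontIoo.preimage_isClosed_of_isClosed isClosed_Icc isClosed_Iic
  have hKcompact : IsCompact K :=
    isCompact_Icc.of_isClosed_subset hKclosed inter_subset_left
  have hKne : K.Nonempty := ⟨s, ⟨le_of_lt hcs, le_refl s⟩, hZs⟩
  set t : ℝ := sInf K with ht
  have htK : t ∈ K := hKcompact.sInf_mem hKne
  have hct : c ≤ t := htK.1.1
  have hts : t ≤ s := htK.1.2
  have hZt_le : Z t ≤ 0 := htK.2
  have htIoo : t ∈ Ioo r₁ r₂ := ⟨lt_of_lt_of_le (lt_trans h2 hRc) hct, lt_of_le_of_lt hts hs.2⟩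
  have hRt : R < t := lt_of_lt_of_le hRc hct
  -- Z > 0 on (R, t)
  have hZpos : ∀ x ∈ Ioo R t, 0 < Z x := by
    intro x hx
    by_cases hxc : x < c
    · exact (huset ⟨hx.1, lt_of_lt_of_le hxc (le_of_lt hcmem.2)⟩).1
    · push_neg at hxc
      by_contra hle
      push_neg at hle
      have : x ∈ K := ⟨⟨hxc, le_trans (le_of_lt hx.2) hts⟩, hle⟩
      exact absurd (csInf_le hKcompact.bddBelow this) (not_le.2 hx.2)
  -- Z t = 0 by continuity from the left
  have hZt : Z t = 0 := by
    refine le_antisymm hZt_le ?_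
    have hcont : Tendsto Z (nhdsWithin t (Iio t)) (nhds (Z t)) :=
      ((hZderiv t htIoo).continuousAt).continuousWithinAt.tendsto
    refine ge_of_tendsto hcont ?_
    filter_upwards [Ioo_mem_nhdsLT_of_mem ⟨hRt, le_refl t⟩] with x hx
    exact le_of_lt (hZpos x hx)
  -- W is monotone on [R, t]
  have hsub : Icc R t ⊆ Ioo r₁ r₂ := fun x hx =>
    ⟨lt_of_lt_of_le h2 hx.1, lt_of_le_of_lt hx.2 htIoo.2⟩
  have hmono : MonotoneOn W (Icc R t) := by
    apply monotoneOn_of_hasDerivWithinAt_nonneg (convex_Icc R t)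
      (hWcont.mono (fun x hx => Ioo_subset_Icc_self (hsub hx)))
      (f' := fun r => Z r * (f (U r) - derivWithin f (Ici (0 : ℝ)) (U r) * U r))
    · intro x hx
      rw [interior_Icc] at hx
      exact ((hderiv x (hsub (Ioo_subset_Icc_self hx))).hasDerivWithinAt)
    · intro x hx
      rw [interior_Icc] at hx
      have hxI : x ∈ Ioo r₁ r₂ := hsub (Ioo_subset_Icc_self hx)
      have hUx : 0 < U x := hUpos x hxI
      have : derivWithin f (Ici (0 : ℝ)) (U x) * U x ≤ f (U x) := hf (U x) hUx
      exact mul_nonneg (le_of_lt (hZpos x hx)) (by linarith)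
  have hWR_le : W R ≤ W t := hmono ⟨le_refl R, le_of_lt hRt⟩ ⟨le_of_lt hRt, le_refl t⟩ (le_of_lt hRt)
  have hUR : 0 < U R := hUpos R hRI
  have hR1 : 0 < 1 - R ^ 2 := by nlinarith [h1, h2, h3, h4]
  have hWR : 0 < W R := by
    show 0 < (1 - R ^ 2) * (Z' R * U R - Z R * U' R)
    rw [hZR, zero_mul, sub_zero]
    exact mul_pos hR1 (mul_pos hZ'R hUR)
  have hUt : 0 < U t := hUpos t htIoo
  have ht1 : 0 < 1 - t ^ 2 := by nlinarith [htIoo.1, htIoo.2, h1, h4]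
  have hZ't : 0 < Z' t := by
    have hWt : 0 < (1 - t ^ 2) * (Z' t * U t - Z t * U' t) := lt_of_lt_of_le hWR hWR_le
    rw [hZt, zero_mul, sub_zero] at hWt
    nlinarith [mul_pos ht1 hUt]
  -- contradiction: Z < 0 just left of t, but Z > 0 on (R, t)
  have hneg : ∀ᶠ x in nhdsWithin t (Iio t), Z x < 0 :=
    slope_neg_left' (hZderiv t htIoo) hZ't hZt
  have hmem : Ioo R t ∈ nhdsWithin t (Iio t) := Ioo_mem_nhdsLT_of_mem ⟨hRt, le_refl t⟩
  obtain ⟨x, hx1, hx2⟩ := (hneg.and (eventually_of_mem hmem (fun x hx => hx))).exists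
  exact absurd (hZpos x hx2) (not_lt.2 (le_of_lt hx1))

/-- Let `f` satisfy condition (★), let `R ∈ [0,1)`, `M > 0`, and let
`(r₁, r₂, U)` be an arch solution with parameters `(R,M)`. Let `Z : [r₁,r₂] → ℝ` be a C²
solution of the linearized equation `(1-r²)·Z''(r) - 2r·Z'(r) + f'(U(r))·Z(r) = 0` on
`[r₁,r₂]` with `Z(R) = 0` and `Z'(R) > 0`. Then `Z(r) < 0` for all `r ∈ (r₁, R)` and
`Z(r) > 0` for all `r ∈ (R, r₂)`. -/
theorem stmt_5 (f : ℝ → ℝ) (hstar : CondStar f)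
    (R M : ℝ) (hR : R ∈ Ico (0 : ℝ) 1) (hM : 0 < M)
    (r₁ r₂ : ℝ) (U U' U'' : ℝ → ℝ)
    (harch : IsArchSolution f R M r₁ r₂ U U' U'')
    (Z Z' Z'' : ℝ → ℝ)
    (hZ : ∀ r ∈ Icc r₁ r₂, HasDerivWithinAt Z (Z' r) (Icc r₁ r₂) r)
    (hZ' : ∀ r ∈ Icc r₁ r₂, HasDerivWithinAt Z' (Z'' r) (Icc r₁ r₂) r)
    (hZ''cont : ContinuousOn Z'' (Icc r₁ r₂))
    (hlin : ∀ r ∈ Icc r₁ r₂,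
      (1 - r ^ 2) * Z'' r - 2 * r * Z' r + derivWithin f (Ici (0 : ℝ)) (U r) * Z r = 0)
    (hZR : Z R = 0) (hZ'R : 0 < Z' R) :
    (∀ r ∈ Ioo r₁ R, Z r < 0) ∧ (∀ r ∈ Ioo R r₂, 0 < Z r) := by
  obtain ⟨h1, h2, h3, h4, hU, hU', hU''c, hODE, hUR, hU'R, hUr1, hUr2, hUpos⟩ := harch
  have hf := hstar.2.2
  constructor
  · -- left side, by reflection
    have hmaps : MapsTo (fun x : ℝ => -x) (Icc (-r₂) (-r₁)) (Icc r₁ r₂) := by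
      intro x hx
      simp only [mem_Icc] at hx ⊢
      constructor <;> linarith
    have hneg : ∀ r : ℝ, HasDerivWithinAt (fun x : ℝ => -x) (-1) (Icc (-r₂) (-r₁)) r :=
      fun r => (hasDerivAt_neg r).hasDerivWithinAt
    have key := arch_right f hf (-R) (-r₂) (-r₁)
      (by linarith) (by linarith) (by linarith) (by linarith)
      (fun r => U (-r)) (fun r => -U' (-r)) (fun r => U'' (-r))
      (fun r => -Z (-r)) (fun r => Z' (-r)) (fun r => -Z'' (-r))
      ?_ ?_ ?_ ?_ ?_ ?_ ?_ ?_ ?_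
    · intro r hr
      have h : -r ∈ Ioo (-R) (-r₁) := by
        simp only [mem_Ioo] at hr ⊢; constructor <;> linarith [hr.1, hr.2]
      have := key (-r) h
      simpa using this
    · intro r hr
      have h := (hU (-r) (hmaps hr)).comp r (hneg r) hmaps
      exact h.congr_deriv (by ring)
    · intro r hr
      have h := ((hU' (-r) (hmaps hr)).comp r (hneg r) hmaps).neg
      exact h.congr_deriv (by ring)
    · intro r hr
      have := hODE (-r) (hmaps hr)
      linear_combination this
    · intro r hr
      apply hUpos
      simp only [mem_Ioo] at hr ⊢; constructor <;> linarith [hr.1, hr.2]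
    · intro r hr
      have h := ((hZ (-r) (hmaps hr)).comp r (hneg r) hmaps).neg
      exact h.congr_deriv (by ring)
    · intro r hr
      have h := (hZ' (-r) (hmaps hr)).comp r (hneg r) hmaps
      exact h.congr_deriv (by ring)
    · intro r hr
      have := hlin (-r) (hmaps hr)
      linear_combination -this
    · simpa using hZR
    · simpa using hZ'R
  · exact arch_right f hf R r₁ r₂ h1 h2 h3 h4 U U' U'' Z Z' Z''
      hU hU' hODE hUpos hZ hZ' hlin hZR hZ'R
end

section
/- Let f : ℝ → ℝ satisfy condition (★) and f(x) > 0 for all x > 0, and fix M > 0. Let R, R' ∈ [0,1) with R < R', let (r₁, r₂, U) be an arch solution with parameters (R,M) and (r₁', r₂', U') an arch solution with parameters (R',M). Then r₁ ≤ r₁' and r₂ ≤ r₂'. -/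
open Set

/-- From condition (★), the map `x ↦ f x / x` is antitone on `(0,∞)`; in product form:
if `0 < x ≤ y` then `f y * x ≤ f x * y`. -/
lemma condStar_ratio (f : ℝ → ℝ) (hstar : CondStar f) :
    ∀ x y : ℝ, 0 < x → x ≤ y → f y * x ≤ f x * y := by
  obtain ⟨hf1, hf0, hf2⟩ := hstar
  have hd : ∀ x : ℝ, 0 < x → HasDerivAt f (derivWithin f (Set.Ici 0) x) x := by
    intro x hx
    exact ((hf1.differentiableOn one_ne_zero x (le_of_lt hx)).hasDerivWithinAt).hasDerivAt
      (Ici_mem_nhds hx)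
  have hg : AntitoneOn (fun x => f x / x) (Ioi (0 : ℝ)) := by
    apply antitoneOn_of_deriv_nonpos (convex_Ioi 0)
    · exact ((hf1.continuousOn).mono Ioi_subset_Ici_self).div continuousOn_id
        (fun x hx => ne_of_gt hx)
    · rw [interior_Ioi]
      intro x hx
      exact (((hd x hx).div (hasDerivAt_id x) (ne_of_gt hx))).differentiableAt.differentiableWithinAt
    · rw [interior_Ioi]
      intro x hx
      have hD : HasDerivAt (fun y => f y / y)
          ((derivWithin f (Set.Ici 0) x * x - f x * 1) / x ^ 2) x :=
        (hd x hx).div (hasDerivAt_id x) (ne_of_gt hx)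
      rw [hD.deriv]
      apply div_nonpos_of_nonpos_of_nonneg
      · nlinarith [hf2 x hx]
      · positivity
  intro x y hx hxy
  have hy : 0 < y := lt_of_lt_of_le hx hxy
  have := hg (mem_Ioi.mpr hx) (mem_Ioi.mpr hy) hxy
  -- f y / y ≤ f x / x
  rw [div_le_div_iff₀ hy hx] at this
  linarith

/-- Reflection of an arch solution. -/
lemma arch_reflect (f : ℝ → ℝ) (R M r₁ r₂ : ℝ) (U U' U'' : ℝ → ℝ)
    (h : IsArchSolution f R M r₁ r₂ U U' U'') :
    IsArchSolution f (-R) M (-r₂) (-r₁) (fun r => U (-r)) (fun r => -U' (-r))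
      (fun r => U'' (-r)) := by
  obtain ⟨ha1, ha2, ha3, ha4, hU1, hU2, hU3, hODE, hUR, hU'R, hUr₁, hUr₂, hUpos⟩ := h
  have hmem : ∀ r ∈ Icc (-r₂) (-r₁), -r ∈ Icc r₁ r₂ := by
    intro r hr
    exact ⟨by linarith [hr.2], by linarith [hr.1]⟩
  have hmaps : MapsTo (fun r : ℝ => -r) (Icc (-r₂) (-r₁)) (Icc r₁ r₂) := fun r hr => hmem r hr
  refine ⟨by linarith, by linarith, by linarith, by linarith, ?_, ?_, ?_, ?_, ?_, ?_, ?_, ?_, ?_⟩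
  · intro r hr
    have hneg : HasDerivWithinAt (fun x : ℝ => -x) (-1) (Icc (-r₂) (-r₁)) r :=
      (hasDerivAt_neg r).hasDerivWithinAt
    have := HasDerivWithinAt.scomp r (hU1 (-r) (hmem r hr)) hneg hmaps
    simpa [Function.comp_def] using this
  · intro r hr
    have hneg : HasDerivWithinAt (fun x : ℝ => -x) (-1) (Icc (-r₂) (-r₁)) r :=
      (hasDerivAt_neg r).hasDerivWithinAt
    have := (HasDerivWithinAt.scomp r (hU2 (-r) (hmem r hr)) hneg hmaps).neg
    simpa [Function.comp_def, Pi.neg_def] using this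
  · exact ContinuousOn.comp hU3 (continuous_neg.continuousOn) hmaps
  · intro r hr
    have h0 := hODE (-r) (hmem r hr)
    have h2 : (-r) ^ 2 = r ^ 2 := by ring
    rw [h2] at h0
    show (1 - r ^ 2) * U'' (-r) - 2 * r * -U' (-r) + f (U (-r)) = 0
    linarith
  · simp [hUR]
  · simp [hU'R]
  · simp [hUr₂]
  · simp [hUr₁]
  · intro r hr
    exact hUpos (-r) ⟨by linarith [hr.2], by linarith [hr.1]⟩

/-- Key comparison lemma: for arches of the same height `M` with apexes `R < R'`, the right
endpoint of the first is at most the right endpoint of the second. -/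
lemma arch_right_s8 (f : ℝ → ℝ) (hstar : CondStar f) (hfpos : ∀ x : ℝ, 0 < x → 0 < f x)
    (M : ℝ) (hM : 0 < M) (R R' : ℝ) (hRR' : R < R')
    (r₁ r₂ : ℝ) (U U' U'' : ℝ → ℝ) (harch : IsArchSolution f R M r₁ r₂ U U' U'')
    (s₁ s₂ : ℝ) (V V' V'' : ℝ → ℝ) (harch' : IsArchSolution f R' M s₁ s₂ V V' V'') :
    r₂ ≤ s₂ := by
  obtain ⟨ha1, ha2, ha3, ha4, hU1, hU2, hU3, hODEU, hUR, hU'R, hUr₁, hUr₂, hUpos⟩ := harch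
  obtain ⟨hb1, hb2, hb3, hb4, hV1, hV2, hV3, hODEV, hVR, hV'R, hVs₁, hVs₂, hVpos⟩ := harch'
  by_contra hcon
  push_neg at hcon
  -- hcon : s₂ < r₂
  have hR'r2 : R' < r₂ := lt_trans hb3 hcon
  have hr1R' : r₁ < R' := lt_trans ha2 hRR'
  -- continuity and classical derivatives
  have hUcont : ContinuousOn U (Icc r₁ r₂) := fun r hr => (hU1 r hr).continuousWithinAt
  have hU'cont : ContinuousOn U' (Icc r₁ r₂) := fun r hr => (hU2 r hr).continuousWithinAt
  have hVcont : ContinuousOn V (Icc s₁ s₂) := fun r hr => (hV1 r hr).continuousWithinAt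
  have hV'cont : ContinuousOn V' (Icc s₁ s₂) := fun r hr => (hV2 r hr).continuousWithinAt
  have hUd : ∀ r ∈ Ioo r₁ r₂, HasDerivAt U (U' r) r := fun r hr =>
    (hU1 r (Ioo_subset_Icc_self hr)).hasDerivAt (Icc_mem_nhds hr.1 hr.2)
  have hU'd : ∀ r ∈ Ioo r₁ r₂, HasDerivAt U' (U'' r) r := fun r hr =>
    (hU2 r (Ioo_subset_Icc_self hr)).hasDerivAt (Icc_mem_nhds hr.1 hr.2)
  have hVd : ∀ r ∈ Ioo s₁ s₂, HasDerivAt V (V' r) r := fun r hr =>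
    (hV1 r (Ioo_subset_Icc_self hr)).hasDerivAt (Icc_mem_nhds hr.1 hr.2)
  have hV'd : ∀ r ∈ Ioo s₁ s₂, HasDerivAt V' (V'' r) r := fun r hr =>
    (hV2 r (Ioo_subset_Icc_self hr)).hasDerivAt (Icc_mem_nhds hr.1 hr.2)
  have hsq : ∀ r : ℝ, r₁ ≤ r → r ≤ r₂ → 0 < 1 - r ^ 2 := by
    intro r h h'
    nlinarith [mul_pos (by linarith : (0:ℝ) < 1 - r) (by linarith : (0:ℝ) < 1 + r)]
  -- P = (1-r²)U' is strictly decreasing on [r₁,r₂]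
  set P : ℝ → ℝ := fun r => (1 - r ^ 2) * U' r with hPdef
  have hPanti : StrictAntiOn P (Icc r₁ r₂) := by
    apply strictAntiOn_of_deriv_neg (convex_Icc r₁ r₂)
    · exact ((continuous_const.sub (continuous_pow 2)).continuousOn).mul hU'cont
    · intro r hr
      rw [interior_Icc] at hr
      have hq : HasDerivAt (fun x : ℝ => 1 - x ^ 2) (-(2 * r)) r := by
        simpa using ((hasDerivAt_pow 2 r).const_sub 1)
      have hP : HasDerivAt P (-(2 * r) * U' r + (1 - r ^ 2) * U'' r) r := hq.mul (hU'd r hr)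
      have hval : -(2 * r) * U' r + (1 - r ^ 2) * U'' r = -f (U r) := by
        have := hODEU r (Ioo_subset_Icc_self hr); linarith
      rw [hP.deriv, hval]
      have := hfpos (U r) (hUpos r hr)
      linarith
  have hRmem : R ∈ Icc r₁ r₂ := ⟨le_of_lt ha2, le_of_lt ha3⟩
  have hPR : P R = 0 := by simp [hPdef, hU'R]
  have hU'neg : ∀ r ∈ Icc r₁ r₂, R < r → U' r < 0 := by
    intro r hr hRr
    have h1 : P r < 0 := by
      have := hPanti hRmem hr hRr
      rwa [hPR] at this
    rcases mul_neg_iff.mp h1 with ⟨h2, h3⟩ | ⟨h2, h3⟩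
    · exact h3
    · linarith [hsq r hr.1 hr.2]
  -- U is strictly decreasing on [R, r₂], hence U R' < M
  have hUanti : StrictAntiOn U (Icc R r₂) := by
    apply strictAntiOn_of_deriv_neg (convex_Icc R r₂)
    · exact hUcont.mono (Icc_subset_Icc (le_of_lt ha2) le_rfl)
    · intro r hr
      rw [interior_Icc] at hr
      have hrm : r ∈ Ioo r₁ r₂ := ⟨lt_trans ha2 hr.1, hr.2⟩
      rw [(hUd r hrm).deriv]
      exact hU'neg r (Ioo_subset_Icc_self hrm) hr.1
  have hUR' : U R' < M := by
    have := hUanti ⟨le_rfl, le_of_lt ha3⟩ ⟨le_of_lt hRR', le_of_lt hR'r2⟩ hRR'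
    rwa [hUR] at this
  -- the difference h = U - V on [R', s₂]
  set g : ℝ → ℝ := fun r => U r - V r with hgdef
  have hIccsub1 : Icc R' s₂ ⊆ Icc r₁ r₂ := Icc_subset_Icc (le_of_lt hr1R') (le_of_lt hcon)
  have hIccsub2 : Icc R' s₂ ⊆ Icc s₁ s₂ := Icc_subset_Icc (le_of_lt hb2) le_rfl
  have hgcont : ContinuousOn g (Icc R' s₂) := (hUcont.mono hIccsub1).sub (hVcont.mono hIccsub2)
  have hgR' : g R' < 0 := by
    simp only [hgdef, hVR]
    linarith
  have hgs₂ : 0 < g s₂ := by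
    have : 0 < U s₂ := hUpos s₂ ⟨lt_trans hr1R' hb3, hcon⟩
    simp only [hgdef, hVs₂]
    linarith
  -- first crossing σ
  set S : Set ℝ := Icc R' s₂ ∩ g ⁻¹' (Ici 0) with hSdef
  have hSclosed : IsClosed S := hgcont.preimage_isClosed_of_isClosed isClosed_Icc isClosed_Ici
  have hScomp : IsCompact S := IsCompact.of_isClosed_subset isCompact_Icc hSclosed
    inter_subset_left
  have hSne : S.Nonempty := ⟨s₂, ⟨⟨le_of_lt hb3, le_rfl⟩, le_of_lt hgs₂⟩⟩
  set σ := sInf S with hσdef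
  have hσS : σ ∈ S := hScomp.sInf_mem hSne
  have hσIcc : σ ∈ Icc R' s₂ := hσS.1
  have hσg : 0 ≤ g σ := hσS.2
  have hleft : ∀ r ∈ Ico R' σ, g r < 0 := by
    intro r hr
    by_contra hge
    push_neg at hge
    have : σ ≤ r := csInf_le hScomp.bddBelow ⟨⟨hr.1, le_trans (le_of_lt hr.2) hσIcc.2⟩, hge⟩
    exact absurd hr.2 (not_lt.mpr this)
  have hR'σ : R' < σ := by
    rcases lt_or_eq_of_le hσIcc.1 with h' | h'
    · exact h'
    · exfalso; rw [← h'] at hσg; linarith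
  have hneBot : (nhdsWithin σ (Ico R' σ)).NeBot := by
    apply mem_closure_iff_nhdsWithin_neBot.mp
    rw [closure_Ico (ne_of_lt hR'σ)]
    exact ⟨le_of_lt hR'σ, le_rfl⟩
  have hσ0 : g σ = 0 := by
    have htend : Filter.Tendsto g (nhdsWithin σ (Ico R' σ)) (nhds (g σ)) :=
      (hgcont σ hσIcc).mono (fun x hx => ⟨hx.1, le_trans (le_of_lt hx.2) hσIcc.2⟩)
    have hle : g σ ≤ 0 := le_of_tendsto htend
      (Filter.eventually_of_mem self_mem_nhdsWithin (fun r hr => le_of_lt (hleft r hr)))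
    linarith
  have hσs₂ : σ < s₂ := by
    rcases lt_or_eq_of_le hσIcc.2 with h' | h'
    · exact h'
    · exfalso; rw [h'] at hσ0; linarith
  have hσIoo : σ ∈ Ioo r₁ r₂ := ⟨lt_trans hr1R' hR'σ, lt_trans hσs₂ hcon⟩
  have hσIooV : σ ∈ Ioo s₁ s₂ := ⟨lt_trans hb2 hR'σ, hσs₂⟩
  have hUσ : 0 < U σ := hUpos σ hσIoo
  have hUVσ : V σ = U σ := by
    simp only [hgdef] at hσ0
    linarith
  -- the Wronskian W
  set W : ℝ → ℝ := fun r => (1 - r ^ 2) * (U' r * V r - U r * V' r) with hWdef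
  have hsub1 : Icc R' σ ⊆ Icc r₁ r₂ := Icc_subset_Icc (le_of_lt hr1R') (le_of_lt hσIoo.2)
  have hsub2 : Icc R' σ ⊆ Icc s₁ s₂ := Icc_subset_Icc (le_of_lt hb2) (le_of_lt hσs₂)
  have hWD : ∀ r ∈ Ioo R' σ, HasDerivAt W (f (V r) * U r - f (U r) * V r) r := by
    intro r hr
    have hrU : r ∈ Ioo r₁ r₂ := ⟨lt_trans hr1R' hr.1, lt_trans hr.2 hσIoo.2⟩
    have hrV : r ∈ Ioo s₁ s₂ := ⟨lt_trans hb2 hr.1, lt_trans hr.2 hσs₂⟩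
    have hq : HasDerivAt (fun x : ℝ => 1 - x ^ 2) (-(2 * r)) r := by
      simpa using ((hasDerivAt_pow 2 r).const_sub 1)
    have hA := (hU'd r hrU).mul (hVd r hrV)
    have hB := (hUd r hrU).mul (hV'd r hrV)
    have hC := hA.sub hB
    have h0 := hq.mul hC
    refine h0.congr_deriv ?_
    have e1 := hODEU r (Ioo_subset_Icc_self hrU)
    have e2 := hODEV r (Ioo_subset_Icc_self hrV)
    simp only [Pi.sub_apply, Pi.mul_apply]
    linear_combination V r * e1 - U r * e2
  have hratio := condStar_ratio f hstar
  have hWanti : AntitoneOn W (Icc R' σ) := by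
    apply antitoneOn_of_deriv_nonpos (convex_Icc R' σ)
    · apply ContinuousOn.mul
      · exact (continuous_const.sub (continuous_pow 2)).continuousOn
      · exact ((hU'cont.mono hsub1).mul (hVcont.mono hsub2)).sub
          ((hUcont.mono hsub1).mul (hV'cont.mono hsub2))
    · rw [interior_Icc]
      intro r hr
      exact (hWD r hr).differentiableAt.differentiableWithinAt
    · rw [interior_Icc]
      intro r hr
      rw [(hWD r hr).deriv]
      have hrU : r ∈ Ioo r₁ r₂ := ⟨lt_trans hr1R' hr.1, lt_trans hr.2 hσIoo.2⟩
      have hUpos' : 0 < U r := hUpos r hrU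
      have hUV : U r ≤ V r := by
        have := hleft r ⟨le_of_lt hr.1, hr.2⟩
        simp only [hgdef] at this
        linarith
      have := hratio (U r) (V r) hUpos' hUV
      linarith
  have hWR' : W R' < 0 := by
    have hU'R' : U' R' < 0 := hU'neg R' ⟨le_of_lt hr1R', le_of_lt hR'r2⟩ hRR'
    have hsqR' : 0 < 1 - R' ^ 2 := hsq R' (le_of_lt hr1R') (le_of_lt hR'r2)
    simp only [hWdef, hVR, hV'R, mul_zero, sub_zero]
    exact mul_neg_of_pos_of_neg hsqR' (mul_neg_of_neg_of_pos hU'R' hM)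
  have hWmono : W σ ≤ W R' :=
    hWanti ⟨le_rfl, le_of_lt hR'σ⟩ ⟨le_of_lt hR'σ, le_rfl⟩ (le_of_lt hR'σ)
  -- the slope of g at σ from the left is nonnegative
  have hgd : HasDerivAt g (U' σ - V' σ) σ := (hUd σ hσIoo).sub (hVd σ hσIooV)
  have hslope : 0 ≤ U' σ - V' σ := by
    have ht : Filter.Tendsto (slope g σ) (nhdsWithin σ (Ico R' σ)) (nhds (U' σ - V' σ)) :=
      (hasDerivAt_iff_tendsto_slope.mp hgd).mono_left
        (nhdsWithin_mono σ (fun x hx => Set.mem_compl_singleton_iff.mpr (ne_of_lt hx.2)))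
    refine ge_of_tendsto ht (Filter.eventually_of_mem self_mem_nhdsWithin (fun r hr => ?_))
    rw [slope_def_field]
    have h1 : g r < 0 := hleft r hr
    have h2 : r - σ < 0 := sub_neg.mpr hr.2
    have h3 : g r - g σ = g r := by rw [hσ0]; ring
    rw [h3]
    exact le_of_lt (div_pos_iff.mpr (Or.inr ⟨h1, h2⟩))
  have hWσ : 0 ≤ W σ := by
    have hsqσ : 0 < 1 - σ ^ 2 := hsq σ (le_of_lt hσIoo.1) (le_of_lt hσIoo.2)
    have heq : W σ = ((1 - σ ^ 2) * U σ) * (U' σ - V' σ) := by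
      simp only [hWdef, hUVσ]; ring
    rw [heq]
    exact mul_nonneg (mul_nonneg (le_of_lt hsqσ) (le_of_lt hUσ)) hslope
  linarith

/-- Let `f` satisfy condition (★) and `f(x) > 0` for all `x > 0`, and fix
`M > 0`. Let `R, R' ∈ [0,1)` with `R < R'`, let `(r₁, r₂, U)` be an arch solution with
parameters `(R,M)` and `(r₁', r₂', V)` an arch solution with parameters `(R',M)`. Then
`r₁ ≤ r₁'` and `r₂ ≤ r₂'`. -/
theorem stmt_8 (f : ℝ → ℝ) (hstar : CondStar f) (hfpos : ∀ x : ℝ, 0 < x → 0 < f x)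
    (M : ℝ) (hM : 0 < M)
    (R R' : ℝ) (hR : R ∈ Ico (0 : ℝ) 1) (hR' : R' ∈ Ico (0 : ℝ) 1) (hRR' : R < R')
    (r₁ r₂ : ℝ) (U U' U'' : ℝ → ℝ)
    (harch : IsArchSolution f R M r₁ r₂ U U' U'')
    (s₁ s₂ : ℝ) (V V' V'' : ℝ → ℝ)
    (harch' : IsArchSolution f R' M s₁ s₂ V V' V'') :
    r₁ ≤ s₁ ∧ r₂ ≤ s₂ := by
  constructor
  · have h1 := arch_reflect f R M r₁ r₂ U U' U'' harch
    have h2 := arch_reflect f R' M s₁ s₂ V V' V'' harch'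
    have := arch_right_s8 f hstar hfpos M hM (-R') (-R) (by linarith) _ _ _ _ _ h2 _ _ _ _ _ h1
    linarith
  · exact arch_right_s8 f hstar hfpos M hM R R' hRR' r₁ r₂ U U' U'' harch s₁ s₂ V V' V'' harch'
end

section
/- Let f : ℝ → ℝ be continuous, let R ∈ (-1,1) and M > 0 with f(M) > 0, and let U be a C² solution of the model ODE (1-r²)·U''(r) - 2r·U'(r) + f(U(r)) = 0 on an open interval I ⊆ (-1,1) containing R, with U(R) = M and U'(R) = 0. Then the limit as r → R, r ≠ R, of (1-r²)·U'(r)² / (M - U(r)) exists and equals 2·f(M). -/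
open Set

/-- Let `f : ℝ → ℝ` be continuous, let `R ∈ (-1,1)` and `M > 0` with
`f(M) > 0`, and let `U` be a C² solution of the model ODE
`(1-r²)·U''(r) - 2r·U'(r) + f(U(r)) = 0` on an open interval `I = (a,b) ⊆ (-1,1)` containing
`R`, with `U(R) = M` and `U'(R) = 0`. Then the limit as `r → R`, `r ≠ R`, of
`(1-r²)·U'(r)² / (M - U(r))` exists and equals `2·f(M)`. -/
theorem stmt_11 (f : ℝ → ℝ) (hf : Continuous f)
    (R M : ℝ) (hR : R ∈ Ioo (-1 : ℝ) 1) (hM : 0 < M) (hfM : 0 < f M)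
    (a b : ℝ) (hab : Ioo a b ⊆ Ioo (-1 : ℝ) 1) (hRab : R ∈ Ioo a b)
    (U U' U'' : ℝ → ℝ)
    (hU : ∀ r ∈ Ioo a b, HasDerivAt U (U' r) r)
    (hU' : ∀ r ∈ Ioo a b, HasDerivAt U' (U'' r) r)
    (hU''cont : ContinuousOn U'' (Ioo a b))
    (hODE : ∀ r ∈ Ioo a b, (1 - r ^ 2) * U'' r - 2 * r * U' r + f (U r) = 0)
    (hUR : U R = M) (hU'R : U' R = 0) :
    Filter.Tendsto (fun r => (1 - r ^ 2) * (U' r) ^ 2 / (M - U r))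
      (nhdsWithin R (Ioo a b \ {R})) (nhds (2 * f M)) := by
  have h1R : (0:ℝ) < 1 - R ^ 2 := by nlinarith [hR.1, hR.2]
  have hodeR := hODE R hRab
  rw [hUR, hU'R] at hodeR
  have hU''R : U'' R < 0 := by nlinarith
  -- find an open interval around R inside Ioo a b where U'' < 0
  have hopen : IsOpen (Ioo a b) := isOpen_Ioo
  have hcontR : ContinuousAt U'' R := hU''cont.continuousAt (hopen.mem_nhds hRab)
  have hs : {x | U'' x < 0} ∈ nhds R := hcontR.preimage_mem_nhds (Iio_mem_nhds hU''R)
  obtain ⟨c, d, hcd, hsub⟩ := mem_nhds_iff_exists_Ioo_subset.mp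
    (Filter.inter_mem hs (hopen.mem_nhds hRab))
  have hcdab : Ioo c d ⊆ Ioo a b := fun x hx => (hsub hx).2
  -- U' is strictly antitone on Ioo c d
  have hanti : StrictAntiOn U' (Ioo c d) := by
    apply strictAntiOn_of_deriv_neg (convex_Ioo c d)
    · exact fun x hx => ((hU' x (hcdab hx)).continuousAt).continuousWithinAt
    · intro x hx
      rw [interior_Ioo] at hx
      rw [(hU' x (hcdab hx)).deriv]
      exact (hsub hx).1
  have hne : ∀ x ∈ Ioo c d, x ≠ R → U' x ≠ 0 := by
    intro x hx hxR
    rcases lt_or_gt_of_ne hxR with h | h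
    · have := hanti hx hcd h
      rw [hU'R] at this; exact ne_of_gt this
    · have := hanti hcd hx h
      rw [hU'R] at this; exact ne_of_lt this
  -- derivatives of numerator and denominator
  set F' : ℝ → ℝ := fun x => -(2*x)*(U' x)^2 + (1-x^2)*(2*U' x*U'' x) with hF'def
  have hF : ∀ x ∈ Ioo a b, HasDerivAt (fun r => (1-r^2)*(U' r)^2) (F' x) x := by
    intro x hx
    have h1 : HasDerivAt (fun r : ℝ => 1 - r^2) (-(2*x)) x := by
      simpa using (hasDerivAt_pow 2 x).const_sub 1
    have h2 : HasDerivAt (fun r => (U' r)^2) (2*U' x*U'' x) x := by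
      simpa [mul_comm] using (hU' x hx).fun_pow 2
    have h3 := h1.fun_mul h2
    convert h3 using 1
    try (rw [hF'def]; ring)
  have hG : ∀ x ∈ Ioo a b, HasDerivAt (fun r => M - U r) (-(U' x)) x := fun x hx =>
    (hU x hx).const_sub M
  -- eventual facts on 𝓝[≠] R
  have hmemcd : Ioo c d ∈ nhdsWithin R {R}ᶜ :=
    nhdsWithin_le_nhds (isOpen_Ioo.mem_nhds hcd)
  have hmemne : {R}ᶜ ∈ nhdsWithin R {R}ᶜ := self_mem_nhdsWithin
  have hff' : ∀ᶠ x in nhdsWithin R {R}ᶜ, HasDerivAt (fun r => (1-r^2)*(U' r)^2) (F' x) x := by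
    filter_upwards [hmemcd] with x hx using hF x (hcdab hx)
  have hgg' : ∀ᶠ x in nhdsWithin R {R}ᶜ, HasDerivAt (fun r => M - U r) (-(U' x)) x := by
    filter_upwards [hmemcd] with x hx using hG x (hcdab hx)
  have hg' : ∀ᶠ x in nhdsWithin R {R}ᶜ, -(U' x) ≠ 0 := by
    filter_upwards [hmemcd, hmemne] with x hx hxR
    exact neg_ne_zero.mpr (hne x hx hxR)
  -- numerator and denominator tend to 0
  have hUcont : ContinuousAt U R := (hU R hRab).continuousAt
  have hU'cont : ContinuousAt U' R := (hU' R hRab).continuousAt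
  have hfa : Filter.Tendsto (fun r => (1-r^2)*(U' r)^2) (nhdsWithin R {R}ᶜ) (nhds 0) := by
    have : ContinuousAt (fun r => (1-r^2)*(U' r)^2) R := by
      exact ((continuousAt_const.sub (continuousAt_pow _ _)).mul (hU'cont.pow 2))
    have h0 : (1-R^2)*(U' R)^2 = 0 := by rw [hU'R]; ring
    exact h0 ▸ this.continuousWithinAt.tendsto
  have hga : Filter.Tendsto (fun r => M - U r) (nhdsWithin R {R}ᶜ) (nhds 0) := by
    have : ContinuousAt (fun r => M - U r) R := continuousAt_const.sub hUcont
    have h0 : M - U R = 0 := by rw [hUR]; ring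
    exact h0 ▸ this.continuousWithinAt.tendsto
  -- the ratio of derivatives tends to 2 f M
  have hdiv : Filter.Tendsto (fun x => F' x / (-(U' x))) (nhdsWithin R {R}ᶜ)
      (nhds (2 * f M)) := by
    have hcont : ContinuousAt (fun x => -(2*x)*U' x + 2*f (U x)) R :=
      ((continuousAt_const.mul continuousAt_id).neg.mul hU'cont).add
        (continuousAt_const.mul ((hf.continuousAt).comp hUcont))
    have hval : -(2*R)*U' R + 2*f (U R) = 2 * f M := by rw [hU'R, hUR]; ring
    have hlim : Filter.Tendsto (fun x => -(2*x)*U' x + 2*f (U x)) (nhdsWithin R {R}ᶜ)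
        (nhds (2 * f M)) := hval ▸ hcont.continuousWithinAt.tendsto
    refine hlim.congr' ?_
    filter_upwards [hmemcd, hmemne] with x hx hxR
    have hux : U' x ≠ 0 := hne x hx hxR
    have hode := hODE x (hcdab hx)
    rw [hF'def]
    rw [eq_comm, div_eq_iff (neg_ne_zero.mpr hux)]
    linear_combination (2 * U' x) * hode
  have main := HasDerivAt.lhopital_zero_nhdsNE hff' hgg' hg' hfa hga hdiv
  exact main.mono_left (nhdsWithin_mono R (fun x hx => hx.2))
end

section
/- Let f : ℝ → ℝ be C², let R ∈ (-1,1) and M > 0, and let U be a C² solution of the model ODE (1-r²)·U''(r) - 2r·U'(r) + f(U(r)) = 0 on an open interval I ⊆ (-1,1) containing R, with U(R) = M and U'(R) = 0. Then, as r → R, M - U(r) = (f(M)/(2(1-R²)))·(r-R)² + (2R·f(M)/(3(1-R²)²))·(r-R)³ + O((r-R)⁴). -/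
open Set Asymptotics Metric

lemma deriv_isBigO_step {g g' : ℝ → ℝ} {R : ℝ} {k : ℕ}
    (hg : ∀ᶠ r in nhds R, HasDerivAt g (g' r) r) (hgR : g R = 0)
    (h : g' =O[nhds R] fun r => (r - R) ^ k) :
    g =O[nhds R] fun r => (r - R) ^ (k + 1) := by
  obtain ⟨C, hC0, hC⟩ := h.exists_nonneg
  rw [isBigOWith_iff] at hC
  have hcomb := hg.and hC
  rw [Metric.eventually_nhds_iff] at hcomb
  obtain ⟨ε, hε, hball⟩ := hcomb
  rw [isBigO_iff]
  refine ⟨C, ?_⟩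
  rw [Metric.eventually_nhds_iff]
  refine ⟨ε, hε, fun y hy => ?_⟩
  set s := Metric.closedBall R (dist y R) with hs
  have hsub : ∀ x ∈ s, dist x R < ε := fun x hx =>
    lt_of_le_of_lt (Metric.mem_closedBall.mp hx) hy
  have hder : ∀ x ∈ s, HasDerivWithinAt g (g' x) s x := fun x hx =>
    ((hball (hsub x hx)).1).hasDerivWithinAt
  have hbound : ∀ x ∈ s, ‖g' x‖ ≤ C * ‖y - R‖ ^ k := by
    intro x hx
    refine ((hball (hsub x hx)).2).trans ?_
    have hd : |x - R| ≤ |y - R| := by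
      have := Metric.mem_closedBall.mp hx
      simpa [Real.dist_eq] using this
    have : ‖(x - R) ^ k‖ = |x - R| ^ k := by
      simp [Real.norm_eq_abs, abs_pow]
    rw [this]
    have h2 : ‖y - R‖ ^ k = |y - R| ^ k := by simp [Real.norm_eq_abs]
    rw [h2]
    gcongr
  have hys : y ∈ s := Metric.mem_closedBall.mpr le_rfl
  have hRs : R ∈ s := Metric.mem_closedBall_self dist_nonneg
  have key := (convex_closedBall R (dist y R)).norm_image_sub_le_of_norm_hasDerivWithin_le
    hder hbound hRs hys
  rw [hgR, sub_zero] at key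
  calc ‖g y‖ ≤ C * ‖y - R‖ ^ k * ‖y - R‖ := key
    _ = C * ‖(y - R) ^ (k + 1)‖ := by
        rw [norm_pow]; ring

/-- Let `f : ℝ → ℝ` be C², let `R ∈ (-1,1)` and `M > 0`, and let `U` be a
C² solution of the model ODE `(1-r²)·U''(r) - 2r·U'(r) + f(U(r)) = 0` on an open interval
`I = (a,b) ⊆ (-1,1)` containing `R`, with `U(R) = M` and `U'(R) = 0`. Then, as `r → R`,
`M - U(r) = (f(M)/(2(1-R²)))·(r-R)² + (2R·f(M)/(3(1-R²)²))·(r-R)³ + O((r-R)⁴)`. -/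
theorem stmt_12 (f : ℝ → ℝ) (hf : ContDiff ℝ 2 f)
    (R M : ℝ) (hR : R ∈ Ioo (-1 : ℝ) 1) (hM : 0 < M)
    (a b : ℝ) (hab : Ioo a b ⊆ Ioo (-1 : ℝ) 1) (hRab : R ∈ Ioo a b)
    (U U' U'' : ℝ → ℝ)
    (hU : ∀ r ∈ Ioo a b, HasDerivAt U (U' r) r)
    (hU' : ∀ r ∈ Ioo a b, HasDerivAt U' (U'' r) r)
    (hU''cont : ContinuousOn U'' (Ioo a b))
    (hODE : ∀ r ∈ Ioo a b, (1 - r ^ 2) * U'' r - 2 * r * U' r + f (U r) = 0)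
    (hUR : U R = M) (hU'R : U' R = 0) :
    (fun r => (M - U r) - (f M / (2 * (1 - R ^ 2))) * (r - R) ^ 2
        - (2 * R * f M / (3 * (1 - R ^ 2) ^ 2)) * (r - R) ^ 3)
      =O[nhdsWithin R (Ioo a b)] fun r => (r - R) ^ 4 := by
  have hIoo : Ioo a b ∈ nhds R := isOpen_Ioo.mem_nhds hRab
  have hpos : ∀ r ∈ Ioo a b, 0 < 1 - r ^ 2 := by
    intro r hr
    have h := hab hr
    nlinarith [h.1, h.2]
  have hne : ∀ r ∈ Ioo a b, (1 : ℝ) - r ^ 2 ≠ 0 := fun r hr => ne_of_gt (hpos r hr)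
  have hRpos : (0 : ℝ) < 1 - R ^ 2 := by nlinarith [hR.1, hR.2]
  have hRne : (1 : ℝ) - R ^ 2 ≠ 0 := ne_of_gt hRpos
  have hfd : Differentiable ℝ f := hf.differentiable two_ne_zero
  have hf2 : ContDiff ℝ ((1 : ℕ) + 1) f := by exact_mod_cast hf
  have hf1 : ContDiff ℝ 1 (deriv f) := (contDiff_succ_iff_deriv.mp hf2).2.2
  have hdfd : Differentiable ℝ (deriv f) := hf1.differentiable one_ne_zero
  set U3 : ℝ → ℝ := fun r =>
    (2 * U' r + 4 * r * U'' r - deriv f (U r) * U' r) / (1 - r ^ 2) with hU3def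
  -- U'' has derivative U3 on Ioo a b
  have hU3 : ∀ r ∈ Ioo a b, HasDerivAt U'' (U3 r) r := by
    intro r hr
    have hfu : HasDerivAt (fun x => f (U x)) (deriv f (U r) * U' r) r :=
      (hfd (U r)).hasDerivAt.comp r (hU r hr)
    have h1 : HasDerivAt (fun x : ℝ => 2 * x * U' x) (2 * U' r + 2 * r * U'' r) r := by
      have := ((hasDerivAt_id r).const_mul (2 : ℝ)).mul (hU' r hr)
      exact this.congr_deriv (by simp only [id_eq]; ring)
    have hN : HasDerivAt (fun x => 2 * x * U' x - f (U x))
        (2 * U' r + 2 * r * U'' r - deriv f (U r) * U' r) r := h1.sub hfu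
    have hD : HasDerivAt (fun x : ℝ => 1 - x ^ 2) (-(2 * r)) r := by
      simpa using (hasDerivAt_pow 2 r).const_sub (1 : ℝ)
    have hV := hN.div hD (hne r hr)
    have heq : U'' =ᶠ[nhds r] fun x => (2 * x * U' x - f (U x)) / (1 - x ^ 2) := by
      filter_upwards [isOpen_Ioo.mem_nhds hr] with x hx
      have h := hODE x hx
      field_simp [hne x hx]
      linarith
    have hfin := hV.congr_of_eventuallyEq heq
    refine hfin.congr_deriv (Eq.symm ?_)
    have hfU : f (U r) = 2 * r * U' r - (1 - r ^ 2) * U'' r := by linarith [hODE r hr]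
    rw [hU3def]
    simp only
    rw [hfU]
    field_simp [hne r hr]
    ring
  -- U3 is differentiable at R
  have d1 : DifferentiableAt ℝ U' R := (hU' R hRab).differentiableAt
  have d2 : DifferentiableAt ℝ U'' R := (hU3 R hRab).differentiableAt
  have d3 : DifferentiableAt ℝ (fun r => deriv f (U r)) R :=
    DifferentiableAt.comp R (hdfd (U R)) (hU R hRab).differentiableAt
  have hU3diff : DifferentiableAt ℝ U3 R := by
    rw [hU3def]
    apply DifferentiableAt.div
    · exact ((d1.const_mul 2).add ((differentiableAt_id.const_mul 4).mul d2)).sub (d3.mul d1)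
    · exact (differentiableAt_const 1).sub (differentiableAt_pow 2)
    · exact hRne
  -- values at R
  have hU''R : U'' R = -(f M) / (1 - R ^ 2) := by
    have h := hODE R hRab
    rw [hUR, hU'R] at h
    field_simp
    linarith
  set c2 : ℝ := f M / (2 * (1 - R ^ 2)) with hc2
  set c3 : ℝ := 2 * R * f M / (3 * (1 - R ^ 2) ^ 2) with hc3
  have hU3R : U3 R + 6 * c3 = 0 := by
    rw [hU3def, hc3]
    simp only
    rw [hU'R, hU''R, hUR]
    field_simp
    ring
  -- bootstrap
  have hb3 : (fun r => U3 r + 6 * c3) =O[nhds R] fun r => (r - R) ^ 1 := by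
    have hdiff : DifferentiableAt ℝ (fun r => U3 r + 6 * c3) R := hU3diff.add_const _
    have h := hdiff.isBigO_sub
    simp only [hU3R, pow_one]
    simpa [hU3R] using h
  have hb2 : (fun r => U'' r + 2 * c2 + 6 * c3 * (r - R)) =O[nhds R] fun r => (r - R) ^ 2 := by
    apply deriv_isBigO_step (g' := fun r => U3 r + 6 * c3)
    · filter_upwards [hIoo] with r hr
      have h := ((hU3 r hr).add_const (2 * c2)).add
        (((hasDerivAt_id r).sub_const R).const_mul (6 * c3))
      exact h.congr_deriv (by ring)
    · rw [hU''R, hc2]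
      field_simp
      ring
    · exact hb3
  have hb1 : (fun r => U' r + 2 * c2 * (r - R) + 3 * c3 * (r - R) ^ 2)
      =O[nhds R] fun r => (r - R) ^ 3 := by
    apply deriv_isBigO_step (g' := fun r => U'' r + 2 * c2 + 6 * c3 * (r - R))
    · filter_upwards [hIoo] with r hr
      have hp2 : HasDerivAt (fun x : ℝ => (x - R) ^ 2) (2 * (r - R)) r := by
        simpa using ((hasDerivAt_id r).sub_const R).fun_pow 2
      have h := ((hU' r hr).add
        ((((hasDerivAt_id r).sub_const R).const_mul (2 * c2)))).add (hp2.const_mul (3 * c3))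
      exact h.congr_deriv (by ring)
    · rw [hU'R]; ring
    · exact hb2
  have hb0 : (fun r => U r - M + c2 * (r - R) ^ 2 + c3 * (r - R) ^ 3)
      =O[nhds R] fun r => (r - R) ^ 4 := by
    apply deriv_isBigO_step (g' := fun r => U' r + 2 * c2 * (r - R) + 3 * c3 * (r - R) ^ 2)
    · filter_upwards [hIoo] with r hr
      have hp2 : HasDerivAt (fun x : ℝ => (x - R) ^ 2) (2 * (r - R)) r := by
        simpa using ((hasDerivAt_id r).sub_const R).fun_pow 2
      have hp3 : HasDerivAt (fun x : ℝ => (x - R) ^ 3) (3 * (r - R) ^ 2) r := by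
        simpa using ((hasDerivAt_id r).sub_const R).fun_pow 3
      have h := (((hU r hr).sub_const M).add (hp2.const_mul c2)).add (hp3.const_mul c3)
      exact h.congr_deriv (by ring)
    · rw [hUR]; ring
    · exact hb1
  have hfe : (fun r => (M - U r) - c2 * (r - R) ^ 2 - c3 * (r - R) ^ 3)
      = fun r => -(U r - M + c2 * (r - R) ^ 2 + c3 * (r - R) ^ 3) := by
    funext r; ring
  rw [hfe]
  exact (hb0.neg_left).mono nhdsWithin_le_nhds
end

section
/- Let f : ℝ → ℝ be C², let R ∈ (-1,1) and M > 0, and let U be a C² solution of the model ODE (1-r²)·U''(r) - 2r·U'(r) + f(U(r)) = 0 on an open interval I ⊆ (-1,1) containing R, with U(R) = M and U'(R) = 0. Define W(r) = (1-r²)·U'(r)². Then W is three times differentiable at R, with W(R) = 0, W'(R) = 0, W''(R) = 2·f(M)²/(1-R²), and W'''(R) = 12·R·f(M)²/(1-R²)². -/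
open Set

/-- Let `f : ℝ → ℝ` be C², let `R ∈ (-1,1)` and `M > 0`, and let `U` be a
C² solution of the model ODE `(1-r²)·U''(r) - 2r·U'(r) + f(U(r)) = 0` on an open interval
`I = (a,b) ⊆ (-1,1)` containing `R`, with `U(R) = M` and `U'(R) = 0`. Define
`W(r) = (1-r²)·U'(r)²`. Then `W` is three times differentiable at `R`, with `W(R) = 0`,
`W'(R) = 0`, `W''(R) = 2·f(M)²/(1-R²)`, and `W'''(R) = 12·R·f(M)²/(1-R²)²`. -/
theorem stmt_13 (f : ℝ → ℝ) (hf : ContDiff ℝ 2 f)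
    (R M : ℝ) (hR : R ∈ Ioo (-1 : ℝ) 1) (hM : 0 < M)
    (a b : ℝ) (hab : Ioo a b ⊆ Ioo (-1 : ℝ) 1) (hRab : R ∈ Ioo a b)
    (U U' U'' : ℝ → ℝ)
    (hU : ∀ r ∈ Ioo a b, HasDerivAt U (U' r) r)
    (hU' : ∀ r ∈ Ioo a b, HasDerivAt U' (U'' r) r)
    (hU''cont : ContinuousOn U'' (Ioo a b))
    (hODE : ∀ r ∈ Ioo a b, (1 - r ^ 2) * U'' r - 2 * r * U' r + f (U r) = 0)
    (hUR : U R = M) (hU'R : U' R = 0) :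
    ∃ (W₁ W₂ : ℝ → ℝ) (ε : ℝ), 0 < ε ∧ Ioo (R - ε) (R + ε) ⊆ Ioo a b ∧
      (∀ r ∈ Ioo (R - ε) (R + ε),
        HasDerivAt (fun s => (1 - s ^ 2) * (U' s) ^ 2) (W₁ r) r) ∧
      (∀ r ∈ Ioo (R - ε) (R + ε), HasDerivAt W₁ (W₂ r) r) ∧
      HasDerivAt W₂ (12 * R * (f M) ^ 2 / (1 - R ^ 2) ^ 2) R ∧
      (1 - R ^ 2) * (U' R) ^ 2 = 0 ∧ W₁ R = 0 ∧ W₂ R = 2 * (f M) ^ 2 / (1 - R ^ 2) := by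
  have hRa := hRab.1
  have hRb := hRab.2
  have hfd : Differentiable ℝ f := hf.differentiable (by norm_num)
  have hf1 : ContDiff ℝ 1 (deriv f) := by
    have h2 : ContDiff ℝ ((1 : ℕ∞) + 1) f := by
      convert hf using 2
      norm_num
    exact (contDiff_succ_iff_deriv.mp h2).2.2
  have hfd' : Differentiable ℝ (deriv f) := hf1.differentiable (by norm_num)
  have hne : ∀ r ∈ Ioo a b, (1 - r ^ 2) ≠ 0 := by
    intro r hr
    obtain ⟨h1, h2⟩ := hab hr
    nlinarith
  have hODE' : ∀ r ∈ Ioo a b, U'' r = (2 * r * U' r - f (U r)) / (1 - r ^ 2) := by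
    intro r hr
    have h := hODE r hr
    rw [eq_div_iff (hne r hr)]
    linarith
  -- generic building blocks
  have hden : ∀ r : ℝ, HasDerivAt (fun s : ℝ => 1 - s ^ 2) (-(2 * r)) r := by
    intro r
    have := (hasDerivAt_pow 2 r).const_sub 1
    refine this.congr_deriv ?_
    norm_num
  have hsq : ∀ r ∈ Ioo a b, HasDerivAt (fun s => (U' s) ^ 2) (2 * U' r * U'' r) r := by
    intro r hr
    have := (hU' r hr).pow 2
    refine this.congr_deriv ?_
    push_cast
    ring
  have hfU : ∀ r ∈ Ioo a b, HasDerivAt (fun s => f (U s)) (deriv f (U r) * U' r) r := by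
    intro r hr
    exact HasDerivAt.comp r (hfd (U r)).hasDerivAt (hU r hr)
  -- key claim 1
  have key1 : ∀ r ∈ Ioo a b, HasDerivAt (fun s => (1 - s ^ 2) * (U' s) ^ 2)
      (2 * r * (U' r) ^ 2 - 2 * U' r * f (U r)) r := by
    intro r hr
    have h := (hden r).mul (hsq r hr)
    refine h.congr_deriv ?_
    rw [hODE' r hr]
    field_simp [hne r hr]
    ring
  -- key claim 2
  have key2 : ∀ r ∈ Ioo a b, HasDerivAt (fun s => 2 * s * (U' s) ^ 2 - 2 * U' s * f (U s))
      (2 * (U' r) ^ 2 + (4 * r * U' r - 2 * f (U r)) * (2 * r * U' r - f (U r)) / (1 - r ^ 2)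
        - 2 * (U' r) ^ 2 * deriv f (U r)) r := by
    intro r hr
    have h2s : HasDerivAt (fun s : ℝ => 2 * s) 2 r := by
      simpa using (hasDerivAt_id r).const_mul (2 : ℝ)
    have hA := h2s.mul (hsq r hr)
    have hB := ((hU' r hr).const_mul (2 : ℝ)).mul (hfU r hr)
    have h := hA.sub hB
    refine h.congr_deriv ?_
    rw [hODE' r hr]
    field_simp [hne r hr]
    ring
  -- key claim 3 : derivative of W₂ at R
  have key3 : HasDerivAt (fun s => 2 * (U' s) ^ 2 +
      (4 * s * U' s - 2 * f (U s)) * (2 * s * U' s - f (U s)) / (1 - s ^ 2)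
        - 2 * (U' s) ^ 2 * deriv f (U s))
      (12 * R * (f M) ^ 2 / (1 - R ^ 2) ^ 2) R := by
    have h4s : HasDerivAt (fun s : ℝ => 4 * s) 4 R := by
      simpa using (hasDerivAt_id R).const_mul (4 : ℝ)
    have h2s : HasDerivAt (fun s : ℝ => 2 * s) 2 R := by
      simpa using (hasDerivAt_id R).const_mul (2 : ℝ)
    have hA := (hsq R hRab).const_mul (2 : ℝ)
    have hB1 := (h4s.mul (hU' R hRab)).sub ((hfU R hRab).const_mul (2 : ℝ))
    have hB2 := (h2s.mul (hU' R hRab)).sub (hfU R hRab)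
    have hB := hB1.mul hB2
    have hC := hB.div (hden R) (hne R hRab)
    have hf'U : HasDerivAt (fun s => deriv f (U s)) (deriv (deriv f) (U R) * U' R) R :=
      HasDerivAt.comp R (hfd' (U R)).hasDerivAt (hU R hRab)
    have hD := hA.mul hf'U
    have h := (hA.add hC).sub hD
    refine h.congr_deriv ?_
    simp only [Pi.mul_apply, Pi.sub_apply]
    rw [hODE' R hRab, hUR, hU'R]
    field_simp [hne R hRab]
    ring
  refine ⟨fun r => 2 * r * (U' r) ^ 2 - 2 * U' r * f (U r),
    fun r => 2 * (U' r) ^ 2 + (4 * r * U' r - 2 * f (U r)) * (2 * r * U' r - f (U r)) / (1 - r ^ 2)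
      - 2 * (U' r) ^ 2 * deriv f (U r),
    min (R - a) (b - R), lt_min (by linarith) (by linarith), ?_, ?_, ?_, key3, ?_, ?_, ?_⟩
  · intro x hx
    have h3 := min_le_left (R - a) (b - R)
    have h4 := min_le_right (R - a) (b - R)
    exact ⟨by linarith [hx.1], by linarith [hx.2]⟩
  · intro r hr
    refine key1 r ?_
    have h3 := min_le_left (R - a) (b - R)
    have h4 := min_le_right (R - a) (b - R)
    exact ⟨by linarith [hr.1], by linarith [hr.2]⟩
  · intro r hr
    refine key2 r ?_
    have h3 := min_le_left (R - a) (b - R)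
    have h4 := min_le_right (R - a) (b - R)
    exact ⟨by linarith [hr.1], by linarith [hr.2]⟩
  · rw [hU'R]; ring
  · simp [hU'R]
  · simp only [hU'R, hUR]
    field_simp [hne R hRab]
    ring
end

section
/- Let f : ℝ → ℝ be C², let R ∈ (-1,1) and M > 0 with f(M) > 0, and let U be a C² solution of the model ODE (1-r²)·U''(r) - 2r·U'(r) + f(U(r)) = 0 on an open interval I ⊆ (-1,1) containing R, with U(R) = M and U'(R) = 0. Set W(r) = (1-r²)·U'(r)². Then, as r → R with r > R, W(r) = 2·f(M)·(M-U(r)) + (4R·√(2·f(M))/(3·√(1-R²)))·(M-U(r))^{3/2} + O((M-U(r))²), and as r → R with r < R, W(r) = 2·f(M)·(M-U(r)) - (4R·√(2·f(M))/(3·√(1-R²)))·(M-U(r))^{3/2} + O((M-U(r))²). -/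
open Set Asymptotics

lemma quad_abs_bound {A0 A1 A2 h : ℝ} (hh : |h| ≤ 1) :
    |A0 + A1 * h + A2 * h ^ 2| ≤ |A0| + |A1| + |A2| := by
  have hp : ∀ n : ℕ, |h ^ n| ≤ 1 := fun n => by
    rw [abs_pow]; exact pow_le_one₀ (abs_nonneg _) hh
  have h0 := abs_add_le (A0 + A1 * h) (A2 * h ^ 2)
  have h1 := abs_add_le A0 (A1 * h)
  have m1 : |A1 * h| ≤ |A1| := by
    rw [abs_mul]; exact mul_le_of_le_one_right (abs_nonneg _) hh
  have m2 : |A2 * h ^ 2| ≤ |A2| := by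
    rw [abs_mul]; exact mul_le_of_le_one_right (abs_nonneg _) (hp 2)
  linarith
lemma polyG_abs_bound {B0 B2 B3 h : ℝ} (hh : |h| ≤ 1) :
    |B0 + B2 * h ^ 2 + B3 * h ^ 3| ≤ |B0| + |B2| + |B3| := by
  have hp : ∀ n : ℕ, |h ^ n| ≤ 1 := fun n => by
    rw [abs_pow]; exact pow_le_one₀ (abs_nonneg _) hh
  have h0 := abs_add_le (B0 + B2 * h ^ 2) (B3 * h ^ 3)
  have h1 := abs_add_le B0 (B2 * h ^ 2)
  have m1 : |B2 * h ^ 2| ≤ |B2| := by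
    rw [abs_mul]; exact mul_le_of_le_one_right (abs_nonneg _) (hp 2)
  have m2 : |B3 * h ^ 3| ≤ |B3| := by
    rw [abs_mul]; exact mul_le_of_le_one_right (abs_nonneg _) (hp 3)
  linarith

lemma cube_sqrt_diff {x y : ℝ} (hx : 0 ≤ x) (hy : 0 ≤ y) :
    |x * Real.sqrt x - y * Real.sqrt y| ≤ (Real.sqrt x + Real.sqrt y) * |x - y| := by
  have hsx := Real.sq_sqrt hx
  have hsy := Real.sq_sqrt hy
  have h1 := Real.sqrt_nonneg x
  have h2 := Real.sqrt_nonneg y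
  rcases le_total x y with h | h
  · have hs := Real.sqrt_le_sqrt h
    have hle : x * Real.sqrt x ≤ y * Real.sqrt y := mul_le_mul h hs h1 hy
    rw [abs_of_nonpos (sub_nonpos.2 hle), abs_of_nonpos (sub_nonpos.2 h)]
    nlinarith [mul_nonneg (mul_nonneg (sub_nonneg.2 hs) h1) h2]
  · have hs := Real.sqrt_le_sqrt h
    have hle : y * Real.sqrt y ≤ x * Real.sqrt x := mul_le_mul h hs h2 hx
    rw [abs_of_nonneg (sub_nonneg.2 hle), abs_of_nonneg (sub_nonneg.2 h)]
    nlinarith [mul_nonneg (mul_nonneg (sub_nonneg.2 hs) h2) h1]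

lemma rpow_three_halves {x : ℝ} (hx : 0 ≤ x) : x ^ ((3:ℝ)/2) = x * Real.sqrt x := by
  rcases eq_or_lt_of_le hx with h | h
  · rw [← h, Real.zero_rpow (by norm_num), Real.sqrt_zero, mul_zero]
  · rw [show (3:ℝ)/2 = 1 + 1/2 by norm_num, Real.rpow_add h, Real.rpow_one,
      ← Real.sqrt_eq_rpow]

lemma mem_uIcc_abs_le {R r x : ℝ} (hx : x ∈ uIcc R r) : |x - R| ≤ |r - R| := by
  rcases le_total R r with h | h
  · rw [uIcc_of_le h] at hx
    rw [abs_of_nonneg (by linarith [hx.1]), abs_of_nonneg (by linarith)]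
    linarith [hx.2]
  · rw [uIcc_of_ge h] at hx
    rw [abs_of_nonpos (by linarith [hx.2]), abs_of_nonpos (by linarith)]
    linarith [hx.1]

lemma taylor_step {g g' : ℝ → ℝ} {R δ C : ℝ} {n : ℕ} (hC : 0 ≤ C)
    (hg : ∀ r ∈ Metric.ball R δ, HasDerivAt g (g' r) r) (hg0 : g R = 0)
    (hb : ∀ r ∈ Metric.ball R δ, |g' r| ≤ C * |r - R| ^ n) :
    ∀ r ∈ Metric.ball R δ, |g r| ≤ C * |r - R| ^ (n + 1) := by
  intro r hr
  have hRmem : R ∈ Metric.ball R δ := Metric.mem_ball_self (lt_of_le_of_lt dist_nonneg hr)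
  have hsub : uIcc R r ⊆ Metric.ball R δ :=
    (convex_ball R δ).ordConnected.uIcc_subset hRmem hr
  have key := Convex.norm_image_sub_le_of_norm_hasDerivWithin_le
    (f := g) (f' := g') (C := C * |r - R| ^ n) (s := uIcc R r)
    (fun x hx => (hg x (hsub hx)).hasDerivWithinAt)
    (fun x hx => by
      have h1 := hb x (hsub hx)
      have h2 : C * |x - R| ^ n ≤ C * |r - R| ^ n :=
        mul_le_mul_of_nonneg_left (pow_le_pow_left₀ (abs_nonneg _) (mem_uIcc_abs_le hx) n) hC
      simpa [Real.norm_eq_abs] using h1.trans h2)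
    (convex_uIcc R r) left_mem_uIcc right_mem_uIcc
  rw [hg0, sub_zero, Real.norm_eq_abs, Real.norm_eq_abs] at key
  calc |g r| ≤ C * |r - R| ^ n * |r - R| := key
  _ = C * |r - R| ^ (n + 1) := by rw [pow_succ]; ring

set_option maxHeartbeats 1600000 in
/-- Let `f : ℝ → ℝ` be C², let `R ∈ (-1,1)` and `M > 0` with `f(M) > 0`,
and let `U` be a C² solution of the model ODE `(1-r²)·U''(r) - 2r·U'(r) + f(U(r)) = 0` on an
open interval `I = (a,b) ⊆ (-1,1)` containing `R`, with `U(R) = M` and `U'(R) = 0`. Set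
`W(r) = (1-r²)·U'(r)²`. Then, as `r → R` with `r > R`,
`W(r) = 2·f(M)·(M-U(r)) + (4R·√(2·f(M))/(3·√(1-R²)))·(M-U(r))^{3/2} + O((M-U(r))²)`,
and as `r → R` with `r < R`,
`W(r) = 2·f(M)·(M-U(r)) - (4R·√(2·f(M))/(3·√(1-R²)))·(M-U(r))^{3/2} + O((M-U(r))²)`. -/
theorem stmt_14 (f : ℝ → ℝ) (hf : ContDiff ℝ 2 f)
    (R M : ℝ) (hR : R ∈ Ioo (-1 : ℝ) 1) (hM : 0 < M) (hfM : 0 < f M)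
    (a b : ℝ) (hab : Ioo a b ⊆ Ioo (-1 : ℝ) 1) (hRab : R ∈ Ioo a b)
    (U U' U'' : ℝ → ℝ)
    (hU : ∀ r ∈ Ioo a b, HasDerivAt U (U' r) r)
    (hU' : ∀ r ∈ Ioo a b, HasDerivAt U' (U'' r) r)
    (hU''cont : ContinuousOn U'' (Ioo a b))
    (hODE : ∀ r ∈ Ioo a b, (1 - r ^ 2) * U'' r - 2 * r * U' r + f (U r) = 0)
    (hUR : U R = M) (hU'R : U' R = 0) :
    ((fun r => (1 - r ^ 2) * (U' r) ^ 2 - 2 * f M * (M - U r)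
        - (4 * R * Real.sqrt (2 * f M) / (3 * Real.sqrt (1 - R ^ 2)))
          * (M - U r) ^ ((3 : ℝ) / 2))
      =O[nhdsWithin R (Ioo R b)] fun r => (M - U r) ^ 2) ∧
    ((fun r => (1 - r ^ 2) * (U' r) ^ 2 - 2 * f M * (M - U r)
        + (4 * R * Real.sqrt (2 * f M) / (3 * Real.sqrt (1 - R ^ 2)))
          * (M - U r) ^ ((3 : ℝ) / 2))
      =O[nhdsWithin R (Ioo a R)] fun r => (M - U r) ^ 2) := by
  have hsopen : IsOpen (Ioo a b) := isOpen_Ioo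
  have hpos : ∀ r ∈ Ioo a b, 0 < 1 - r ^ 2 := by
    intro r hr; have h2 := hab hr; nlinarith [h2.1, h2.2]
  have hU''eq : ∀ r ∈ Ioo a b, U'' r = (2 * r * U' r - f (U r)) / (1 - r ^ 2) := by
    intro r hr
    have h := hODE r hr
    field_simp [(hpos r hr).ne']
    linarith
  have hUdiff : DifferentiableOn ℝ U (Ioo a b) :=
    fun r hr => (hU r hr).differentiableAt.differentiableWithinAt
  have hU'c1 : ContDiffOn ℝ 1 U' (Ioo a b) := by
    rw [show (1 : WithTop ℕ∞) = 0 + 1 by norm_num, contDiffOn_succ_iff_deriv_of_isOpen hsopen]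
    refine ⟨fun r hr => (hU' r hr).differentiableAt.differentiableWithinAt, by simp, ?_⟩
    rw [contDiffOn_zero]
    exact hU''cont.congr fun r hr => (hU' r hr).deriv
  have hUc2 : ContDiffOn ℝ 2 U (Ioo a b) := by
    rw [show (2 : WithTop ℕ∞) = 1 + 1 by norm_num, contDiffOn_succ_iff_deriv_of_isOpen hsopen]
    exact ⟨hUdiff, by simp, hU'c1.congr fun r hr => (hU r hr).deriv⟩
  have hfU : ContDiffOn ℝ 1 (fun r => f (U r)) (Ioo a b) :=
    (hf.of_le one_le_two).comp_contDiffOn (hUc2.of_le one_le_two)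
  have hU''c1 : ContDiffOn ℝ 1 U'' (Ioo a b) := by
    have h1 : ContDiffOn ℝ 1 (fun r : ℝ => (2 * r * U' r - f (U r)) / (1 - r ^ 2)) (Ioo a b) := by
      apply ContDiffOn.div
      · exact ((contDiffOn_const.mul contDiffOn_id).mul hU'c1).sub hfU
      · exact contDiffOn_const.sub (contDiffOn_id.pow 2)
      · exact fun r hr => (hpos r hr).ne'
    exact h1.congr hU''eq
  have hF'c1 : ContDiff ℝ 1 (deriv f) := by
    have h2 : ContDiff ℝ (1 + 1) f := by
      rw [show ((1 : WithTop ℕ∞) + 1) = 2 by norm_num]; exact hf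
    exact (contDiff_succ_iff_deriv.1 h2).2.2
  have hfdiff : Differentiable ℝ f := hf.differentiable two_ne_zero
  -- third derivative of U
  set U3 : ℝ → ℝ := fun r =>
    ((2 * U' r + 2 * r * U'' r - deriv f (U r) * U' r) * (1 - r ^ 2)
      + 2 * r * (2 * r * U' r - f (U r))) / (1 - r ^ 2) ^ 2 with hU3def
  have hU3 : ∀ r ∈ Ioo a b, HasDerivAt U'' (U3 r) r := by
    intro r hr
    have hg : HasDerivAt (fun x => 2 * x * U' x - f (U x))
        (2 * U' r + 2 * r * U'' r - deriv f (U r) * U' r) r := by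
      have h1 : HasDerivAt (fun x : ℝ => 2 * x * U' x) (2 * U' r + 2 * r * U'' r) r := by
        have := ((hasDerivAt_id r).const_mul 2).mul (hU' r hr)
        simp only [id_eq] at this
        exact this.congr_deriv (by ring)
      have h2 : HasDerivAt (fun x => f (U x)) (deriv f (U (r)) * U' r) r :=
        (hfdiff (U r)).hasDerivAt.comp r (hU r hr)
      exact h1.sub h2
    have hw : HasDerivAt (fun x : ℝ => 1 - x ^ 2) (-(2 * r)) r := by
      simpa using (hasDerivAt_pow 2 r).const_sub 1
    have hq := hg.div hw (hpos r hr).ne'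
    have hq2 : HasDerivAt (fun x => (2 * x * U' x - f (U x)) / (1 - x ^ 2)) (U3 r) r := by
      refine hq.congr_deriv ?_
      rw [hU3def]
      have := (hpos r hr).ne'
      field_simp
      ring
    apply hq2.congr_of_eventuallyEq
    filter_upwards [hsopen.mem_nhds hr] with x hx
    exact hU''eq x hx
  have hU3c1 : ContDiffOn ℝ 1 U3 (Ioo a b) := by
    apply ContDiffOn.div
    · apply ContDiffOn.add
      · apply ContDiffOn.mul
        · apply ContDiffOn.sub
          · exact (contDiffOn_const.mul hU'c1).add
              ((contDiffOn_const.mul contDiffOn_id).mul hU''c1)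
          · exact (hF'c1.comp_contDiffOn (hUc2.of_le one_le_two)).mul hU'c1
        · exact contDiffOn_const.sub (contDiffOn_id.pow 2)
      · exact (contDiffOn_const.mul contDiffOn_id).mul
          (((contDiffOn_const.mul contDiffOn_id).mul hU'c1).sub hfU)
    · exact (contDiffOn_const.sub (contDiffOn_id.pow 2)).pow 2
    · exact fun r hr => pow_ne_zero 2 (hpos r hr).ne'
  have hU3at : ContDiffAt ℝ 1 U3 R := hU3c1.contDiffAt (hsopen.mem_nhds hRab)
  obtain ⟨K, t, ht, hlip⟩ := hU3at.exists_lipschitzOnWith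
  obtain ⟨Kr, hKrdef⟩ : ∃ x : ℝ, x = (K : ℝ) := ⟨_, rfl⟩
  have hKr : 0 ≤ Kr := by rw [hKrdef]; exact K.coe_nonneg
  have h1R : 0 < 1 - R ^ 2 := hpos R hRab
  -- values at R
  have hc2 : U'' R = -(f M) / (1 - R ^ 2) := by
    have h := hODE R hRab
    rw [hUR, hU'R] at h
    field_simp
    linarith
  have hc3 : U3 R = -(4 * R * f M) / (1 - R ^ 2) ^ 2 := by
    rw [hU3def]
    simp only [hU'R, hUR, hc2]
    field_simp
    ring
  -- choose a ball inside both t and Ioo a b, of radius ≤ 1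
  obtain ⟨e1, he1, hte1⟩ := Metric.mem_nhds_iff.1 ht
  obtain ⟨e2, he2, hse2⟩ := Metric.isOpen_iff.1 hsopen R hRab
  obtain ⟨δ₁, hδ₁def⟩ : ∃ x : ℝ, x = min 1 (min e1 e2) := ⟨_, rfl⟩
  have hδ₁ : 0 < δ₁ := by rw [hδ₁def]; exact lt_min one_pos (lt_min he1 he2)
  have hδ₁le1 : δ₁ ≤ 1 := by rw [hδ₁def]; exact min_le_left _ _
  have hballs : Metric.ball R δ₁ ⊆ Ioo a b := by
    rw [hδ₁def]
    exact fun x hx => hse2 (Metric.ball_subset_ball (le_trans (min_le_right _ _) (min_le_right _ _)) hx)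
  have hballt : Metric.ball R δ₁ ⊆ t := by
    rw [hδ₁def]
    exact fun x hx => hte1 (Metric.ball_subset_ball (le_trans (min_le_right _ _) (min_le_left _ _)) hx)
  have hRball : R ∈ Metric.ball R δ₁ := Metric.mem_ball_self hδ₁
  -- Taylor bounds
  have hB3 : ∀ r ∈ Metric.ball R δ₁, |U3 r - U3 R| ≤ Kr * |r - R| ^ 1 := by
    intro r hr
    have := hlip.dist_le_mul r (hballt hr) R (hballt hRball)
    rw [Real.dist_eq, Real.dist_eq] at this
    rw [hKrdef]
    simpa using this
  have hB2 : ∀ r ∈ Metric.ball R δ₁,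
      |U'' r - U'' R - U3 R * (r - R)| ≤ Kr * |r - R| ^ 2 := by
    apply taylor_step (n := 1) hKr _ (by ring) hB3
    intro r hr
    have h1 : HasDerivAt (fun x => U'' x - U'' R - U3 R * (x - R)) (U3 r - U3 R) r := by
      have := ((hU3 r (hballs hr)).sub_const (U'' R)).sub
        (((hasDerivAt_id r).sub_const R).const_mul (U3 R))
      exact this.congr_deriv (by ring)
    exact h1
  have hB1 : ∀ r ∈ Metric.ball R δ₁,
      |U' r - U'' R * (r - R) - U3 R / 2 * (r - R) ^ 2| ≤ Kr * |r - R| ^ 3 := by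
    apply taylor_step (n := 2) hKr _ (by simp [hU'R]) hB2
    intro r hr
    have h1 : HasDerivAt (fun x => U' x - U'' R * (x - R) - U3 R / 2 * (x - R) ^ 2)
        (U'' r - U'' R - U3 R * (r - R)) r := by
      have hsq : HasDerivAt (fun x : ℝ => (x - R) ^ 2) (2 * (r - R)) r := by
        have h := ((hasDerivAt_id r).sub_const R).pow 2
        simp at h; exact h
      have := ((hU' r (hballs hr)).sub
        (((hasDerivAt_id r).sub_const R).const_mul (U'' R))).sub (hsq.const_mul (U3 R / 2))
      exact this.congr_deriv (by ring)
    exact h1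
  have hB0 : ∀ r ∈ Metric.ball R δ₁,
      |U r - M - U'' R / 2 * (r - R) ^ 2 - U3 R / 6 * (r - R) ^ 3| ≤ Kr * |r - R| ^ 4 := by
    apply taylor_step (n := 3) hKr _ (by simp [hUR]) hB1
    intro r hr
    have h1 : HasDerivAt (fun x => U x - M - U'' R / 2 * (x - R) ^ 2 - U3 R / 6 * (x - R) ^ 3)
        (U' r - U'' R * (r - R) - U3 R / 2 * (r - R) ^ 2) r := by
      have hsq : HasDerivAt (fun x : ℝ => (x - R) ^ 2) (2 * (r - R)) r := by
        have h := ((hasDerivAt_id r).sub_const R).pow 2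
        simp at h; exact h
      have hcub : HasDerivAt (fun x : ℝ => (x - R) ^ 3) (3 * (r - R) ^ 2) r := by
        have h := ((hasDerivAt_id r).sub_const R).pow 3
        simp at h; exact h
      have := (((hU r (hballs hr)).sub_const M).sub (hsq.const_mul (U'' R / 2))).sub
        (hcub.const_mul (U3 R / 6))
      exact this.congr_deriv (by ring)
    exact h1
  -- named coefficients
  have hne : (1 - R ^ 2) ≠ 0 := h1R.ne'
  obtain ⟨βv, hβv⟩ : ∃ x : ℝ, x = 2/3*R*(f M)^2/(1-R^2)^2 := ⟨_, rfl⟩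
  obtain ⟨CA0, hCA0⟩ : ∃ x : ℝ, x = -((f M)^2/(1-R^2)^2) - 4*R^2*(f M)^2/(1-R^2)^3 := ⟨_, rfl⟩
  obtain ⟨CA1, hCA1⟩ : ∃ x : ℝ, x = -(4*R*(f M)^2/(1-R^2)^3) - 8*R^3*(f M)^2/(1-R^2)^4 := ⟨_, rfl⟩
  obtain ⟨CA2, hCA2⟩ : ∃ x : ℝ, x = -(4*R^2*(f M)^2/(1-R^2)^4) := ⟨_, rfl⟩
  obtain ⟨CB0, hCB0⟩ : ∃ x : ℝ, x = -(2*f M) := ⟨_, rfl⟩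
  obtain ⟨CB2, hCB2⟩ : ∃ x : ℝ, x = 2*f M/(1-R^2) + 8*R^2*f M/(1-R^2)^2 := ⟨_, rfl⟩
  obtain ⟨CB3, hCB3⟩ : ∃ x : ℝ, x = 4*R*f M/(1-R^2)^2 := ⟨_, rfl⟩
  have hid : ∀ r : ℝ, (1-r^2)*(U' r)^2 - 2*f M*(M - U r) - βv*(r-R)^3
      = (r-R)^4 * (CA0 + CA1*(r-R) + CA2*(r-R)^2)
      + (U' r - U'' R*(r-R) - U3 R/2*(r-R)^2) * ((r-R) * (CB0 + CB2*(r-R)^2 + CB3*(r-R)^3))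
      + (1-r^2) * (U' r - U'' R*(r-R) - U3 R/2*(r-R)^2)^2
      + 2*f M*(U r - M - U'' R/2*(r-R)^2 - U3 R/6*(r-R)^3) := by
    intro r
    rw [hc2, hc3, hβv, hCA0, hCA1, hCA2, hCB0, hCB2, hCB3]
    field_simp
    ring
  obtain ⟨CPs, hCPs⟩ : ∃ x : ℝ, x = |CA0| + |CA1| + |CA2| := ⟨_, rfl⟩
  obtain ⟨CGs, hCGs⟩ : ∃ x : ℝ, x = |CB0| + |CB2| + |CB3| := ⟨_, rfl⟩
  obtain ⟨CE, hCE⟩ : ∃ x : ℝ, x = CPs + Kr*CGs + Kr^2 + 2*f M*Kr := ⟨_, rfl⟩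
  have hCPs0 : 0 ≤ CPs := by rw [hCPs]; positivity
  have hCGs0 : 0 ≤ CGs := by rw [hCGs]; positivity
  have hCE0 : 0 ≤ CE := by
    have : 0 ≤ 2*f M*Kr := by positivity
    nlinarith [mul_nonneg hKr hCGs0, sq_nonneg Kr]
  have hXb : ∀ r ∈ Metric.ball R δ₁,
      |(1-r^2)*(U' r)^2 - 2*f M*(M - U r) - βv*(r-R)^3| ≤ CE * |r-R|^4 := by
    intro r hr
    have hw0 : 0 < 1 - r^2 := by
      have := hpos r (hballs hr); linarith [this]
    have hw1 : 1 - r^2 ≤ 1 := by nlinarith [sq_nonneg r]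
    have hh1 : |r - R| ≤ 1 := by
      have := Metric.mem_ball.1 hr
      rw [Real.dist_eq] at this
      linarith [le_of_lt this, hδ₁le1]
    have he1 := hB1 r hr
    have he0 := hB0 r hr
    have hPh : |CA0 + CA1*(r-R) + CA2*(r-R)^2| ≤ CPs := by rw [hCPs]; exact quad_abs_bound hh1
    have hG1 : |CB0 + CB2*(r-R)^2 + CB3*(r-R)^3| ≤ CGs := by rw [hCGs]; exact polyG_abs_bound hh1
    rw [hid r]
    have habs4 : ∀ x1 x2 x3 x4 : ℝ, |x1 + x2 + x3 + x4| ≤ |x1| + |x2| + |x3| + |x4| := by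
      intro x1 x2 x3 x4
      calc |x1 + x2 + x3 + x4| ≤ |x1 + x2 + x3| + |x4| := abs_add_le _ _
        _ ≤ (|x1 + x2| + |x3|) + |x4| := by linarith [abs_add_le (x1+x2) x3]
        _ ≤ ((|x1| + |x2|) + |x3|) + |x4| := by linarith [abs_add_le x1 x2]
    refine le_trans (habs4 _ _ _ _) ?_
    have b1 : |(r-R)^4 * (CA0 + CA1*(r-R) + CA2*(r-R)^2)| ≤ CPs * |r-R|^4 := by
      rw [abs_mul, abs_pow, mul_comm]
      exact mul_le_mul_of_nonneg_right hPh (by positivity)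
    have b2 : |(U' r - U'' R*(r-R) - U3 R/2*(r-R)^2) * ((r-R) * (CB0 + CB2*(r-R)^2 + CB3*(r-R)^3))|
        ≤ (Kr*CGs) * |r-R|^4 := by
      rw [abs_mul, abs_mul]
      calc |U' r - U'' R*(r-R) - U3 R/2*(r-R)^2| * (|r-R| * |CB0 + CB2*(r-R)^2 + CB3*(r-R)^3|)
          ≤ (Kr * |r-R|^3) * (|r-R| * CGs) := by
            apply mul_le_mul he1 (mul_le_mul_of_nonneg_left hG1 (abs_nonneg _)) (by positivity) (by positivity)
        _ = (Kr*CGs) * |r-R|^4 := by ring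
    have b3 : |(1-r^2) * (U' r - U'' R*(r-R) - U3 R/2*(r-R)^2)^2| ≤ Kr^2 * |r-R|^4 := by
      rw [abs_mul, abs_pow]
      have hq : |U' r - U'' R*(r-R) - U3 R/2*(r-R)^2|^2 ≤ (Kr * |r-R|^3)^2 :=
        pow_le_pow_left₀ (abs_nonneg _) he1 2
      have h64 : |r-R|^6 ≤ |r-R|^4 := pow_le_pow_of_le_one (abs_nonneg _) hh1 (by norm_num)
      calc |1-r^2| * |U' r - U'' R*(r-R) - U3 R/2*(r-R)^2|^2
          ≤ 1 * (Kr * |r-R|^3)^2 := by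
            apply mul_le_mul _ hq (by positivity) (by norm_num)
            rw [abs_of_pos hw0]; exact hw1
        _ = Kr^2 * |r-R|^6 := by ring
        _ ≤ Kr^2 * |r-R|^4 := mul_le_mul_of_nonneg_left h64 (by positivity)
    have b4 : |2*f M*(U r - M - U'' R/2*(r-R)^2 - U3 R/6*(r-R)^3)| ≤ (2*f M*Kr) * |r-R|^4 := by
      rw [abs_mul]
      rw [abs_of_pos (by linarith : (0:ℝ) < 2*f M)]
      calc 2*f M * |U r - M - U'' R/2*(r-R)^2 - U3 R/6*(r-R)^3|
          ≤ 2*f M * (Kr * |r-R|^4) := mul_le_mul_of_nonneg_left he0 (by linarith)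
        _ = (2*f M*Kr) * |r-R|^4 := by ring
    have : CE * |r-R|^4 = CPs * |r-R|^4 + (Kr*CGs) * |r-R|^4 + Kr^2 * |r-R|^4 + (2*f M*Kr) * |r-R|^4 := by
      rw [hCE]; ring
    rw [this]
    exact add_le_add (add_le_add (add_le_add b1 b2) b3) b4
  -- the function v = M - U and its square root
  obtain ⟨c, hcdef⟩ : ∃ x : ℝ, x = f M / (1-R^2) := ⟨_, rfl⟩
  have hcpos : 0 < c := by rw [hcdef]; positivity
  have hc2c : U'' R = -c := by rw [hc2, hcdef]; ring
  obtain ⟨Cv, hCvdef⟩ : ∃ x : ℝ, x = |U3 R|/6 + Kr := ⟨_, rfl⟩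
  have hCv0 : 0 ≤ Cv := by rw [hCvdef]; positivity
  have hvdiff : ∀ r ∈ Metric.ball R δ₁, |M - U r - c/2*(r-R)^2| ≤ Cv*|r-R|^3 := by
    intro r hr
    have he0 := hB0 r hr
    have hh1 : |r - R| ≤ 1 := by
      have := Metric.mem_ball.1 hr
      rw [Real.dist_eq] at this
      linarith [le_of_lt this, hδ₁le1]
    have heq : M - U r - c/2*(r-R)^2
        = -((U r - M - U'' R/2*(r-R)^2 - U3 R/6*(r-R)^3) + U3 R/6*(r-R)^3) := by
      rw [hc2c]; ring
    rw [heq, abs_neg]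
    have hm : |U3 R/6*(r-R)^3| = |U3 R|/6*|r-R|^3 := by
      rw [abs_mul, abs_div, abs_pow]
      norm_num
    have h43 : |r-R|^4 ≤ |r-R|^3 := pow_le_pow_of_le_one (abs_nonneg _) hh1 (by norm_num)
    calc |(U r - M - U'' R/2*(r-R)^2 - U3 R/6*(r-R)^3) + U3 R/6*(r-R)^3|
        ≤ |U r - M - U'' R/2*(r-R)^2 - U3 R/6*(r-R)^3| + |U3 R/6*(r-R)^3| := abs_add_le _ _
      _ ≤ Kr*|r-R|^4 + |U3 R|/6*|r-R|^3 := by rw [hm]; exact add_le_add he0 le_rfl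
      _ ≤ Cv*|r-R|^3 := by
          rw [hCvdef]
          nlinarith [mul_le_mul_of_nonneg_left h43 hKr]
  obtain ⟨δ₂, hδ₂def⟩ : ∃ x : ℝ, x = min δ₁ (c/(4*(Cv+1))) := ⟨_, rfl⟩
  have hδ₂pos : 0 < δ₂ := by rw [hδ₂def]; exact lt_min hδ₁ (div_pos hcpos (by linarith))
  have hball21 : Metric.ball R δ₂ ⊆ Metric.ball R δ₁ :=
    Metric.ball_subset_ball (by rw [hδ₂def]; exact min_le_left _ _)
  have hvbounds : ∀ r ∈ Metric.ball R δ₂, c/4*(r-R)^2 ≤ M - U r ∧ M - U r ≤ c*(r-R)^2 := by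
    intro r hr
    have hd := hvdiff r (hball21 hr)
    have hhs : |r - R| * (4*(Cv+1)) ≤ c := by
      have h0 := Metric.mem_ball.1 hr
      rw [Real.dist_eq, hδ₂def] at h0
      have h1 : |r - R| ≤ c/(4*(Cv+1)) := le_trans h0.le (min_le_right _ _)
      rw [← le_div_iff₀ (by linarith : (0:ℝ) < 4*(Cv+1))]
      exact h1
    have h3 : Cv*|r-R|^3 ≤ c/4*(r-R)^2 := by
      have hcube : |r-R|^3 = |r-R| *(r-R)^2 := by
        rw [show (3:ℕ) = 1 + 2 by norm_num, pow_add, pow_one, sq_abs]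
      rw [hcube]
      have key2 : |r-R| *(4*(Cv+1))*(r-R)^2 ≤ c*(r-R)^2 :=
        mul_le_mul_of_nonneg_right hhs (sq_nonneg _)
      have expand : |r-R| *(4*(Cv+1))*(r-R)^2
          = 4*(Cv*(|r-R| *(r-R)^2)) + 4*(|r-R| *(r-R)^2) := by ring
      rw [expand] at key2
      have m0 : 0 ≤ |r-R| *(r-R)^2 := mul_nonneg (abs_nonneg _) (sq_nonneg _)
      linarith
    obtain ⟨hl, hu⟩ := abs_le.1 hd
    have m1 : 0 ≤ c*(r-R)^2 := mul_nonneg hcpos.le (sq_nonneg _)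
    constructor
    · nlinarith [m1]
    · nlinarith [m1]
  have hvnn : ∀ r ∈ Metric.ball R δ₂, 0 ≤ M - U r := fun r hr =>
    le_trans (mul_nonneg (by linarith) (sq_nonneg _)) (hvbounds r hr).1
  have hsqv : ∀ r ∈ Metric.ball R δ₂, Real.sqrt (M - U r) ≤ Real.sqrt c * |r-R| := by
    intro r hr
    calc Real.sqrt (M - U r) ≤ Real.sqrt (c*(r-R)^2) := Real.sqrt_le_sqrt (hvbounds r hr).2
      _ = Real.sqrt c * |r-R| := by rw [Real.sqrt_mul hcpos.le, Real.sqrt_sq_eq_abs]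
  obtain ⟨CD, hCDdef⟩ : ∃ x : ℝ, x = 2*Real.sqrt c*Cv := ⟨_, rfl⟩
  have hCD0 : 0 ≤ CD := by
    rw [hCDdef]
    have := Real.sqrt_nonneg c
    nlinarith [hCv0]
  have hD : ∀ r ∈ Metric.ball R δ₂,
      |(M - U r)*Real.sqrt (M - U r) - (c/2*Real.sqrt (c/2))*((r-R)^2*|r-R|)| ≤ CD*|r-R|^4 := by
    intro r hr
    have hv0 := hvnn r hr
    have hy0 : 0 ≤ c/2*(r-R)^2 := mul_nonneg (by linarith) (sq_nonneg _)
    have key := cube_sqrt_diff hv0 hy0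
    have hyeq : Real.sqrt (c/2*(r-R)^2) = Real.sqrt (c/2) * |r-R| := by
      rw [Real.sqrt_mul (by linarith : (0:ℝ) ≤ c/2), Real.sqrt_sq_eq_abs]
    have hrw : c/2*(r-R)^2 * Real.sqrt (c/2*(r-R)^2) = (c/2*Real.sqrt (c/2))*((r-R)^2*|r-R|) := by
      rw [hyeq]; ring
    rw [hrw] at key
    have hb1 : Real.sqrt (M - U r) + Real.sqrt (c/2*(r-R)^2) ≤ 2*Real.sqrt c*|r-R| := by
      rw [hyeq]
      have h1 := hsqv r hr
      have h2 : Real.sqrt (c/2) ≤ Real.sqrt c := Real.sqrt_le_sqrt (by linarith)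
      linarith [mul_le_mul_of_nonneg_right h2 (abs_nonneg (r-R))]
    have hd := hvdiff r (hball21 hr)
    calc |(M - U r)*Real.sqrt (M - U r) - (c/2*Real.sqrt (c/2))*((r-R)^2*|r-R|)|
        ≤ (Real.sqrt (M - U r) + Real.sqrt (c/2*(r-R)^2)) * |M - U r - c/2*(r-R)^2| := key
      _ ≤ (2*Real.sqrt c*|r-R|) * (Cv*|r-R|^3) := by
          apply mul_le_mul hb1 hd (abs_nonneg _)
          positivity
      _ = CD*|r-R|^4 := by rw [hCDdef]; ring
  -- the constant identity
  have hs1 : (0:ℝ) < Real.sqrt (1-R^2) := Real.sqrt_pos.2 h1R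
  have hconst : (4 * R * Real.sqrt (2 * f M) / (3 * Real.sqrt (1 - R ^ 2))) * (c/2*Real.sqrt (c/2)) = βv := by
    have h1 : Real.sqrt (2*f M) * Real.sqrt (c/2) = f M / Real.sqrt (1-R^2) := by
      rw [← Real.sqrt_mul (by linarith : (0:ℝ) ≤ 2*f M)]
      rw [show 2*f M*(c/2) = (f M)^2/(1-R^2) by rw [hcdef]; field_simp]
      rw [Real.sqrt_div (sq_nonneg (f M)), Real.sqrt_sq hfM.le]
    have hss : Real.sqrt (1-R^2) * Real.sqrt (1-R^2) = 1-R^2 := Real.mul_self_sqrt h1R.le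
    have step : (4 * R * Real.sqrt (2 * f M) / (3 * Real.sqrt (1 - R ^ 2))) * (c/2*Real.sqrt (c/2))
        = 4*R*(Real.sqrt (2*f M) * Real.sqrt (c/2))*(c/2)/(3*Real.sqrt (1-R^2)) := by ring
    have key : ∀ sq : ℝ, sq*sq = 1-R^2 → 0 < sq →
        4*R*(f M / sq)*(f M/(1-R^2)/2)/(3*sq) = 2/3*R*(f M)^2/(1-R^2)^2 := by
      intro sq hs hspos
      rw [← hs]
      field_simp
      ring
    rw [step, h1, hβv, hcdef]
    exact key _ hss hs1
  -- final assembly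
  obtain ⟨Cst, hCstdef⟩ : ∃ x : ℝ, x = 4 * R * Real.sqrt (2 * f M) / (3 * Real.sqrt (1 - R ^ 2)) := ⟨_, rfl⟩
  obtain ⟨Cfin, hCfindef⟩ : ∃ x : ℝ, x = (CE + |Cst| *CD)*(16/c^2) := ⟨_, rfl⟩
  have hCE' : 0 ≤ CE + |Cst| *CD := by
    have := mul_nonneg (abs_nonneg Cst) hCD0
    linarith
  have hmem2 : Metric.ball R δ₂ ∈ nhds R := Metric.ball_mem_nhds R hδ₂pos
  have h4v : ∀ r ∈ Metric.ball R δ₂, |r-R|^4 ≤ 16/c^2*(M - U r)^2 := by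
    intro r hr
    have hl := (hvbounds r hr).1
    have hp4 : |r-R|^4 = (r-R)^4 := by
      rw [← abs_pow, abs_of_nonneg (by positivity)]
    rw [hp4]
    have hsq : (c/4*(r-R)^2)^2 ≤ (M - U r)^2 :=
      pow_le_pow_left₀ (mul_nonneg (by linarith) (sq_nonneg _)) hl 2
    rw [div_mul_eq_mul_div, le_div_iff₀ (by positivity : (0:ℝ) < c^2)]
    linarith [hsq]
  constructor
  · rw [isBigO_iff]
    refine ⟨Cfin, ?_⟩
    filter_upwards [nhdsWithin_le_nhds hmem2, self_mem_nhdsWithin] with r hrb hrI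
    have hh : 0 < r - R := by have := hrI.1; linarith
    have hv0 := hvnn r hrb
    rw [Real.norm_eq_abs, Real.norm_eq_abs, rpow_three_halves hv0,
      abs_of_nonneg (sq_nonneg (M - U r))]
    have hX := hXb r (hball21 hrb)
    have hDr := hD r hrb
    have hTeq : (1-r^2)*(U' r)^2 - 2*f M*(M - U r) - Cst*((M - U r)*Real.sqrt (M - U r))
        = ((1-r^2)*(U' r)^2 - 2*f M*(M - U r) - βv*(r-R)^3)
          - Cst*((M - U r)*Real.sqrt (M - U r) - (c/2*Real.sqrt (c/2))*((r-R)^2*|r-R|)) := by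
      rw [abs_of_pos hh, ← hconst, hCstdef]; ring
    have goal1 : |(1-r^2)*(U' r)^2 - 2*f M*(M - U r) - Cst*((M - U r)*Real.sqrt (M - U r))|
        ≤ Cfin * (M - U r)^2 := by
      rw [hTeq]
      have tri : ∀ x y : ℝ, |x - y| ≤ |x| + |y| := fun x y => by
        have h0 := abs_add_le x (-y)
        rw [abs_neg, ← sub_eq_add_neg] at h0
        exact h0
      calc |((1-r^2)*(U' r)^2 - 2*f M*(M - U r) - βv*(r-R)^3)
            - Cst*((M - U r)*Real.sqrt (M - U r) - (c/2*Real.sqrt (c/2))*((r-R)^2*|r-R|))|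
          ≤ |(1-r^2)*(U' r)^2 - 2*f M*(M - U r) - βv*(r-R)^3|
            + |Cst*((M - U r)*Real.sqrt (M - U r) - (c/2*Real.sqrt (c/2))*((r-R)^2*|r-R|))| :=
            tri _ _
        _ ≤ CE*|r-R|^4 + |Cst| *(CD*|r-R|^4) := by
            refine add_le_add hX ?_
            rw [abs_mul]
            exact mul_le_mul_of_nonneg_left hDr (abs_nonneg _)
        _ = (CE + |Cst| *CD)*|r-R|^4 := by ring
        _ ≤ (CE + |Cst| *CD)*(16/c^2*(M - U r)^2) :=
            mul_le_mul_of_nonneg_left (h4v r hrb) hCE'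
        _ = Cfin * (M - U r)^2 := by rw [hCfindef]; ring
    rw [← hCstdef]
    convert goal1 using 3 <;> ring
  · rw [isBigO_iff]
    refine ⟨Cfin, ?_⟩
    filter_upwards [nhdsWithin_le_nhds hmem2, self_mem_nhdsWithin] with r hrb hrI
    have hh : r - R < 0 := by have := hrI.2; linarith
    have hv0 := hvnn r hrb
    rw [Real.norm_eq_abs, Real.norm_eq_abs, rpow_three_halves hv0,
      abs_of_nonneg (sq_nonneg (M - U r))]
    have hX := hXb r (hball21 hrb)
    have hDr := hD r hrb
    have hTeq : (1-r^2)*(U' r)^2 - 2*f M*(M - U r) + Cst*((M - U r)*Real.sqrt (M - U r))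
        = ((1-r^2)*(U' r)^2 - 2*f M*(M - U r) - βv*(r-R)^3)
          + Cst*((M - U r)*Real.sqrt (M - U r) - (c/2*Real.sqrt (c/2))*((r-R)^2*|r-R|)) := by
      rw [abs_of_neg hh, ← hconst, hCstdef]; ring
    have goal1 : |(1-r^2)*(U' r)^2 - 2*f M*(M - U r) + Cst*((M - U r)*Real.sqrt (M - U r))|
        ≤ Cfin * (M - U r)^2 := by
      rw [hTeq]
      calc |((1-r^2)*(U' r)^2 - 2*f M*(M - U r) - βv*(r-R)^3)
            + Cst*((M - U r)*Real.sqrt (M - U r) - (c/2*Real.sqrt (c/2))*((r-R)^2*|r-R|))|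
          ≤ |(1-r^2)*(U' r)^2 - 2*f M*(M - U r) - βv*(r-R)^3|
            + |Cst*((M - U r)*Real.sqrt (M - U r) - (c/2*Real.sqrt (c/2))*((r-R)^2*|r-R|))| :=
            abs_add_le _ _
        _ ≤ CE*|r-R|^4 + |Cst| *(CD*|r-R|^4) := by
            refine add_le_add hX ?_
            rw [abs_mul]
            exact mul_le_mul_of_nonneg_left hDr (abs_nonneg _)
        _ = (CE + |Cst| *CD)*|r-R|^4 := by ring
        _ ≤ (CE + |Cst| *CD)*(16/c^2*(M - U r)^2) :=
            mul_le_mul_of_nonneg_left (h4v r hrb) hCE'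
        _ = Cfin * (M - U r)^2 := by rw [hCfindef]; ring
    rw [← hCstdef]
    convert goal1 using 3 <;> ring
end

section
/- Let f : ℝ → ℝ be C¹ and M > 0. Let J be an open interval, I ⊆ (-1,1) an open interval with J ⊆ I, and let 𝒰 : J × I → ℝ be C³ such that for every R ∈ J the function r ↦ 𝒰(R,r) solves the model ODE (1-r²)·∂ᵣ²𝒰(R,r) - 2r·∂ᵣ𝒰(R,r) + f(𝒰(R,r)) = 0 on I, with 𝒰(R,R) = M and ∂ᵣ𝒰(R,R) = 0. Fix R₀ ∈ J and define Z(r) = ∂_R𝒰(R,r) evaluated at R = R₀. Then Z is a solution of the linearized equation (1-r²)·Z''(r) - 2r·Z'(r) + f'(𝒰(R₀,r))·Z(r) = 0 on I, with Z(R₀) = 0 and Z'(R₀) = f(M)/(1-R₀²). -/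
open Set Topology

noncomputable def pdv (v : ℝ × ℝ) (g : ℝ × ℝ → ℝ) : ℝ × ℝ → ℝ := fun p => fderiv ℝ g p v

lemma pdv_apply (v : ℝ × ℝ) (g : ℝ × ℝ → ℝ) (p : ℝ × ℝ) : pdv v g p = fderiv ℝ g p v := rfl

lemma pdv_contDiffOn {n : WithTop ℕ∞} (v : ℝ × ℝ) {g : ℝ × ℝ → ℝ} {Ω : Set (ℝ × ℝ)}
    (hΩ : IsOpen Ω) (hg : ContDiffOn ℝ (n + 1) g Ω) : ContDiffOn ℝ n (pdv v g) Ω :=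
  (ContinuousLinearMap.apply ℝ ℝ v).contDiff.comp_contDiffOn (hg.fderiv_of_isOpen hΩ le_rfl)

lemma slicer {g : ℝ × ℝ → ℝ} {R r : ℝ} (hg : DifferentiableAt ℝ g (R, r)) :
    HasDerivAt (fun s => g (R, s)) (pdv (0, 1) g (R, r)) r := by
  have h : HasDerivAt (fun s : ℝ => ((R, s) : ℝ × ℝ)) ((0 : ℝ), (1 : ℝ)) r :=
    (hasDerivAt_const _ _).prodMk (hasDerivAt_id _)
  exact hg.hasFDerivAt.comp_hasDerivAt r h

lemma sliceR {g : ℝ × ℝ → ℝ} {R r : ℝ} (hg : DifferentiableAt ℝ g (R, r)) :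
    HasDerivAt (fun s => g (s, r)) (pdv (1, 0) g (R, r)) R := by
  have h : HasDerivAt (fun s : ℝ => ((s, r) : ℝ × ℝ)) ((1 : ℝ), (0 : ℝ)) R :=
    (hasDerivAt_id _).prodMk (hasDerivAt_const _ _)
  exact hg.hasFDerivAt.comp_hasDerivAt R h

lemma sliceD {g : ℝ × ℝ → ℝ} {R : ℝ} (hg : DifferentiableAt ℝ g (R, R)) :
    HasDerivAt (fun s => g (s, s)) (fderiv ℝ g (R, R) (1, 1)) R := by
  have h : HasDerivAt (fun s : ℝ => ((s, s) : ℝ × ℝ)) ((1 : ℝ), (1 : ℝ)) R :=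
    (hasDerivAt_id _).prodMk (hasDerivAt_id _)
  exact hg.hasFDerivAt.comp_hasDerivAt (f := fun s : ℝ => ((s, s) : ℝ × ℝ)) R h

lemma pdv_comm {g : ℝ × ℝ → ℝ} {p : ℝ × ℝ} (hg : ContDiffAt ℝ 2 g p)
    (hd : DifferentiableAt ℝ (fderiv ℝ g) p) (v w : ℝ × ℝ) :
    fderiv ℝ (pdv v g) p w = fderiv ℝ (pdv w g) p v := by
  have key : ∀ u w' : ℝ × ℝ, fderiv ℝ (pdv u g) p w' = fderiv ℝ (fderiv ℝ g) p w' u := by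
    intro u w'
    have : pdv u g = fun q => (fderiv ℝ g q) ((fun _ : ℝ × ℝ => u) q) := rfl
    rw [this, fderiv_clm_apply hd (differentiableAt_const u)]
    simp
  rw [key, key]
  exact (hg.isSymmSndFDerivAt (by simp)).eq w v

/-- Let `f : ℝ → ℝ` be C¹ and `M > 0`. Let `J = (j₁,j₂)` be an open
interval, `I = (a,b) ⊆ (-1,1)` an open interval with `J ⊆ I`, and let `𝒰 : J × I → ℝ` be C³
such that for every `R ∈ J` the function `r ↦ 𝒰(R,r)` solves the model ODE
`(1-r²)·∂ᵣ²𝒰(R,r) - 2r·∂ᵣ𝒰(R,r) + f(𝒰(R,r)) = 0` on `I`, with `𝒰(R,R) = M` and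
`∂ᵣ𝒰(R,R) = 0`. Fix `R₀ ∈ J` and define `Z(r) = ∂_R 𝒰(R,r)` evaluated at `R = R₀`. Then `Z`
is a solution of the linearized equation
`(1-r²)·Z''(r) - 2r·Z'(r) + f'(𝒰(R₀,r))·Z(r) = 0` on `I`, with `Z(R₀) = 0` and
`Z'(R₀) = f(M)/(1-R₀²)`. -/
theorem stmt_16 (f : ℝ → ℝ) (hf : ContDiff ℝ 1 f) (M : ℝ) (hM : 0 < M)
    (j₁ j₂ a b : ℝ)
    (hJI : Ioo j₁ j₂ ⊆ Ioo a b) (hI : Ioo a b ⊆ Ioo (-1 : ℝ) 1)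
    (𝒰 : ℝ → ℝ → ℝ)
    (h𝒰 : ContDiffOn ℝ 3 (fun p : ℝ × ℝ => 𝒰 p.1 p.2) (Ioo j₁ j₂ ×ˢ Ioo a b))
    (hODE : ∀ R ∈ Ioo j₁ j₂, ∀ r ∈ Ioo a b,
      (1 - r ^ 2) * deriv (deriv (𝒰 R)) r - 2 * r * deriv (𝒰 R) r + f (𝒰 R r) = 0)
    (hURR : ∀ R ∈ Ioo j₁ j₂, 𝒰 R R = M)
    (hU'RR : ∀ R ∈ Ioo j₁ j₂, deriv (𝒰 R) R = 0)
    (R₀ : ℝ) (hR₀ : R₀ ∈ Ioo j₁ j₂) :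
    ∃ Z' Z'' : ℝ → ℝ,
      (∀ r ∈ Ioo a b, HasDerivAt (fun s => deriv (fun R => 𝒰 R s) R₀) (Z' r) r) ∧
      (∀ r ∈ Ioo a b, HasDerivAt Z' (Z'' r) r) ∧
      (∀ r ∈ Ioo a b, (1 - r ^ 2) * Z'' r - 2 * r * Z' r
        + deriv f (𝒰 R₀ r) * deriv (fun R => 𝒰 R r) R₀ = 0) ∧
      deriv (fun R => 𝒰 R R₀) R₀ = 0 ∧
      Z' R₀ = f M / (1 - R₀ ^ 2) := by
  set U : ℝ × ℝ → ℝ := fun p => 𝒰 p.1 p.2 with hUdef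
  set Ω : Set (ℝ × ℝ) := Ioo j₁ j₂ ×ˢ Ioo a b with hΩdef
  have hΩ : IsOpen Ω := isOpen_Ioo.prod isOpen_Ioo
  have hnb : ∀ {p : ℝ × ℝ}, p ∈ Ω → Ω ∈ 𝓝 p := fun hp => hΩ.mem_nhds hp
  have hU3 : ContDiffOn ℝ 3 U Ω := h𝒰
  -- abbreviations for partial derivatives
  set φ : ℝ × ℝ → ℝ := pdv (1, 0) U with hφdef
  set ψ : ℝ × ℝ → ℝ := pdv (0, 1) U with hψdef
  set ψ₂ : ℝ × ℝ → ℝ := pdv (0, 1) ψ with hψ₂def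
  set φ₂ : ℝ × ℝ → ℝ := pdv (0, 1) φ with hφ₂def
  set ψ₁ : ℝ × ℝ → ℝ := pdv (1, 0) ψ with hψ₁def
  -- regularity
  have hφ2 : ContDiffOn ℝ 2 φ Ω := pdv_contDiffOn _ hΩ (hU3.of_le (by norm_num))
  have hψ2 : ContDiffOn ℝ 2 ψ Ω := pdv_contDiffOn _ hΩ (hU3.of_le (by norm_num))
  have hψ₂1 : ContDiffOn ℝ 1 ψ₂ Ω := pdv_contDiffOn _ hΩ hψ2
  have hφ₂1 : ContDiffOn ℝ 1 φ₂ Ω := pdv_contDiffOn _ hΩ hφ2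
  have hψ₁1 : ContDiffOn ℝ 1 ψ₁ Ω := pdv_contDiffOn _ hΩ hψ2
  have hUd : ∀ {p : ℝ × ℝ}, p ∈ Ω → DifferentiableAt ℝ U p := fun hp =>
    ((hU3.contDiffAt (hnb hp)).differentiableAt (by norm_num))
  have hdiff1 : ∀ {g : ℝ × ℝ → ℝ}, ContDiffOn ℝ 1 g Ω → ∀ {p : ℝ × ℝ}, p ∈ Ω →
      DifferentiableAt ℝ g p := by
    intro g hg p hp
    exact (hg.contDiffAt (hnb hp)).differentiableAt one_ne_zero
  have hφd : ∀ {p : ℝ × ℝ}, p ∈ Ω → DifferentiableAt ℝ φ p := fun hp =>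
    hdiff1 (hφ2.of_le one_le_two) hp
  have hψd : ∀ {p : ℝ × ℝ}, p ∈ Ω → DifferentiableAt ℝ ψ p := fun hp =>
    hdiff1 (hψ2.of_le one_le_two) hp
  -- pointwise identifications
  have hψE : ∀ {R r : ℝ}, (R, r) ∈ Ω → HasDerivAt (𝒰 R) (ψ (R, r)) r := by
    intro R r hp
    exact slicer (g := U) (hUd hp)
  have hφE : ∀ {R r : ℝ}, (R, r) ∈ Ω → HasDerivAt (fun R' => 𝒰 R' r) (φ (R, r)) R := by
    intro R r hp
    exact sliceR (g := U) (hUd hp)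
  have hψ₂E : ∀ {R r : ℝ}, (R, r) ∈ Ω → HasDerivAt (deriv (𝒰 R)) (ψ₂ (R, r)) r := by
    intro R r hp
    have h1 : HasDerivAt (fun s => ψ (R, s)) (ψ₂ (R, r)) r := slicer (hψd hp)
    apply h1.congr_of_eventuallyEq
    have hr : r ∈ Ioo a b := hp.2
    filter_upwards [isOpen_Ioo.mem_nhds hr] with s hs
    exact (hψE (Set.mk_mem_prod hp.1 hs)).deriv
  -- the ODE rewritten in terms of ψ, ψ₂
  have hODE' : ∀ R ∈ Ioo j₁ j₂, ∀ r ∈ Ioo a b,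
      (1 - r ^ 2) * ψ₂ (R, r) - 2 * r * ψ (R, r) + f (𝒰 R r) = 0 := by
    intro R hR r hr
    have hp : (R, r) ∈ Ω := ⟨hR, hr⟩
    rw [← (hψE hp).deriv, ← (hψ₂E hp).deriv]
    exact hODE R hR r hr
  -- symmetry of second derivatives of U
  have hcomm : ∀ p ∈ Ω, φ₂ p = ψ₁ p := by
    intro p hp
    have hc1 : ContDiffOn ℝ 1 (fderiv ℝ U) Ω :=
      hU3.fderiv_of_isOpen hΩ (by norm_num : (1 : WithTop ℕ∞) + 1 ≤ 3)
    have hFd : DifferentiableAt ℝ (fderiv ℝ U) p := (hc1.contDiffAt (hnb hp)).differentiableAt one_ne_zero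
    exact pdv_comm ((hU3.contDiffAt (hnb hp)).of_le (by norm_num)) hFd (1, 0) (0, 1)
  have hR₀I : R₀ ∈ Ioo a b := hJI hR₀
  have hq : ((R₀, R₀) : ℝ × ℝ) ∈ Ω := ⟨hR₀, hR₀I⟩
  have hR₀11 : R₀ ∈ Ioo (-1 : ℝ) 1 := hI hR₀I
  have h1R : (0 : ℝ) < 1 - R₀ ^ 2 := by nlinarith [hR₀11.1, hR₀11.2]
  -- ψ and ψ₂ at the diagonal point
  have hψ0 : ψ (R₀, R₀) = 0 := by rw [← (hψE hq).deriv]; exact hU'RR R₀ hR₀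
  have hψ₂q : (1 - R₀ ^ 2) * ψ₂ (R₀, R₀) + f M = 0 := by
    have := hODE' R₀ hR₀ R₀ hR₀I
    rw [hψ0, hURR R₀ hR₀] at this
    linarith
  refine ⟨fun r => φ₂ (R₀, r), fun r => fderiv ℝ φ₂ (R₀, r) (0, 1), ?_, ?_, ?_, ?_, ?_⟩
  · -- Z is differentiable with derivative Z'
    intro r hr
    have hp : ((R₀, r) : ℝ × ℝ) ∈ Ω := ⟨hR₀, hr⟩
    have h1 : HasDerivAt (fun s => φ (R₀, s)) (φ₂ (R₀, r)) r := slicer (hφd hp)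
    apply h1.congr_of_eventuallyEq
    filter_upwards [isOpen_Ioo.mem_nhds hr] with s hs
    exact (hφE (Set.mk_mem_prod hR₀ hs)).deriv
  · -- Z' is differentiable with derivative Z''
    intro r hr
    have hp : ((R₀, r) : ℝ × ℝ) ∈ Ω := ⟨hR₀, hr⟩
    exact slicer (hdiff1 hφ₂1 hp)
  · -- the linearized equation
    intro r hr
    have hp : ((R₀, r) : ℝ × ℝ) ∈ Ω := ⟨hR₀, hr⟩
    -- differentiate the ODE in R at R₀
    have t1 : HasDerivAt (fun R => ψ₂ (R, r)) (fderiv ℝ ψ₂ (R₀, r) (1, 0)) R₀ :=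
      sliceR (hdiff1 hψ₂1 hp)
    have t2 : HasDerivAt (fun R => ψ (R, r)) (ψ₁ (R₀, r)) R₀ := sliceR (hψd hp)
    have t3 : HasDerivAt (fun R => f (𝒰 R r)) (deriv f (𝒰 R₀ r) * φ (R₀, r)) R₀ := by
      have hfo : HasDerivAt f (deriv f (𝒰 R₀ r)) (𝒰 R₀ r) :=
        (hf.differentiable one_ne_zero (𝒰 R₀ r)).hasDerivAt
      exact hfo.comp R₀ (hφE hp)
    have htot : HasDerivAt (fun R => (1 - r ^ 2) * ψ₂ (R, r) - 2 * r * ψ (R, r) + f (𝒰 R r))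
        ((1 - r ^ 2) * fderiv ℝ ψ₂ (R₀, r) (1, 0) - 2 * r * ψ₁ (R₀, r)
          + deriv f (𝒰 R₀ r) * φ (R₀, r)) R₀ :=
      ((t1.const_mul _).sub (t2.const_mul _)).add t3
    have hzero : HasDerivAt (fun R => (1 - r ^ 2) * ψ₂ (R, r) - 2 * r * ψ (R, r) + f (𝒰 R r))
        0 R₀ := by
      apply (hasDerivAt_const R₀ (0 : ℝ)).congr_of_eventuallyEq
      filter_upwards [isOpen_Ioo.mem_nhds hR₀] with s hs
      exact hODE' s hs r hr
    have hkey : (1 - r ^ 2) * fderiv ℝ ψ₂ (R₀, r) (1, 0) - 2 * r * ψ₁ (R₀, r)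
        + deriv f (𝒰 R₀ r) * φ (R₀, r) = 0 := htot.unique hzero
    -- identify the exchanged derivatives
    have e1 : deriv (fun R => 𝒰 R r) R₀ = φ (R₀, r) := (hφE hp).deriv
    have e2 : φ₂ (R₀, r) = ψ₁ (R₀, r) := hcomm _ hp
    have e3 : fderiv ℝ φ₂ (R₀, r) (0, 1) = fderiv ℝ ψ₂ (R₀, r) (1, 0) := by
      have hfeq : fderiv ℝ φ₂ (R₀, r) = fderiv ℝ ψ₁ (R₀, r) := by
        apply Filter.EventuallyEq.fderiv_eq
        filter_upwards [hnb hp] with q hq'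
        exact hcomm q hq'
      rw [hfeq]
      have hc1' : ContDiffOn ℝ 1 (fderiv ℝ ψ) Ω :=
        hψ2.fderiv_of_isOpen hΩ (by norm_num : (1 : WithTop ℕ∞) + 1 ≤ 2)
      have hGd : DifferentiableAt ℝ (fderiv ℝ ψ) (R₀, r) := (hc1'.contDiffAt (hnb hp)).differentiableAt one_ne_zero
      exact pdv_comm (hψ2.contDiffAt (hnb hp)) hGd (1, 0) (0, 1)
    beta_reduce
    rw [e1, e2, e3]
    linarith
  · -- Z(R₀) = 0
    have hdiag : HasDerivAt (fun s => U (s, s)) (fderiv ℝ U (R₀, R₀) (1, 1)) R₀ :=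
      sliceD (hUd hq)
    have hconst : HasDerivAt (fun s => U (s, s)) 0 R₀ := by
      apply (hasDerivAt_const R₀ M).congr_of_eventuallyEq
      filter_upwards [isOpen_Ioo.mem_nhds hR₀] with s hs
      exact hURR s hs
    have hsum : fderiv ℝ U (R₀, R₀) (1, 1) = 0 := hdiag.unique hconst
    have hsplit : fderiv ℝ U (R₀, R₀) (1, 1) = φ (R₀, R₀) + ψ (R₀, R₀) := by
      have h11 : ((1 : ℝ), (1 : ℝ)) = ((1 : ℝ), (0 : ℝ)) + ((0 : ℝ), (1 : ℝ)) := by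
        simp [Prod.ext_iff]
      rw [h11, map_add]
      rfl
    have hφ0 : φ (R₀, R₀) = 0 := by
      rw [hψ0] at hsplit
      rw [hsum] at hsplit
      linarith
    rw [(hφE hq).deriv]
    exact hφ0
  · -- Z'(R₀) = f M / (1 - R₀²)
    have hdiag : HasDerivAt (fun s => ψ (s, s)) (fderiv ℝ ψ (R₀, R₀) (1, 1)) R₀ :=
      sliceD (hψd hq)
    have hconst : HasDerivAt (fun s => ψ (s, s)) 0 R₀ := by
      apply (hasDerivAt_const R₀ (0 : ℝ)).congr_of_eventuallyEq
      filter_upwards [isOpen_Ioo.mem_nhds hR₀] with s hs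
      rw [← (hψE ⟨hs, hJI hs⟩).deriv] at *
      exact hU'RR s hs
    have hsum : fderiv ℝ ψ (R₀, R₀) (1, 1) = 0 := hdiag.unique hconst
    have hsplit : fderiv ℝ ψ (R₀, R₀) (1, 1) = ψ₁ (R₀, R₀) + ψ₂ (R₀, R₀) := by
      have h11 : ((1 : ℝ), (1 : ℝ)) = ((1 : ℝ), (0 : ℝ)) + ((0 : ℝ), (1 : ℝ)) := by
        simp [Prod.ext_iff]
      rw [h11, map_add]
      rfl
    have e2 : φ₂ (R₀, R₀) = ψ₁ (R₀, R₀) := hcomm _ hq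
    beta_reduce
    rw [e2]
    rw [hsum] at hsplit
    field_simp
    nlinarith [hψ₂q, hsplit]
end

section
/- Let f : ℝ → ℝ be C¹ with f(x) > 0 for all x > 0 and f(0) ≥ 0, and let M > 0. Let (r₁, r₂, U) be an arch solution with parameters (0, M) (i.e. the critical height R equals 0). Then r₁ = -r₂ and the squared gradient norms at the two zeros coincide: (1 - r₁²)·U'(r₁)² = (1 - r₂²)·U'(r₂)². -/
open Set

set_option maxHeartbeats 1000000 in
/-- Let `f : ℝ → ℝ` be C¹ with `f(x) > 0` for all `x > 0` and `f(0) ≥ 0`,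
and let `M > 0`. Let `(r₁, r₂, U)` be an arch solution with parameters `(0, M)` (i.e. the
critical height `R` equals `0`). Then `r₁ = -r₂` and the squared gradient norms at the two
zeros coincide: `(1 - r₁²)·U'(r₁)² = (1 - r₂²)·U'(r₂)²`. -/
theorem stmt_18 (f : ℝ → ℝ) (hf : ContDiff ℝ 1 f)
    (hfpos : ∀ x : ℝ, 0 < x → 0 < f x) (hf0 : 0 ≤ f 0)
    (M : ℝ) (hM : 0 < M)
    (r₁ r₂ : ℝ) (U U' U'' : ℝ → ℝ)
    (harch : IsArchSolution f 0 M r₁ r₂ U U' U'') :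
    r₁ = -r₂ ∧ (1 - r₁ ^ 2) * (U' r₁) ^ 2 = (1 - r₂ ^ 2) * (U' r₂) ^ 2 := by
  obtain ⟨h1, h2, h3, h4, hU, hU', hU''c, hode, hU0, hU'0, hUr₁, hUr₂, hpos⟩ := harch
  have h12 : r₁ < r₂ := lt_trans h2 h3
  have hUc : ContinuousOn U (Icc r₁ r₂) := fun r hr => (hU r hr).continuousWithinAt
  have hU'c : ContinuousOn U' (Icc r₁ r₂) := fun r hr => (hU' r hr).continuousWithinAt
  obtain ⟨C, hC⟩ := isCompact_Icc.exists_bound_of_continuousOn hUc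
  have hC0 : 0 ≤ C := le_trans (norm_nonneg _) (hC r₁ ⟨le_rfl, le_of_lt h12⟩)
  obtain ⟨Kf, hKf⟩ := isCompact_Icc.exists_bound_of_continuousOn
      (((hf.continuous_deriv le_rfl).continuousOn) : ContinuousOn (deriv f) (Icc (-C) C))
  have hKf0 : 0 ≤ Kf := le_trans (norm_nonneg _) (hKf 0 ⟨neg_nonpos.mpr hC0, hC0⟩)
  have hflip : ∀ u ∈ Icc (-C) C, ∀ u' ∈ Icc (-C) C, |f u - f u'| ≤ Kf * |u - u'| := by
    intro u hu u' hu'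
    have := Convex.norm_image_sub_le_of_norm_deriv_le
      (fun x _ => (hf.differentiable one_ne_zero) x) hKf (convex_Icc _ _) hu' hu
    simpa [Real.norm_eq_abs] using this
  -- geometry constants
  set m : ℝ := max |r₁| |r₂| with hm_def
  have hm0 : 0 ≤ m := le_trans (abs_nonneg _) (le_max_left _ _)
  have hm1 : m < 1 := max_lt (abs_lt.mpr ⟨h1, by linarith⟩) (abs_lt.mpr ⟨by linarith, h4⟩)
  set δ : ℝ := 1 - m ^ 2 with hδ_def
  have hδ : 0 < δ := by nlinarith
  have habs : ∀ t ∈ Icc r₁ r₂, |t| ≤ m := by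
    intro t ht
    refine abs_le.mpr ⟨?_, ?_⟩
    · have h₁ := neg_abs_le r₁
      have h₂ := le_max_left |r₁| |r₂|
      linarith [ht.1]
    · have h₁ := le_abs_self r₂
      have h₂ := le_max_right |r₁| |r₂|
      linarith [ht.2]
  set proj : ℝ → ℝ := fun t => max r₁ (min r₂ t) with hproj_def
  have hprojmem : ∀ t, proj t ∈ Icc r₁ r₂ :=
    fun t => ⟨le_max_left _ _, max_le (le_of_lt h12) (min_le_left _ _)⟩
  have hproj : ∀ t ∈ Icc r₁ r₂, proj t = t := by
    intro t ht
    simp only [hproj_def]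
    rw [min_eq_right ht.2, max_eq_right ht.1]
  have hden : ∀ t, δ ≤ 1 - (proj t) ^ 2 := by
    intro t
    have h₁ := habs _ (hprojmem t)
    nlinarith [abs_nonneg (proj t), sq_abs (proj t)]
  -- the vector field
  set v : ℝ → ℝ × ℝ → ℝ × ℝ :=
    fun t p => (p.2, (2 * proj t * p.2 - f p.1) / (1 - (proj t) ^ 2)) with hv_def
  set S : Set (ℝ × ℝ) := Icc (-C) C ×ˢ (univ : Set ℝ) with hS_def
  set K : NNReal := ⟨max 1 ((2 + Kf) / δ), le_trans zero_le_one (le_max_left _ _)⟩ with hK_def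
  have hK1 : (1 : ℝ) ≤ (K : ℝ) := le_max_left _ _
  have hK2 : (2 + Kf) / δ ≤ (K : ℝ) := le_max_right _ _
  have hlip : ∀ t, LipschitzOnWith K (v t) S := by
    intro t
    rw [lipschitzOnWith_iff_dist_le_mul]
    intro p hp q hq
    have hd0 : 0 ≤ dist p q := dist_nonneg
    have h1' : |p.1 - q.1| ≤ dist p q := by
      rw [Prod.dist_eq, Real.dist_eq]; exact le_max_left _ _
    have h2' : |p.2 - q.2| ≤ dist p q := by
      rw [Prod.dist_eq, Real.dist_eq]; exact le_max_right _ _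
    have hc : |proj t| ≤ m := habs _ (hprojmem t)
    have hD : δ ≤ 1 - (proj t) ^ 2 := hden t
    have hDpos : 0 < 1 - (proj t) ^ 2 := lt_of_lt_of_le hδ hD
    have hfd : |f p.1 - f q.1| ≤ Kf * |p.1 - q.1| := hflip p.1 hp.1 q.1 hq.1
    rw [Prod.dist_eq]
    apply max_le
    · calc dist (v t p).1 (v t q).1 = |p.2 - q.2| := by rw [Real.dist_eq]
        _ ≤ dist p q := h2'
        _ ≤ (K : ℝ) * dist p q := le_mul_of_one_le_left hd0 hK1
    · have hnum : |(2 * proj t * p.2 - f p.1) - (2 * proj t * q.2 - f q.1)|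
          ≤ (2 + Kf) * dist p q := by
        have e1 : (2 * proj t * p.2 - f p.1) - (2 * proj t * q.2 - f q.1)
            = 2 * proj t * (p.2 - q.2) - (f p.1 - f q.1) := by ring
        rw [e1]
        calc |2 * proj t * (p.2 - q.2) - (f p.1 - f q.1)|
            ≤ |2 * proj t * (p.2 - q.2)| + |f p.1 - f q.1| := abs_sub _ _
          _ = |2 * proj t| * |p.2 - q.2| + |f p.1 - f q.1| := by rw [abs_mul]
          _ ≤ 2 * dist p q + Kf * dist p q := by
              have h2c : |2 * proj t| ≤ 2 := by
                rw [abs_mul]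
                have : |(2:ℝ)| = 2 := by norm_num
                nlinarith [abs_nonneg (proj t)]
              have := abs_nonneg (p.2 - q.2)
              nlinarith
          _ = (2 + Kf) * dist p q := by ring
      have hdd : dist (v t p).2 (v t q).2
          = |(2 * proj t * p.2 - f p.1) - (2 * proj t * q.2 - f q.1)| / (1 - (proj t) ^ 2) := by
        rw [Real.dist_eq]
        show |(2 * proj t * p.2 - f p.1) / (1 - (proj t) ^ 2)
          - (2 * proj t * q.2 - f q.1) / (1 - (proj t) ^ 2)| = _
        rw [div_sub_div_same, abs_div, abs_of_pos hDpos]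
      rw [hdd, div_le_iff₀ hDpos]
      have hK2' : (2 + Kf) ≤ (K : ℝ) * δ := by
        rw [← div_le_iff₀ hδ]
        exact hK2
      have hKd : 0 ≤ (K : ℝ) * dist p q :=
        mul_nonneg (le_trans zero_le_one hK1) hd0
      calc |(2 * proj t * p.2 - f p.1) - (2 * proj t * q.2 - f q.1)|
          ≤ (2 + Kf) * dist p q := hnum
        _ ≤ (K : ℝ) * δ * dist p q := mul_le_mul_of_nonneg_right hK2' hd0
        _ = (K : ℝ) * dist p q * δ := by ring
        _ ≤ (K : ℝ) * dist p q * (1 - (proj t) ^ 2) := mul_le_mul_of_nonneg_left hD hKd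
  -- the interval of comparison
  set a : ℝ := max r₁ (-r₂) with ha_def
  set b : ℝ := min r₂ (-r₁) with hb_def
  have ha0 : a < 0 := max_lt h2 (neg_lt_zero.mpr h3)
  have hb0 : 0 < b := lt_min h3 (neg_pos.mpr h2)
  have hab : a = -b := by
    rcases le_total r₂ (-r₁) with hc | hc
    · rw [hb_def, ha_def, min_eq_left hc, max_eq_right (by linarith : r₁ ≤ -r₂)]
    · rw [hb_def, ha_def, min_eq_right hc, max_eq_left (by linarith : -r₂ ≤ r₁), neg_neg]
  have hsub : Icc a b ⊆ Icc r₁ r₂ :=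
    Icc_subset_Icc (le_max_left _ _) (min_le_left _ _)
  have hIoo : Ioo a b ⊆ Ioo r₁ r₂ :=
    Ioo_subset_Ioo (le_max_left _ _) (min_le_left _ _)
  have hnegIcc : ∀ t ∈ Icc a b, -t ∈ Icc a b := by
    intro t ht
    constructor
    · rw [hab]; exact neg_le_neg ht.2
    · rw [show b = -a by rw [hab]; ring]; exact neg_le_neg ht.1
  have hnegIoo : ∀ t ∈ Ioo a b, -t ∈ Ioo a b := by
    intro t ht
    constructor
    · rw [hab]; exact neg_lt_neg ht.2
    · rw [show b = -a by rw [hab]; ring]; exact neg_lt_neg ht.1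
  -- the two solutions
  set g : ℝ → ℝ × ℝ := fun r => (U r, U' r) with hg_def
  set h : ℝ → ℝ × ℝ := fun r => (U (-r), -U' (-r)) with hh_def
  have hgc : ContinuousOn g (Icc a b) := ContinuousOn.prodMk (hUc.mono hsub) (hU'c.mono hsub)
  have hmt : MapsTo Neg.neg (Icc a b) (Icc r₁ r₂) := fun t ht => hsub (hnegIcc t ht)
  have hhc : ContinuousOn h (Icc a b) :=
    ContinuousOn.prodMk (hUc.comp continuousOn_neg hmt) (hU'c.comp continuousOn_neg hmt).neg
  have hg' : ∀ t ∈ Ioo a b, HasDerivAt g (v t (g t)) t := by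
    intro t ht
    have ht' : t ∈ Ioo r₁ r₂ := hIoo ht
    have htI : t ∈ Icc r₁ r₂ := Ioo_subset_Icc_self ht'
    have hnhds : Icc r₁ r₂ ∈ nhds t := Icc_mem_nhds ht'.1 ht'.2
    have dU : HasDerivAt U (U' t) t := (hU t htI).hasDerivAt hnhds
    have dU' : HasDerivAt U' (U'' t) t := (hU' t htI).hasDerivAt hnhds
    have hD : HasDerivAt g (U' t, U'' t) t := dU.prodMk dU'
    convert hD using 1
    have hpt : proj t = t := hproj t htI
    have hDpos : (0:ℝ) < 1 - t ^ 2 := by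
      have := hden t; rw [hpt] at this; linarith
    have hodet := hode t htI
    simp only [hv_def, hg_def, hpt]
    refine Prod.ext rfl ?_
    show (2 * t * U' t - f (U t)) / (1 - t ^ 2) = U'' t
    rw [div_eq_iff (ne_of_gt hDpos)]
    linear_combination -hodet
  have hh' : ∀ t ∈ Ioo a b, HasDerivAt h (v t (h t)) t := by
    intro t ht
    have htn : -t ∈ Ioo a b := hnegIoo t ht
    have ht' : -t ∈ Ioo r₁ r₂ := hIoo htn
    have htI : -t ∈ Icc r₁ r₂ := Ioo_subset_Icc_self ht'
    have hnhds : Icc r₁ r₂ ∈ nhds (-t) := Icc_mem_nhds ht'.1 ht'.2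
    have dU : HasDerivAt U (U' (-t)) (-t) := (hU _ htI).hasDerivAt hnhds
    have dU' : HasDerivAt U' (U'' (-t)) (-t) := (hU' _ htI).hasDerivAt hnhds
    have d1 : HasDerivAt (fun r => U (-r)) (U' (-t) * (-1)) t :=
      dU.comp t (hasDerivAt_neg t)
    have d2 : HasDerivAt (fun r => U' (-r)) (U'' (-t) * (-1)) t :=
      dU'.comp t (hasDerivAt_neg t)
    have hD : HasDerivAt h (U' (-t) * (-1), -(U'' (-t) * (-1))) t := d1.prodMk d2.neg
    convert hD using 1
    have htI2 : t ∈ Icc r₁ r₂ := hsub (Ioo_subset_Icc_self ht)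
    have hpt : proj t = t := hproj t htI2
    have hDpos : (0:ℝ) < 1 - t ^ 2 := by
      have := hden t; rw [hpt] at this; linarith
    have hodet := hode (-t) htI
    simp only [hv_def, hh_def, hpt]
    refine Prod.ext (by ring) ?_
    show (2 * t * (-U' (-t)) - f (U (-t))) / (1 - t ^ 2) = -(U'' (-t) * (-1))
    rw [div_eq_iff (ne_of_gt hDpos)]
    linear_combination -hodet
  have hgs : ∀ t ∈ Ioo a b, g t ∈ S := by
    intro t ht
    refine ⟨?_, trivial⟩
    have := hC t (hsub (Ioo_subset_Icc_self ht))
    rw [Real.norm_eq_abs] at this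
    exact abs_le.mp this
  have hhs : ∀ t ∈ Ioo a b, h t ∈ S := by
    intro t ht
    refine ⟨?_, trivial⟩
    have := hC (-t) (hsub (hnegIcc t (Ioo_subset_Icc_self ht)))
    rw [Real.norm_eq_abs] at this
    exact abs_le.mp this
  have heq0 : g 0 = h 0 := by
    simp [hg_def, hh_def, hU'0]
  have key : EqOn g h (Icc a b) :=
    ODE_solution_unique_of_mem_Icc (t₀ := 0) (fun t _ => hlip t) ⟨ha0, hb0⟩ hgc hg' hgs hhc hh' hhs heq0
  -- conclude
  have hr : r₁ = -r₂ := by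
    rcases lt_trichotomy r₂ (-r₁) with hlt | heq' | hgt
    · exfalso
      have hb' : b = r₂ := min_eq_left (le_of_lt hlt)
      have hmem : r₂ ∈ Icc a b := ⟨by rw [hab, hb']; linarith, by rw [hb']⟩
      have := key hmem
      have e1 : U r₂ = U (-r₂) := congrArg Prod.fst this
      have hmem2 : -r₂ ∈ Ioo r₁ r₂ := ⟨by linarith, by linarith⟩
      have := hpos _ hmem2
      rw [← e1, hUr₂] at this
      exact lt_irrefl 0 this
    · linarith
    · exfalso
      have ha' : a = r₁ := max_eq_left (by linarith)
      have hmem : r₁ ∈ Icc a b := ⟨by rw [ha'], by rw [show b = -a by rw [hab]; ring, ha']; linarith⟩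
      have := key hmem
      have e1 : U r₁ = U (-r₁) := congrArg Prod.fst this
      have hmem2 : -r₁ ∈ Ioo r₁ r₂ := ⟨by linarith, by linarith⟩
      have := hpos _ hmem2
      rw [← e1, hUr₁] at this
      exact lt_irrefl 0 this
  refine ⟨hr, ?_⟩
  have ha' : a = r₁ := max_eq_left (by linarith)
  have hmem : r₁ ∈ Icc a b := ⟨by rw [ha'], by rw [show b = -a by rw [hab]; ring, ha']; linarith⟩
  have e2 : U' r₁ = -U' (-r₁) := congrArg Prod.snd (key hmem)
  rw [show -r₁ = r₂ by linarith] at e2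
  have hsq : (U' r₁) ^ 2 = (U' r₂) ^ 2 := by rw [e2]; ring
  have hsq2 : r₁ ^ 2 = r₂ ^ 2 := by rw [hr]; ring
  rw [hsq, hsq2]
end
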